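/- arXiv:1304.3528 — 11 statements merged into one kernel-verified Lean document; each statement's English description precedes it below -/
import Mathlib

section
/- For a nonnegative solution of x_n = (Σ_{i=1}^k β_i x_{n-i}) / (A + Σ_{j=1}^k B_j x_{n-j}) with A ≥ Σ_{i=1}^k β_i > 0, setting g = gcd(I_β) and ρ = ⌊k/g⌋, the sequence y^a_m = max_{ℓ=1..ρ} x_{(m-ℓ)g + a} is monotone nonincreasing in m for each residue a; in particular each y^a_m converges. -/
open Filter Topology

/-- For a nonnegative solution of `xₙ = (∑ βᵢ x_{n-i})/(A + ∑ Bⱼ x_{n-j})` with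
`A ≥ ∑ βᵢ > 0`, the auxiliary sequence `y^a_m = max_{ℓ=1..ρ} x_{(m-ℓ)g+a}`
(with `g = gcd I_β`, `ρ = ⌊k/g⌋`) is nonincreasing in `m` and converges. -/
theorem aux_sequence_monotone (k : ℕ) (hk : 1 ≤ k) (A : ℝ) (β B : ℕ → ℝ)
    (hβ : ∀ i, 0 ≤ β i) (hB : ∀ j, 0 ≤ B j) (hA : 0 < A)
    (hsum : 0 < ∑ i ∈ Finset.Icc 1 k, β i)
    (hAβ : ∑ i ∈ Finset.Icc 1 k, β i ≤ A)
    (x : ℤ → ℝ) (hx0 : ∀ n : ℤ, n ≤ 0 → 0 ≤ x n)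
    (hrec : ∀ n : ℤ, 1 ≤ n → x n =
      (∑ i ∈ Finset.Icc 1 k, β i * x (n - (i : ℤ))) /
      (A + ∑ j ∈ Finset.Icc 1 k, B j * x (n - (j : ℤ))))
    (g ρ : ℕ)
    (hg : g = ((Finset.Icc 1 k).filter (fun i => 0 < β i)).gcd id)
    (hρ : ρ = k / g)
    (Y : ℤ → ℕ → ℝ)
    (hY : ∀ a : ℤ, ∀ m : ℕ,
      Y a m = sSup ((fun ℓ : ℕ => x (((m : ℤ) - (ℓ : ℤ)) * (g : ℤ) + a)) '' Set.Icc 1 ρ)) :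
    ∀ a : ℤ, 1 ≤ a → (∀ m : ℕ, Y a (m + 1) ≤ Y a m) ∧
      ∃ L : ℝ, Tendsto (fun m : ℕ => Y a m) atTop (𝓝 L) := by
  -- nonnegativity of x everywhere
  have hxnn : ∀ n : ℤ, 0 ≤ x n := by
    have key : ∀ N : ℕ, ∀ n : ℤ, n ≤ N → 0 ≤ x n := by
      intro N
      induction N with
      | zero =>
        intro n hn
        exact hx0 n (by exact_mod_cast hn)
      | succ N ih =>
        intro n hn
        rcases le_or_gt n (N : ℤ) with h | h
        · exact ih n h
        · have hn1 : 1 ≤ n := by push_cast at hn ⊢; omega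
          have hprev : ∀ j ∈ Finset.Icc 1 k, 0 ≤ x (n - (j : ℤ)) := by
            intro j hj
            have hj1 : (1 : ℕ) ≤ j := (Finset.mem_Icc.mp hj).1
            apply ih
            push_cast at hn ⊢
            omega
          rw [hrec n hn1]
          apply div_nonneg
          · exact Finset.sum_nonneg fun i hi => mul_nonneg (hβ i) (hprev i hi)
          · have : 0 ≤ ∑ j ∈ Finset.Icc 1 k, B j * x (n - (j : ℤ)) :=
              Finset.sum_nonneg fun j hj => mul_nonneg (hB j) (hprev j hj)
            linarith
    intro n
    rcases le_or_gt n 0 with h | h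
    · exact hx0 n h
    · exact key n.toNat n (by omega)
  -- facts about g and ρ
  obtain ⟨i0, hi0mem, hi0pos⟩ : ∃ i ∈ Finset.Icc 1 k, 0 < β i := by
    by_contra h
    push_neg at h
    have : ∑ i ∈ Finset.Icc 1 k, β i = 0 :=
      Finset.sum_eq_zero fun i hi => le_antisymm (h i hi) (hβ i)
    linarith
  have hi0 : i0 ∈ (Finset.Icc 1 k).filter (fun i => 0 < β i) :=
    Finset.mem_filter.mpr ⟨hi0mem, hi0pos⟩
  have hgdvd : ∀ i ∈ (Finset.Icc 1 k).filter (fun i => 0 < β i), g ∣ i := by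
    intro i hi
    rw [hg]
    exact Finset.gcd_dvd hi
  have hi01 : 1 ≤ i0 := (Finset.mem_Icc.mp hi0mem).1
  have hi0k : i0 ≤ k := (Finset.mem_Icc.mp hi0mem).2
  have hg1 : 1 ≤ g := by
    have hd := hgdvd i0 hi0
    rcases Nat.eq_zero_or_pos g with h0 | h1
    · rw [h0] at hd
      omega
    · exact h1
  have hgk : g ≤ k := le_trans (Nat.le_of_dvd (by omega) (hgdvd i0 hi0)) hi0k
  have hρ1 : 1 ≤ ρ := by
    rw [hρ]
    exact (Nat.one_le_div_iff hg1).mpr hgk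
  intro a ha
  -- basic facts about the sets S m
  have hbdd : ∀ m : ℕ,
      BddAbove ((fun ℓ : ℕ => x (((m : ℤ) - (ℓ : ℤ)) * (g : ℤ) + a)) '' Set.Icc 1 ρ) :=
    fun m => ((Set.finite_Icc 1 ρ).image _).bddAbove
  have hmem1 : ∀ m : ℕ, x (((m : ℤ) - 1) * (g : ℤ) + a) ∈
      ((fun ℓ : ℕ => x (((m : ℤ) - (ℓ : ℤ)) * (g : ℤ) + a)) '' Set.Icc 1 ρ) := by
    intro m
    exact ⟨1, ⟨le_refl 1, hρ1⟩, by norm_num⟩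
  have hne : ∀ m : ℕ,
      ((fun ℓ : ℕ => x (((m : ℤ) - (ℓ : ℤ)) * (g : ℤ) + a)) '' Set.Icc 1 ρ).Nonempty :=
    fun m => ⟨_, hmem1 m⟩
  have hYnn : ∀ m : ℕ, 0 ≤ Y a m := by
    intro m
    rw [hY]
    exact le_trans (hxnn _) (le_csSup (hbdd m) (hmem1 m))
  -- key estimate : x (m*g + a) ≤ Y a m
  have hkey : ∀ m : ℕ, x ((m : ℤ) * (g : ℤ) + a) ≤ Y a m := by
    intro m
    set M := Y a m with hM
    set n : ℤ := (m : ℤ) * (g : ℤ) + a with hn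
    have hn1 : 1 ≤ n := by
      have : (0 : ℤ) ≤ (m : ℤ) * (g : ℤ) := by positivity
      omega
    have hMnn : 0 ≤ M := hYnn m
    have hterm : ∀ i ∈ Finset.Icc 1 k, β i * x (n - (i : ℤ)) ≤ β i * M := by
      intro i hi
      by_cases hβi : 0 < β i
      · obtain ⟨ℓ, hiℓ⟩ := hgdvd i (Finset.mem_filter.mpr ⟨hi, hβi⟩)
        have hi1 : 1 ≤ i := (Finset.mem_Icc.mp hi).1
        have hik : i ≤ k := (Finset.mem_Icc.mp hi).2
        have hiℓ' : ℓ * g = i := by rw [hiℓ, Nat.mul_comm]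
        have hℓ1 : 1 ≤ ℓ := by
          rcases Nat.eq_zero_or_pos ℓ with h0 | h1
          · subst h0; simp at hiℓ'; omega
          · exact h1
        have hℓρ : ℓ ≤ ρ := by
          rw [hρ, Nat.le_div_iff_mul_le (by omega : 0 < g)]
          omega
        have harg : n - (i : ℤ) = ((m : ℤ) - (ℓ : ℤ)) * (g : ℤ) + a := by
          rw [hn, hiℓ]
          push_cast
          ring
        have hxle : x (n - (i : ℤ)) ≤ M := by
          rw [harg, hM, hY]
          exact le_csSup (hbdd m) ⟨ℓ, ⟨hℓ1, hℓρ⟩, rfl⟩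
        exact mul_le_mul_of_nonneg_left hxle (hβ i)
      · have hz : β i = 0 := le_antisymm (not_lt.mp hβi) (hβ i)
        rw [hz]
        simp
    have hnum_nn : 0 ≤ ∑ i ∈ Finset.Icc 1 k, β i * x (n - (i : ℤ)) :=
      Finset.sum_nonneg fun i hi => mul_nonneg (hβ i) (hxnn _)
    have hnum : ∑ i ∈ Finset.Icc 1 k, β i * x (n - (i : ℤ)) ≤ A * M := by
      calc ∑ i ∈ Finset.Icc 1 k, β i * x (n - (i : ℤ))
          ≤ ∑ i ∈ Finset.Icc 1 k, β i * M := Finset.sum_le_sum hterm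
        _ = (∑ i ∈ Finset.Icc 1 k, β i) * M := by rw [Finset.sum_mul]
        _ ≤ A * M := mul_le_mul_of_nonneg_right hAβ hMnn
    have hdenom : A ≤ A + ∑ j ∈ Finset.Icc 1 k, B j * x (n - (j : ℤ)) := by
      have : 0 ≤ ∑ j ∈ Finset.Icc 1 k, B j * x (n - (j : ℤ)) :=
        Finset.sum_nonneg fun j hj => mul_nonneg (hB j) (hxnn _)
      linarith
    rw [hrec n hn1]
    calc (∑ i ∈ Finset.Icc 1 k, β i * x (n - (i : ℤ))) /
          (A + ∑ j ∈ Finset.Icc 1 k, B j * x (n - (j : ℤ)))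
        ≤ (∑ i ∈ Finset.Icc 1 k, β i * x (n - (i : ℤ))) / A :=
          div_le_div_of_nonneg_left hnum_nn hA hdenom
      _ ≤ M := by
          rw [div_le_iff₀ hA]
          linarith [hnum]
  -- monotonicity
  have hmono : ∀ m : ℕ, Y a (m + 1) ≤ Y a m := by
    intro m
    rw [hY a (m + 1)]
    apply csSup_le (hne (m + 1))
    rintro z ⟨ℓ, ⟨hℓ1, hℓρ⟩, rfl⟩
    rcases eq_or_lt_of_le hℓ1 with h1 | h2
    · -- ℓ = 1
      have harg : (((m + 1 : ℕ) : ℤ) - (ℓ : ℤ)) * (g : ℤ) + a = (m : ℤ) * (g : ℤ) + a := by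
        rw [← h1]
        push_cast
        ring
      show x ((((m + 1 : ℕ) : ℤ) - (ℓ : ℤ)) * (g : ℤ) + a) ≤ Y a m
      rw [harg]
      exact hkey m
    · -- ℓ ≥ 2
      have hℓ2 : 2 ≤ ℓ := h2
      have harg : (((m + 1 : ℕ) : ℤ) - (ℓ : ℤ)) * (g : ℤ) + a
          = ((m : ℤ) - ((ℓ - 1 : ℕ) : ℤ)) * (g : ℤ) + a := by
        push_cast [Nat.cast_sub (by omega : 1 ≤ ℓ)]
        ring
      show x ((((m + 1 : ℕ) : ℤ) - (ℓ : ℤ)) * (g : ℤ) + a) ≤ Y a m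
      rw [harg, hY a m]
      exact le_csSup (hbdd m) ⟨ℓ - 1, ⟨by omega, by omega⟩, rfl⟩
  refine ⟨hmono, ?_⟩
  have hanti : Antitone (fun m : ℕ => Y a m) := antitone_nat_of_succ_le hmono
  refine ⟨⨅ m, Y a m, tendsto_atTop_ciInf hanti ?_⟩
  refine ⟨0, ?_⟩
  rintro z ⟨m, rfl⟩
  exact hYnn m
end

section
/- Every nonnegative solution of x_n = (Σ_{i=1}^k β_i x_{n-i}) / (A + Σ_{j=1}^k B_j x_{n-j}) with A ≥ Σ_{i=1}^k β_i > 0 converges to a periodic solution of (not necessarily prime) period g = gcd(I_β); i.e., for each residue a mod g the subsequence (x_{mg+a})_m converges. -/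
open Filter Topology

/-- Backward-propagation property at lag `t`. -/
def RepP (f : ℕ → ℝ) (S : ℝ) (M : ℝ → ℕ) (K m0 t : ℕ) : Prop :=
  ∃ C : ℝ, 1 ≤ C ∧ ∀ ε : ℝ, 0 < ε → ∀ n : ℕ,
    M ε + t + K + m0 ≤ n → S - ε ≤ f n → S - C * ε ≤ f (n - t)

lemma RepP_zero (f : ℕ → ℝ) (S : ℝ) (M : ℝ → ℕ) (K m0 : ℕ) : RepP f S M K m0 0 := by
  refine ⟨1, le_refl _, fun ε hε n _ h => ?_⟩
  simpa using h

lemma RepP_add {f : ℕ → ℝ} {S : ℝ} {M : ℝ → ℕ} {K m0 t1 t2 : ℕ}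
    (hM : ∀ ε ε' : ℝ, 0 < ε → ε ≤ ε' → M ε' ≤ M ε)
    (h1 : RepP f S M K m0 t1) (h2 : RepP f S M K m0 t2) :
    RepP f S M K m0 (t1 + t2) := by
  obtain ⟨C1, hC1, H1⟩ := h1
  obtain ⟨C2, hC2, H2⟩ := h2
  refine ⟨C2 * C1, by nlinarith, fun ε hε n hn hf => ?_⟩
  have step1 : S - C1 * ε ≤ f (n - t1) := H1 ε hε n (by omega) hf
  have hε1 : (0:ℝ) < C1 * ε := by nlinarith
  have hMle : M (C1 * ε) ≤ M ε := hM ε (C1 * ε) hε (by nlinarith)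
  have step2 : S - C2 * (C1 * ε) ≤ f (n - t1 - t2) :=
    H2 (C1 * ε) hε1 (n - t1) (by omega) step1
  rw [Nat.sub_sub] at step2
  calc S - C2 * C1 * ε = S - C2 * (C1 * ε) := by ring_nf
    _ ≤ f (n - (t1 + t2)) := step2

lemma RepP_nsmul {f : ℕ → ℝ} {S : ℝ} {M : ℝ → ℕ} {K m0 t : ℕ}
    (hM : ∀ ε ε' : ℝ, 0 < ε → ε ≤ ε' → M ε' ≤ M ε)
    (h : RepP f S M K m0 t) : ∀ c : ℕ, RepP f S M K m0 (c * t) := by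
  intro c
  induction c with
  | zero => simpa using RepP_zero f S M K m0
  | succ c ih =>
      have := RepP_add hM ih h
      simpa [Nat.succ_mul] using this

lemma RepP_sum {f : ℕ → ℝ} {S : ℝ} {M : ℝ → ℕ} {K m0 : ℕ}
    (hM : ∀ ε ε' : ℝ, 0 < ε → ε ≤ ε' → M ε' ≤ M ε)
    (s : Finset ℕ) (e mm : ℕ → ℕ) (hbase : ∀ i ∈ s, RepP f S M K m0 (e i)) :
    RepP f S M K m0 (∑ i ∈ s, mm i * e i) := by
  classical
  induction s using Finset.induction_on with
  | empty => simpa using RepP_zero f S M K m0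
  | insert a s' hni ih =>
      rw [Finset.sum_insert hni]
      exact RepP_add hM (RepP_nsmul hM (hbase a (Finset.mem_insert_self a s')) (mm a))
        (ih (fun i hi => hbase i (Finset.mem_insert_of_mem hi)))

/-- gcd of a finset is an integer combination. -/
lemma gcd_combo (s : Finset ℕ) : ∃ c : ℕ → ℤ, ((s.gcd id : ℕ) : ℤ) = ∑ i ∈ s, c i * i := by
  classical
  induction s using Finset.induction_on with
  | empty => exact ⟨0, by simp⟩
  | insert a s' hni ih =>
      obtain ⟨c, hc⟩ := ih
      refine ⟨fun i => if i = a then Nat.gcdA a (s'.gcd id) else Nat.gcdB a (s'.gcd id) * c i, ?_⟩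
      rw [Finset.gcd_insert, Finset.sum_insert hni]
      simp only [eq_self_iff_true, if_true, id]
      rw [Finset.sum_congr rfl (fun i hi => by
        rw [if_neg (by rintro rfl; exact hni hi)])]
      have hab := Nat.gcd_eq_gcd_ab a (s'.gcd id)
      have h2 : ∑ i ∈ s', Nat.gcdB a (s'.gcd id) * c i * (i:ℤ)
          = Nat.gcdB a (s'.gcd id) * ∑ i ∈ s', c i * (i:ℤ) := by
        rw [Finset.mul_sum]; exact Finset.sum_congr rfl fun i _ => by ring
      rw [h2, ← hc]
      rw [show (gcd a (s'.gcd id) : ℕ) = Nat.gcd a (s'.gcd id) from rfl, hab]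
      ring

/-- Every nonnegative solution of `xₙ = (∑ βᵢ x_{n-i})/(A + ∑ Bⱼ x_{n-j})` with
`A ≥ ∑ βᵢ > 0` converges to a periodic solution of period `g = gcd I_β`:
each subsequence `(x_{mg+a})_m` converges. -/
theorem converges_to_periodic_gcd (k : ℕ) (hk : 1 ≤ k) (A : ℝ) (β B : ℕ → ℝ)
    (hβ : ∀ i, 0 ≤ β i) (hB : ∀ j, 0 ≤ B j) (hA : 0 < A)
    (hsum : 0 < ∑ i ∈ Finset.Icc 1 k, β i)
    (hAβ : ∑ i ∈ Finset.Icc 1 k, β i ≤ A)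
    (x : ℤ → ℝ) (hx0 : ∀ n : ℤ, n ≤ 0 → 0 ≤ x n)
    (hrec : ∀ n : ℤ, 1 ≤ n → x n =
      (∑ i ∈ Finset.Icc 1 k, β i * x (n - (i : ℤ))) /
      (A + ∑ j ∈ Finset.Icc 1 k, B j * x (n - (j : ℤ))))
    (g : ℕ) (hg : g = ((Finset.Icc 1 k).filter (fun i => 0 < β i)).gcd id) :
    ∀ a : ℤ, ∃ L : ℝ,
      Tendsto (fun m : ℕ => x ((m : ℤ) * (g : ℤ) + a)) atTop (𝓝 L) := by
  classical
  intro a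
  set D : Finset ℕ := (Finset.Icc 1 k).filter (fun i => 0 < β i) with hDdef
  -- basic facts about D and g
  have hDne : D.Nonempty := by
    have : ∃ i ∈ Finset.Icc 1 k, 0 < β i := by
      by_contra h
      push_neg at h
      have : ∑ i ∈ Finset.Icc 1 k, β i = 0 :=
        Finset.sum_eq_zero fun i hi => le_antisymm (h i hi) (hβ i)
      linarith
    obtain ⟨i, hi, hpos⟩ := this
    exact ⟨i, Finset.mem_filter.mpr ⟨hi, hpos⟩⟩
  have hDmem : ∀ i ∈ D, 1 ≤ i ∧ i ≤ k ∧ 0 < β i := by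
    intro i hi
    rw [hDdef, Finset.mem_filter, Finset.mem_Icc] at hi
    exact ⟨hi.1.1, hi.1.2, hi.2⟩
  have hgdvd : ∀ i ∈ D, g ∣ i := by
    intro i hi
    rw [hg]
    exact Finset.gcd_dvd hi
  have hg1 : 1 ≤ g := by
    rcases Nat.eq_zero_or_pos g with h0 | h1
    · exfalso
      obtain ⟨i0, hi0⟩ := hDne
      have := (hDmem i0 hi0).1
      have hz : i0 = 0 := by
        have := (Finset.gcd_eq_zero_iff.mp (hg ▸ h0 : D.gcd id = 0)) i0 hi0
        simpa using this
      omega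
    · exact h1
  -- nonnegativity of the solution
  have hxnat : ∀ N : ℕ, ∀ n : ℤ, n ≤ N → 0 ≤ x n := by
    intro N
    induction N with
    | zero => intro n hn; exact hx0 n (by exact_mod_cast hn)
    | succ N ih =>
        intro n hn
        by_cases hn0 : n ≤ 0
        · exact hx0 n hn0
        · push_neg at hn0
          have hn1 : 1 ≤ n := hn0
          rw [hrec n hn1]
          apply div_nonneg
          · apply Finset.sum_nonneg
            intro i hi
            rw [Finset.mem_Icc] at hi
            have : n - (i : ℤ) ≤ (N : ℕ) := by
              push_cast at hn ⊢
              omega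
            exact mul_nonneg (hβ i) (ih _ this)
          · have h1 : (0:ℝ) ≤ ∑ j ∈ Finset.Icc 1 k, B j * x (n - (j:ℤ)) := by
              apply Finset.sum_nonneg
              intro j hj
              rw [Finset.mem_Icc] at hj
              have : n - (j : ℤ) ≤ (N : ℕ) := by
                push_cast at hn ⊢
                omega
              exact mul_nonneg (hB j) (ih _ this)
            linarith
  have hx : ∀ n : ℤ, 0 ≤ x n := fun n => hxnat n.toNat n (Int.self_le_toNat n)
  -- the key inequality
  have hkey : ∀ n : ℤ, 1 ≤ n → A * x n ≤ ∑ i ∈ D, β i * x (n - (i : ℤ)) := by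
    intro n hn
    have hT : (0:ℝ) ≤ ∑ j ∈ Finset.Icc 1 k, B j * x (n - (j:ℤ)) :=
      Finset.sum_nonneg fun j _ => mul_nonneg (hB j) (hx _)
    have hd : (0:ℝ) < A + ∑ j ∈ Finset.Icc 1 k, B j * x (n - (j:ℤ)) := by linarith
    have h1 : x n * (A + ∑ j ∈ Finset.Icc 1 k, B j * x (n - (j:ℤ)))
        = ∑ i ∈ Finset.Icc 1 k, β i * x (n - (i:ℤ)) := by
      rw [hrec n hn]
      field_simp
    have h2 : A * x n ≤ x n * (A + ∑ j ∈ Finset.Icc 1 k, B j * x (n - (j:ℤ))) := by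
      nlinarith [hx n]
    have h3 : ∑ i ∈ D, β i * x (n - (i:ℤ)) = ∑ i ∈ Finset.Icc 1 k, β i * x (n - (i:ℤ)) := by
      rw [hDdef]
      apply Finset.sum_filter_of_ne
      intro i _ hne
      rcases lt_or_eq_of_le (hβ i) with h | h
      · exact h
      · exfalso; apply hne; rw [← h, zero_mul]
    linarith
  -- setup for the subsequence
  set K := k with hKdef
  set m0 := (1 - a).toNat with hm0def
  have hm0 : ∀ m : ℕ, m0 ≤ m → (1:ℤ) ≤ (m:ℤ) * (g:ℤ) + a := by
    intro m hm
    have h1 : (1:ℤ) - a ≤ (m0 : ℤ) := Int.self_le_toNat (1 - a)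
    have h2 : ((m0 : ℕ) : ℤ) ≤ (m : ℤ) := by exact_mod_cast hm
    have hgg : (1:ℤ) ≤ (g:ℤ) := by exact_mod_cast hg1
    have hm' : (0:ℤ) ≤ (m:ℤ) := Int.ofNat_nonneg m
    nlinarith
  clear_value m0
  clear hm0def
  set f : ℕ → ℝ := fun m => x ((m : ℤ) * (g : ℤ) + a) with hfdef
  have hf0 : ∀ m, 0 ≤ f m := fun m => hx _
  have heK : ∀ i ∈ D, 1 ≤ i / g ∧ i / g ≤ K := by
    intro i hi
    obtain ⟨h1, h2, _⟩ := hDmem i hi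
    constructor
    · rw [Nat.one_le_div_iff (by omega)]
      exact Nat.le_of_dvd (by omega) (hgdvd i hi)
    · exact le_trans (Nat.div_le_self i g) h2
  have higZ : ∀ i ∈ D, ((i / g : ℕ) : ℤ) * (g : ℤ) = (i : ℤ) := by
    intro i hi
    exact_mod_cast congrArg (Nat.cast : ℕ → ℤ) (Nat.div_mul_cancel (hgdvd i hi))
  have hidx : ∀ (m i : ℕ), i ∈ D → i / g ≤ m →
      x ((m:ℤ) * (g:ℤ) + a - (i:ℤ)) = f (m - i / g) := by
    intro m i hi he
    show x _ = x _
    congr 1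
    rw [Nat.cast_sub he]
    linear_combination higZ i hi
  -- pointwise max bound
  have hmax : ∀ m : ℕ, m0 ≤ m → K ≤ m →
      f m ≤ D.sup' hDne fun i => f (m - i / g) := by
    intro m hm hK
    have h1 : A * f m ≤ ∑ i ∈ D, β i * x ((m:ℤ) * (g:ℤ) + a - (i:ℤ)) :=
      hkey _ (hm0 m hm)
    have h2 : ∑ i ∈ D, β i * x ((m:ℤ) * (g:ℤ) + a - (i:ℤ))
        ≤ ∑ i ∈ D, β i * (D.sup' hDne fun i => f (m - i / g)) := by
      apply Finset.sum_le_sum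
      intro i hi
      apply mul_le_mul_of_nonneg_left _ (hβ i)
      rw [hidx m i hi (le_trans (heK i hi).2 hK)]
      exact Finset.le_sup' (fun j => f (m - j / g)) hi
    have h3 : ∑ i ∈ D, β i * (D.sup' hDne fun i => f (m - i / g))
        = (∑ i ∈ D, β i) * (D.sup' hDne fun i => f (m - i / g)) := by rw [Finset.sum_mul]
    set SUP := D.sup' hDne fun i => f (m - i / g) with hSUPdef
    have h4 : 0 ≤ SUP := by
      obtain ⟨i0, hi0⟩ := hDne
      exact le_trans (hf0 _) (Finset.le_sup' (fun j => f (m - j / g)) hi0)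
    have hA' : ∑ i ∈ D, β i ≤ A := by
      refine le_trans ?_ hAβ
      apply Finset.sum_le_sum_of_subset_of_nonneg (Finset.filter_subset _ _)
      intro i _ _
      exact hβ i
    have h5 : A * f m ≤ A * SUP := by nlinarith
    exact le_of_mul_le_mul_left h5 hA
  -- the window maximum
  have hKne : (Finset.range K).Nonempty := ⟨0, Finset.mem_range.mpr (by omega)⟩
  set V : ℕ → ℝ := fun m => (Finset.range K).sup' hKne fun j => f (m0 + m + j) with hVdef
  have hfleV : ∀ m j, j < K → f (m0 + m + j) ≤ V m := by
    intro m j hj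
    exact Finset.le_sup' (fun j => f (m0 + m + j)) (Finset.mem_range.mpr hj)
  have hVanti : Antitone V := by
    apply antitone_nat_of_succ_le
    intro m
    apply Finset.sup'_le
    intro j hj
    rw [Finset.mem_range] at hj
    by_cases hjK : j + 1 < K
    · have he : m0 + (m + 1) + j = m0 + m + (j + 1) := by omega
      rw [he]
      exact hfleV m (j+1) hjK
    · have hjeq : j = K - 1 := by omega
      have he : m0 + (m + 1) + j = m0 + m + K := by omega
      rw [he]
      have h1 := hmax (m0 + m + K) (by omega) (by omega)
      refine le_trans h1 (Finset.sup'_le _ _ ?_)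
      intro i hi
      have h2 := heK i hi
      have he2 : m0 + m + K - i / g = m0 + m + (K - i / g) := by omega
      rw [he2]
      exact hfleV m (K - i / g) (by omega)
  have hVbdd : BddBelow (Set.range V) := by
    refine ⟨0, ?_⟩
    rintro y ⟨m, rfl⟩
    exact le_trans (hf0 (m0 + m + 0)) (hfleV m 0 (by omega))
  set S := ⨅ m, V m with hSdef
  have hVtend : Tendsto V atTop (𝓝 S) := tendsto_atTop_ciInf hVanti hVbdd
  have hSleV : ∀ m, S ≤ V m := fun m => ciInf_le hVbdd m
  have hS0 : 0 ≤ S :=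
    le_ciInf fun m => le_trans (hf0 (m0 + m + 0)) (hfleV m 0 (by omega))
  have hanchor : ∀ m, ∃ j, j < K ∧ S ≤ f (m0 + m + j) := by
    intro m
    obtain ⟨j, hj, hEq⟩ := Finset.exists_mem_eq_sup' hKne fun j => f (m0 + m + j)
    exact ⟨j, Finset.mem_range.mp hj, by rw [← hEq]; exact hSleV m⟩
  -- the threshold function
  set M : ℝ → ℕ := fun ε => sInf {N : ℕ | ∀ m : ℕ, N ≤ m → V m ≤ S + ε} with hMdef
  have hMne : ∀ ε : ℝ, 0 < ε → {N : ℕ | ∀ m : ℕ, N ≤ m → V m ≤ S + ε}.Nonempty := by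
    intro ε hε
    have h1 : ∀ᶠ m in atTop, V m < S + ε :=
      hVtend.eventually (eventually_lt_nhds (by linarith))
    obtain ⟨N, hN⟩ := Filter.eventually_atTop.mp h1
    exact ⟨N, fun m hm => (hN m hm).le⟩
  have hMspec : ∀ ε : ℝ, 0 < ε → ∀ m : ℕ, M ε ≤ m → V m ≤ S + ε := by
    intro ε hε
    exact Nat.sInf_mem (hMne ε hε)
  have hMmono : ∀ ε ε' : ℝ, 0 < ε → ε ≤ ε' → M ε' ≤ M ε := by
    intro ε ε' hε hle
    apply Nat.sInf_le
    intro m hm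
    exact le_trans (hMspec ε hε m hm) (by linarith)
  have hfub : ∀ ε : ℝ, 0 < ε → ∀ n : ℕ, M ε + m0 ≤ n → f n ≤ S + ε := by
    intro ε hε n hn
    have h1 : f n ≤ V (n - m0) := by
      have h2 := hfleV (n - m0) 0 (by omega)
      rwa [show m0 + (n - m0) + 0 = n by omega] at h2
    exact le_trans h1 (hMspec ε hε (n - m0) (by omega))
  -- constants
  set A' := ∑ i ∈ D, β i with hA'def
  have hA'A : A' ≤ A := by
    refine le_trans ?_ hAβ
    apply Finset.sum_le_sum_of_subset_of_nonneg (Finset.filter_subset _ _)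
    intro i _ _
    exact hβ i
  set βm := D.inf' hDne β with hβmdef
  have hβmpos : 0 < βm := by
    rw [hβmdef, Finset.lt_inf'_iff]
    intro i hi
    exact (hDmem i hi).2.2
  have hβmle : ∀ i ∈ D, βm ≤ β i := fun i hi => Finset.inf'_le β hi
  have hβiA' : ∀ i ∈ D, β i ≤ A' :=
    fun i hi => Finset.single_le_sum (fun j _ => hβ j) hi
  -- the base case of backward propagation
  have hbase : ∀ e0 : ℕ, ∀ i0 ∈ D, i0 / g = e0 → RepP f S M K m0 e0 := by
    intro e0 i0 hi0 he0
    have hβ0 : 0 < β i0 := (hDmem i0 hi0).2.2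
    have he0K : e0 ≤ K := he0 ▸ (heK i0 hi0).2
    refine ⟨2 * A / βm, ?_, ?_⟩
    · rw [le_div_iff₀ hβmpos]
      have := hβmle i0 hi0
      have := hβiA' i0 hi0
      nlinarith
    intro ε hε n hn hfn
    have hnm0 : m0 ≤ n := by omega
    have h1 : A * f n ≤ ∑ i ∈ D, β i * f (n - i / g) := by
      have h0 := hkey _ (hm0 n hnm0)
      refine le_trans h0 (le_of_eq (Finset.sum_congr rfl ?_))
      intro i hi
      have h2 := (heK i hi).2
      obtain ⟨e, he⟩ : ∃ e, i / g = e := ⟨_, rfl⟩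
      rw [he] at h2
      rw [hidx n i hi (by rw [he]; omega)]
    have hub : ∀ i ∈ D, f (n - i / g) ≤ S + ε := by
      intro i hi
      have h2 := (heK i hi).2
      obtain ⟨e, he⟩ : ∃ e, i / g = e := ⟨_, rfl⟩
      rw [he] at h2 ⊢
      exact hfub ε hε _ (by omega)
    have hsplit : β i0 * f (n - e0) + ∑ i ∈ D.erase i0, β i * f (n - i / g)
        = ∑ i ∈ D, β i * f (n - i / g) := by
      have h5 := Finset.add_sum_erase D (fun i => β i * f (n - i / g)) hi0
      beta_reduce at h5
      rw [he0] at h5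
      exact h5
    have hsplit2 : β i0 + ∑ i ∈ D.erase i0, β i = A' := Finset.add_sum_erase D β hi0
    have hSε : (0:ℝ) ≤ S + ε := by linarith
    have herase : ∑ i ∈ D.erase i0, β i * f (n - i / g) ≤ (A' - β i0) * (S + ε) := by
      have h5 : ∑ i ∈ D.erase i0, β i * f (n - i / g)
          ≤ ∑ i ∈ D.erase i0, β i * (S + ε) := by
        apply Finset.sum_le_sum
        intro i hi
        exact mul_le_mul_of_nonneg_left (hub i (Finset.mem_of_mem_erase hi)) (hβ i)
      have h6 : ∑ i ∈ D.erase i0, β i * (S + ε) = (A' - β i0) * (S + ε) := by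
        rw [← Finset.sum_mul, show (∑ i ∈ D.erase i0, β i) = A' - β i0 by linarith]
      linarith
    have h6 : A * (S - ε) ≤ A * f n := mul_le_mul_of_nonneg_left hfn hA.le
    have h7 : A * (S - ε) - (A' - β i0) * (S + ε) ≤ β i0 * f (n - e0) := by
      linarith
    have hC : βm * (2 * A / βm) = 2 * A := by field_simp
    have h8 : β i0 * (S - 2 * A / βm * ε) ≤ A * (S - ε) - (A' - β i0) * (S + ε) := by
      have h9 : βm * (2 * A / βm) ≤ β i0 * (2 * A / βm) := by
        apply mul_le_mul_of_nonneg_right (hβmle i0 hi0)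
        positivity
      nlinarith [hβiA' i0 hi0]
    exact le_of_mul_le_mul_left (by linarith) hβ0
  have hbase' : ∀ i ∈ D, RepP f S M K m0 (i / g) := fun i hi => hbase _ i hi rfl
  have hrepsum : ∀ mm : ℕ → ℕ, RepP f S M K m0 (∑ i ∈ D, mm i * (i / g)) :=
    fun mm => RepP_sum hMmono D (fun i => i / g) mm hbase'
  obtain ⟨c, hc⟩ := gcd_combo D
  rw [← hg] at hc
  have hgZ : ((g:ℕ):ℤ) ≠ 0 := by exact_mod_cast (by omega : g ≠ 0)
  have hc1 : ∑ i ∈ D, c i * ((i / g : ℕ) : ℤ) = 1 := by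
    have h2 : (∑ i ∈ D, c i * ((i / g : ℕ) : ℤ)) * (g:ℤ) = 1 * (g:ℤ) := by
      rw [Finset.sum_mul, one_mul]
      rw [Finset.sum_congr rfl (fun i hi => by rw [mul_assoc, higZ i hi])]
      exact hc.symm
    exact mul_right_cancel₀ hgZ h2
  set ν := ∑ i ∈ D, (-(c i)).toNat * (i / g) with hνdef
  set P := ∑ i ∈ D, (c i).toNat * (i / g) with hPdef
  have hrepν : RepP f S M K m0 ν := hrepsum _
  have hrepP : RepP f S M K m0 P := hrepsum _
  have hPν : P = ν + 1 := by
    have hPZ : (P:ℤ) - (ν:ℤ) = 1 := by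
      rw [hPdef, hνdef, Nat.cast_sum, Nat.cast_sum, ← Finset.sum_sub_distrib]
      rw [Finset.sum_congr rfl (fun i hi => ?_)]
      · exact hc1
      · rw [Nat.cast_mul, Nat.cast_mul, ← sub_mul, Int.toNat_sub_toNat_neg]
    omega
  have hreplarge : ∀ t : ℕ, ν * ν ≤ t → RepP f S M K m0 t := by
    intro t ht
    by_cases hν0 : ν = 0
    · have hP1 : P = 1 := by omega
      have h1 : RepP f S M K m0 1 := hP1 ▸ hrepP
      have h2 := RepP_nsmul hMmono h1 t
      simpa using h2
    · have hνpos : 0 < ν := Nat.pos_of_ne_zero hν0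
      have hdm : ν * (t / ν) + t % ν = t := Nat.div_add_mod t ν
      have hs : t % ν < ν := Nat.mod_lt t hνpos
      have hq : ν ≤ t / ν := (Nat.le_div_iff_mul_le hνpos).mpr ht
      have hsq : t % ν ≤ t / ν := le_trans hs.le hq
      have h1 := RepP_add hMmono (RepP_nsmul hMmono hrepν (t / ν - t % ν))
        (RepP_nsmul hMmono hrepP (t % ν))
      have heq : (t / ν - t % ν) * ν + t % ν * P = t := by
        obtain ⟨q, hq'⟩ : ∃ q, t / ν = q := ⟨_, rfl⟩
        obtain ⟨s', hs'⟩ : ∃ s', t % ν = s' := ⟨_, rfl⟩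
        rw [hq', hs'] at hdm hsq ⊢
        rw [hPν]
        zify [hsq]
        have hdm' : (ν:ℤ) * (q:ℤ) + (s':ℤ) = (t:ℤ) := by exact_mod_cast hdm
        linear_combination hdm'
      rw [heq] at h1
      exact h1
  choose Cf hCf1 hCfspec using fun j : ℕ => hreplarge (ν * ν + j) (Nat.le_add_right _ _)
  set Cs := (Finset.range K).sup' hKne Cf with hCsdef
  have hCs1 : (1:ℝ) ≤ Cs :=
    le_trans (hCf1 0) (Finset.le_sup' Cf (Finset.mem_range.mpr (by omega)))
  have hCsle : ∀ j, j < K → Cf j ≤ Cs := fun j hj => Finset.le_sup' Cf (Finset.mem_range.mpr hj)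
  refine ⟨S, Metric.tendsto_atTop.mpr fun ε' hε' => ?_⟩
  have hX : (0:ℝ) < 2 * (Cs + 1) := by linarith
  set ε := ε' / (2 * (Cs + 1)) with hεdef
  have hε : 0 < ε := div_pos hε' hX
  have hCsε : Cs * ε < ε' := by
    rw [hεdef, ← mul_div_assoc, div_lt_iff₀ hX]
    nlinarith
  have hεε' : ε < ε' := by
    rw [hεdef, div_lt_iff₀ hX]
    nlinarith
  refine ⟨M ε + K + m0 + 1, fun n hn => ?_⟩
  have hup : f n ≤ S + ε := hfub ε hε n (by omega)
  obtain ⟨j, hj, hanch⟩ := hanchor (n + ν * ν - m0)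
  rw [show m0 + (n + ν * ν - m0) + j = n + ν * ν + j by omega] at hanch
  have hlow := hCfspec j ε hε (n + ν * ν + j) (by omega) (by linarith)
  rw [show n + ν * ν + j - (ν * ν + j) = n by omega] at hlow
  have hCfj : Cf j * ε ≤ Cs * ε := mul_le_mul_of_nonneg_right (hCsle j hj) hε.le
  rw [Real.dist_eq, abs_lt]
  constructor
  · linarith
  · linarith
end

section
/- Consider x_n = (Σ_{i=1}^k β_i x_{n-i}) / (A + Σ_{j=1}^k B_j x_{n-j}) with A > 0 and suppose gcd(I_β) does not divide any j ∈ I_B. If the initial conditions satisfy x_{-m} = 0 for all m with -m ≢ 0 mod gcd(I_β), then x_n = 0 for all n ≢ 0 mod gcd(I_β), and the solution satisfies the linear recursion x_n = (Σ_{i=1}^k β_i x_{n-i}) / A for all n ≥ 1. -/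
/-- If `gcd I_β` divides no element of `I_B` and the initial conditions vanish at
indices not divisible by `gcd I_β`, then `xₙ = 0` for all `n ≢ 0 mod gcd I_β` and
the solution satisfies the linear recursion `xₙ = (∑ βᵢ x_{n-i})/A`. -/
theorem zero_structured_linearizes (k : ℕ) (hk : 1 ≤ k) (A : ℝ) (β B : ℕ → ℝ)
    (hβ : ∀ i, 0 ≤ β i) (hB : ∀ j, 0 ≤ B j) (hA : 0 < A)
    (hsum : 0 < ∑ i ∈ Finset.Icc 1 k, β i)
    (g : ℕ) (hg : g = ((Finset.Icc 1 k).filter (fun i => 0 < β i)).gcd id)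
    (hnd : ∀ j ∈ (Finset.Icc 1 k).filter (fun j => 0 < B j), ¬ g ∣ j)
    (x : ℤ → ℝ) (hx0 : ∀ n : ℤ, n ≤ 0 → 0 ≤ x n)
    (hxz : ∀ n : ℤ, n ≤ 0 → ¬ ((g : ℤ) ∣ n) → x n = 0)
    (hrec : ∀ n : ℤ, 1 ≤ n → x n =
      (∑ i ∈ Finset.Icc 1 k, β i * x (n - (i : ℤ))) /
      (A + ∑ j ∈ Finset.Icc 1 k, B j * x (n - (j : ℤ)))) :
    (∀ n : ℤ, 1 ≤ n → ¬ ((g : ℤ) ∣ n) → x n = 0) ∧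
      ∀ n : ℤ, 1 ≤ n →
        x n = (∑ i ∈ Finset.Icc 1 k, β i * x (n - (i : ℤ))) / A := by
  have hgd : ∀ i ∈ Finset.Icc 1 k, 0 < β i → (g : ℤ) ∣ (i : ℤ) := by
    intro i hi hpos
    have : g ∣ i := hg ▸ Finset.gcd_dvd (Finset.mem_filter.mpr ⟨hi, hpos⟩)
    exact_mod_cast this
  have key : ∀ m : ℕ, ∀ n : ℤ, n ≤ (m : ℤ) →
      0 ≤ x n ∧ (¬ (g : ℤ) ∣ n → x n = 0) := by
    intro m
    induction m with
    | zero => intro n hn; exact ⟨hx0 n (by exact_mod_cast hn), hxz n (by exact_mod_cast hn)⟩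
    | succ m ih =>
      intro n hn
      rcases le_or_gt n (m : ℤ) with h | h
      · exact ih n h
      have hpos1 : 1 ≤ n := by omega
      have hle : ∀ i : ℕ, 1 ≤ i → n - (i : ℤ) ≤ (m : ℤ) := by
        intro i hi
        have : (1 : ℤ) ≤ (i : ℤ) := by exact_mod_cast hi
        push_cast at hn; omega
      have hnum : ∀ i ∈ Finset.Icc 1 k, 0 ≤ β i * x (n - (i : ℤ)) := by
        intro i hi
        have hi1 : 1 ≤ i := (Finset.mem_Icc.mp hi).1
        exact mul_nonneg (hβ i) (ih _ (hle i hi1)).1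
      have hSnn : ∀ j ∈ Finset.Icc 1 k, 0 ≤ B j * x (n - (j : ℤ)) := by
        intro j hj
        have hj1 : 1 ≤ j := (Finset.mem_Icc.mp hj).1
        exact mul_nonneg (hB j) (ih _ (hle j hj1)).1
      have hden : 0 < A + ∑ j ∈ Finset.Icc 1 k, B j * x (n - (j : ℤ)) :=
        add_pos_of_pos_of_nonneg hA (Finset.sum_nonneg hSnn)
      have hxn := hrec n hpos1
      constructor
      · rw [hxn]; exact div_nonneg (Finset.sum_nonneg hnum) hden.le
      · intro hnd2
        rw [hxn]
        have : (∑ i ∈ Finset.Icc 1 k, β i * x (n - (i : ℤ))) = 0 := by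
          apply Finset.sum_eq_zero
          intro i hi
          rcases eq_or_lt_of_le (hβ i) with hb | hb
          · rw [← hb, zero_mul]
          · have hdiv := hgd i hi hb
            have hi1 : 1 ≤ i := (Finset.mem_Icc.mp hi).1
            have : x (n - (i : ℤ)) = 0 := by
              apply (ih _ (hle i hi1)).2
              intro hd
              exact hnd2 (by have := dvd_add hd hdiv; simpa using this)
            rw [this, mul_zero]
        rw [this, zero_div]
  have hzero : ∀ n : ℤ, ¬ (g : ℤ) ∣ n → x n = 0 := by
    intro n hn
    rcases le_or_gt n 0 with h | h
    · exact hxz n h hn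
    · exact (key n.toNat n (by omega)).2 hn
  have hnn : ∀ n : ℤ, 0 ≤ x n := by
    intro n
    rcases le_or_gt n 0 with h | h
    · exact hx0 n h
    · exact (key n.toNat n (by omega)).1
  refine ⟨fun n _ hn => hzero n hn, ?_⟩
  intro n hn
  by_cases hd : (g : ℤ) ∣ n
  · have hS : (∑ j ∈ Finset.Icc 1 k, B j * x (n - (j : ℤ))) = 0 := by
      apply Finset.sum_eq_zero
      intro j hj
      rcases eq_or_lt_of_le (hB j) with hb | hb
      · rw [← hb, zero_mul]
      · have hjnd : ¬ g ∣ j := hnd j (Finset.mem_filter.mpr ⟨hj, hb⟩)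
        have : x (n - (j : ℤ)) = 0 := by
          apply hzero
          intro hdd
          refine hjnd ?_
          have h2 := Int.dvd_sub hd hdd
          simp only [sub_sub_cancel] at h2
          exact_mod_cast h2
        rw [this, mul_zero]
    rw [hrec n hn, hS, add_zero]
  · have hnum : (∑ i ∈ Finset.Icc 1 k, β i * x (n - (i : ℤ))) = 0 := by
      apply Finset.sum_eq_zero
      intro i hi
      rcases eq_or_lt_of_le (hβ i) with hb | hb
      · rw [← hb, zero_mul]
      · have hdiv := hgd i hi hb
        have : x (n - (i : ℤ)) = 0 := by
          apply hzero
          intro hdd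
          exact hd (by have := dvd_add hdd hdiv; simpa using this)
        rw [this, mul_zero]
    rw [hzero n hd, hnum, zero_div]
end

section
/- Under the hypotheses of Lemma on zero-structured initial conditions (gcd(I_β) divides no element of I_B, A > 0), the initial conditions x_{-m} = 1 for -m ≡ 0 mod gcd(I_β) and x_{-m} = 0 otherwise, with A = Σ_{i=1}^k β_i, produce a periodic solution of prime period gcd(I_β) of x_n = (Σ β_i x_{n-i})/(A + Σ B_j x_{n-j}). -/
/-- With `A = ∑ βᵢ > 0` and `gcd I_β` dividing no element of `I_B`, the initial
conditions `x_{-m} = 1` for `gcd I_β ∣ m` and `x_{-m} = 0` otherwise yield a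
periodic solution of prime period `gcd I_β`. -/
theorem prime_period_gcd (k : ℕ) (hk : 1 ≤ k) (A : ℝ) (β B : ℕ → ℝ)
    (hβ : ∀ i, 0 ≤ β i) (hB : ∀ j, 0 ≤ B j) (hA : 0 < A)
    (hAβ : A = ∑ i ∈ Finset.Icc 1 k, β i)
    (g : ℕ) (hg : g = ((Finset.Icc 1 k).filter (fun i => 0 < β i)).gcd id)
    (hnd : ∀ j ∈ (Finset.Icc 1 k).filter (fun j => 0 < B j), ¬ g ∣ j)
    (x : ℤ → ℝ)
    (hx1 : ∀ n : ℤ, n ≤ 0 → (((g : ℤ) ∣ n → x n = 1) ∧ (¬ (g : ℤ) ∣ n → x n = 0)))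
    (hrec : ∀ n : ℤ, 1 ≤ n → x n =
      (∑ i ∈ Finset.Icc 1 k, β i * x (n - (i : ℤ))) /
      (A + ∑ j ∈ Finset.Icc 1 k, B j * x (n - (j : ℤ)))) :
    (∀ n : ℤ, x (n + (g : ℤ)) = x n) ∧
      ∀ p : ℕ, 0 < p → (∀ n : ℤ, x (n + (p : ℤ)) = x n) → g ≤ p := by
  have hex : ∃ i ∈ Finset.Icc 1 k, 0 < β i := by
    by_contra h
    push_neg at h
    have : A = 0 := by
      rw [hAβ]
      exact Finset.sum_eq_zero fun i hi => le_antisymm (h i hi) (hβ i)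
    linarith
  obtain ⟨i0, hi0, hβi0⟩ := hex
  have hgd : ∀ i ∈ (Finset.Icc 1 k).filter (fun i => 0 < β i), g ∣ i := by
    intro i hi
    rw [hg]
    exact Finset.gcd_dvd hi
  have hgpos : 0 < g := by
    have h1 := hgd i0 (Finset.mem_filter.mpr ⟨hi0, hβi0⟩)
    have hi1 : 1 ≤ i0 := (Finset.mem_Icc.mp hi0).1
    rcases Nat.eq_zero_or_pos g with h0 | h
    · rw [h0] at h1; omega
    · exact h
  have claim : ∀ n : ℤ, ((g : ℤ) ∣ n → x n = 1) ∧ (¬ (g : ℤ) ∣ n → x n = 0) := by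
    have key : ∀ N : ℕ, ∀ n : ℤ, n ≤ (N : ℤ) →
        ((g : ℤ) ∣ n → x n = 1) ∧ (¬ (g : ℤ) ∣ n → x n = 0) := by
      intro N
      induction N with
      | zero => intro n hn; exact hx1 n (by exact_mod_cast hn)
      | succ N ih =>
        intro n hn
        rcases le_or_gt n (N : ℤ) with h | h
        · exact ih n h
        · have hn1 : 1 ≤ n := by omega
          have hrec' := hrec n hn1
          have hprev : ∀ i ∈ Finset.Icc 1 k,
              ((g : ℤ) ∣ (n - (i : ℤ)) → x (n - (i : ℤ)) = 1) ∧
              (¬ (g : ℤ) ∣ (n - (i : ℤ)) → x (n - (i : ℤ)) = 0) := by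
            intro i hi
            have h1 : 1 ≤ i := (Finset.mem_Icc.mp hi).1
            refine ih _ ?_
            push_cast at hn ⊢
            omega
          have hx01 : ∀ i ∈ Finset.Icc 1 k, x (n - (i : ℤ)) = 0 ∨ x (n - (i : ℤ)) = 1 := by
            intro i hi
            by_cases hd : (g : ℤ) ∣ (n - (i : ℤ))
            · right; exact (hprev i hi).1 hd
            · left; exact (hprev i hi).2 hd
          by_cases hd : (g : ℤ) ∣ n
          · constructor
            · intro _
              have hnum : ∑ i ∈ Finset.Icc 1 k, β i * x (n - (i : ℤ)) = A := by
                rw [hAβ]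
                apply Finset.sum_congr rfl
                intro i hi
                rcases eq_or_lt_of_le (hβ i) with h0 | hpos
                · rw [← h0]; ring
                · have hgi : (g : ℤ) ∣ (i : ℤ) :=
                    Int.natCast_dvd_natCast.mpr (hgd i (Finset.mem_filter.mpr ⟨hi, hpos⟩))
                  have hdni : (g : ℤ) ∣ (n - (i : ℤ)) := dvd_sub hd hgi
                  rw [(hprev i hi).1 hdni, mul_one]
              have hden : ∑ j ∈ Finset.Icc 1 k, B j * x (n - (j : ℤ)) = 0 := by
                apply Finset.sum_eq_zero
                intro j hj
                rcases eq_or_lt_of_le (hB j) with h0 | hpos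
                · rw [← h0]; ring
                · have hgj : ¬ (g : ℤ) ∣ (j : ℤ) := by
                    intro hc
                    exact hnd j (Finset.mem_filter.mpr ⟨hj, hpos⟩) (by exact_mod_cast hc)
                  have hdnj : ¬ (g : ℤ) ∣ (n - (j : ℤ)) := by
                    intro hc
                    exact hgj (by have := dvd_sub hd hc; simpa using this)
                  rw [(hprev j hj).2 hdnj, mul_zero]
              rw [hrec', hnum, hden, add_zero, div_self hA.ne']
            · intro hc; exact absurd hd hc
          · constructor
            · intro hc; exact absurd hc hd
            · intro _
              have hnum : ∑ i ∈ Finset.Icc 1 k, β i * x (n - (i : ℤ)) = 0 := by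
                apply Finset.sum_eq_zero
                intro i hi
                rcases eq_or_lt_of_le (hβ i) with h0 | hpos
                · rw [← h0]; ring
                · have hgi : (g : ℤ) ∣ (i : ℤ) :=
                    Int.natCast_dvd_natCast.mpr (hgd i (Finset.mem_filter.mpr ⟨hi, hpos⟩))
                  have hdni : ¬ (g : ℤ) ∣ (n - (i : ℤ)) := by
                    intro hc
                    exact hd (by have := dvd_add hc hgi; simpa using this)
                  rw [(hprev i hi).2 hdni, mul_zero]
              have hsnn : 0 ≤ ∑ j ∈ Finset.Icc 1 k, B j * x (n - (j : ℤ)) := by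
                apply Finset.sum_nonneg
                intro j hj
                apply mul_nonneg (hB j)
                rcases hx01 j hj with h' | h' <;> rw [h'] <;> norm_num
              have hden : A + ∑ j ∈ Finset.Icc 1 k, B j * x (n - (j : ℤ)) ≠ 0 := by
                positivity
              rw [hrec', hnum, zero_div]
    intro n
    rcases le_or_gt n 0 with h | h
    · exact hx1 n h
    · exact key n.toNat n (by omega)
  constructor
  · intro n
    by_cases hd : (g : ℤ) ∣ n
    · rw [(claim _).1 (dvd_add hd (dvd_refl _)), (claim n).1 hd]
    · have hd' : ¬ (g : ℤ) ∣ n + (g : ℤ) := by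
        intro hc
        exact hd (by have := dvd_sub hc (dvd_refl (g : ℤ)); simpa using this)
      rw [(claim _).2 hd', (claim n).2 hd]
  · intro p hp hper
    have h0 : x 0 = 1 := (claim 0).1 (dvd_zero _)
    have hxp : x (p : ℤ) = 1 := by
      have := hper 0
      rw [zero_add] at this
      rw [this, h0]
    have hdvd : (g : ℤ) ∣ (p : ℤ) := by
      by_contra hc
      have := (claim (p : ℤ)).2 hc
      rw [hxp] at this
      norm_num at this
    exact Nat.le_of_dvd hp (by exact_mod_cast hdvd)
end

section
/- If A < Σ_{i=1}^k β_i and gcd(I_β) divides no element of I_B, then the solution of x_n = (Σ β_i x_{n-i})/(A + Σ B_j x_{n-j}) with initial conditions x_{-m} = 1 for gcd(I_β) | m and x_{-m} = 0 otherwise satisfies the linear recursion x_n = (Σ β_i x_{n-i})/A and is unbounded. -/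
/-- With `0 < A < ∑ βᵢ` and `gcd I_β` dividing no element of `I_B`, the solution
with initial conditions `x_{-m} = 1` for `gcd I_β ∣ m`, `x_{-m} = 0` otherwise
satisfies the linear recursion `xₙ = (∑ βᵢ x_{n-i})/A` and is unbounded. -/
theorem unbounded_solution_exists (k : ℕ) (hk : 1 ≤ k) (A : ℝ) (β B : ℕ → ℝ)
    (hβ : ∀ i, 0 ≤ β i) (hB : ∀ j, 0 ≤ B j) (hA : 0 < A)
    (hAβ : A < ∑ i ∈ Finset.Icc 1 k, β i)
    (g : ℕ) (hg : g = ((Finset.Icc 1 k).filter (fun i => 0 < β i)).gcd id)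
    (hnd : ∀ j ∈ (Finset.Icc 1 k).filter (fun j => 0 < B j), ¬ g ∣ j)
    (x : ℤ → ℝ)
    (hx1 : ∀ n : ℤ, n ≤ 0 → (((g : ℤ) ∣ n → x n = 1) ∧ (¬ (g : ℤ) ∣ n → x n = 0)))
    (hrec : ∀ n : ℤ, 1 ≤ n → x n =
      (∑ i ∈ Finset.Icc 1 k, β i * x (n - (i : ℤ))) /
      (A + ∑ j ∈ Finset.Icc 1 k, B j * x (n - (j : ℤ)))) :
    (∀ n : ℤ, 1 ≤ n →
        x n = (∑ i ∈ Finset.Icc 1 k, β i * x (n - (i : ℤ))) / A) ∧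
      ¬ BddAbove (Set.range x) := by
  set S := ∑ i ∈ Finset.Icc 1 k, β i with hSdef
  -- there is a positive β i
  have hne : ∃ i ∈ Finset.Icc 1 k, 0 < β i := by
    by_contra h
    push_neg at h
    have hS0 : S = 0 := Finset.sum_eq_zero fun i hi => le_antisymm (h i hi) (hβ i)
    rw [hS0] at hAβ
    linarith
  have hgpos : 0 < g := by
    obtain ⟨i, hi, hβi⟩ := hne
    have hdvd : g ∣ i := by
      rw [hg]
      exact Finset.gcd_dvd (Finset.mem_filter.mpr ⟨hi, hβi⟩)
    have hi1 : 1 ≤ i := (Finset.mem_Icc.mp hi).1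
    rcases Nat.eq_zero_or_pos g with h0 | h
    · rw [h0] at hdvd; omega
    · exact h
  have hgd : ∀ i ∈ Finset.Icc 1 k, 0 < β i → (g : ℤ) ∣ (i : ℤ) := by
    intro i hi hb
    exact_mod_cast Int.natCast_dvd_natCast.mpr
      (hg ▸ Finset.gcd_dvd (Finset.mem_filter.mpr ⟨hi, hb⟩))
  have hBd : ∀ j ∈ Finset.Icc 1 k, 0 < B j → ¬ (g : ℤ) ∣ (j : ℤ) := by
    intro j hj hb hd
    exact hnd j (Finset.mem_filter.mpr ⟨hj, hb⟩) (Int.natCast_dvd_natCast.mp hd)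
  -- main structural lemma: nonnegativity + support in gℤ
  have key : ∀ m : ℕ, ∀ n : ℤ, n ≤ (m : ℤ) → 0 ≤ x n ∧ (x n ≠ 0 → (g : ℤ) ∣ n) := by
    intro m
    induction m with
    | zero =>
      intro n hn
      norm_num at hn
      rcases (hx1 n hn) with ⟨h1, h0⟩
      by_cases hd : (g : ℤ) ∣ n
      · rw [h1 hd]; exact ⟨zero_le_one, fun _ => hd⟩
      · rw [h0 hd]; exact ⟨le_refl 0, fun h => absurd rfl h⟩
    | succ m ih =>
      intro n hn
      rcases le_or_gt n 0 with h0 | h1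
      · rcases (hx1 n h0) with ⟨ha, hb⟩
        by_cases hd : (g : ℤ) ∣ n
        · rw [ha hd]; exact ⟨zero_le_one, fun _ => hd⟩
        · rw [hb hd]; exact ⟨le_refl 0, fun h => absurd rfl h⟩
      · have h1' : (1 : ℤ) ≤ n := h1
        have hih : ∀ i ∈ Finset.Icc 1 k, 0 ≤ x (n - (i : ℤ)) ∧
            (x (n - (i : ℤ)) ≠ 0 → (g : ℤ) ∣ (n - (i : ℤ))) := by
          intro i hi
          apply ih
          have hi1 : 1 ≤ i := (Finset.mem_Icc.mp hi).1
          omega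
        have hdenom : 0 ≤ ∑ j ∈ Finset.Icc 1 k, B j * x (n - (j : ℤ)) :=
          Finset.sum_nonneg fun j hj => mul_nonneg (hB j) (hih j hj).1
        have hnum : 0 ≤ ∑ i ∈ Finset.Icc 1 k, β i * x (n - (i : ℤ)) :=
          Finset.sum_nonneg fun i hi => mul_nonneg (hβ i) (hih i hi).1
        have hxn := hrec n h1'
        constructor
        · rw [hxn]
          exact div_nonneg hnum (by linarith)
        · intro hne0
          rw [hxn] at hne0
          have hnum0 : ∑ i ∈ Finset.Icc 1 k, β i * x (n - (i : ℤ)) ≠ 0 := by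
            intro h
            rw [h, zero_div] at hne0
            exact hne0 rfl
          obtain ⟨i, hi, hterm⟩ := Finset.exists_ne_zero_of_sum_ne_zero hnum0
          have hβi : 0 < β i := lt_of_le_of_ne (hβ i) (Ne.symm (left_ne_zero_of_mul hterm))
          have hxi : x (n - (i : ℤ)) ≠ 0 := right_ne_zero_of_mul hterm
          have hd1 : (g : ℤ) ∣ (i : ℤ) := hgd i hi hβi
          have hd2 : (g : ℤ) ∣ (n - (i : ℤ)) := (hih i hi).2 hxi
          have := dvd_add hd2 hd1
          simpa using this
  have key' : ∀ n : ℤ, 0 ≤ x n ∧ (x n ≠ 0 → (g : ℤ) ∣ n) :=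
    fun n => key n.toNat n (Int.self_le_toNat n)
  -- Part 1: the linear recursion
  have part1 : ∀ n : ℤ, 1 ≤ n →
      x n = (∑ i ∈ Finset.Icc 1 k, β i * x (n - (i : ℤ))) / A := by
    intro n hn
    by_cases hdn : (g : ℤ) ∣ n
    · rw [hrec n hn]
      have hz : ∑ j ∈ Finset.Icc 1 k, B j * x (n - (j : ℤ)) = 0 := by
        apply Finset.sum_eq_zero
        intro j hj
        rcases (hB j).eq_or_lt with hb | hb
        · rw [← hb, zero_mul]
        · have hxj : x (n - (j : ℤ)) = 0 := by
            by_contra h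
            have hd2 : (g : ℤ) ∣ (n - (j : ℤ)) := (key' (n - (j : ℤ))).2 h
            have : (g : ℤ) ∣ (j : ℤ) := by
              have := dvd_sub hdn hd2
              simpa using this
            exact hBd j hj hb this
          rw [hxj, mul_zero]
      rw [hz, add_zero]
    · have hnum : ∑ i ∈ Finset.Icc 1 k, β i * x (n - (i : ℤ)) = 0 := by
        apply Finset.sum_eq_zero
        intro i hi
        rcases (hβ i).eq_or_lt with hb | hb
        · rw [← hb, zero_mul]
        · have hxi : x (n - (i : ℤ)) = 0 := by
            by_contra h
            have hd2 : (g : ℤ) ∣ (n - (i : ℤ)) := (key' (n - (i : ℤ))).2 h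
            have hd1 : (g : ℤ) ∣ (i : ℤ) := hgd i hi hb
            exact hdn (by simpa using dvd_add hd2 hd1)
          rw [hxi, mul_zero]
      rw [hrec n hn, hnum, zero_div, zero_div]
  refine ⟨part1, ?_⟩
  -- growth
  set t := S / A with htdef
  have ht : 1 < t := (one_lt_div hA).mpr hAβ
  have key3 : ∀ m : ℕ, ∀ n : ℤ, n ≤ (m : ℤ) → 1 ≤ n → (g : ℤ) ∣ n → t ≤ x n := by
    intro m
    induction m with
    | zero => intro n hn h1 _; omega
    | succ m ih =>
      intro n hn h1 hd
      have hterm : ∀ i ∈ Finset.Icc 1 k, β i ≤ β i * x (n - (i : ℤ)) := by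
        intro i hi
        rcases (hβ i).eq_or_lt with hb | hb
        · rw [← hb, zero_mul]
        · have hdi : (g : ℤ) ∣ (n - (i : ℤ)) := dvd_sub hd (hgd i hi hb)
          have hone : 1 ≤ x (n - (i : ℤ)) := by
            rcases le_or_gt (n - (i : ℤ)) 0 with hle | hgt
            · rw [(hx1 _ hle).1 hdi]
            · have hi1 : 1 ≤ i := (Finset.mem_Icc.mp hi).1
              have := ih (n - (i : ℤ)) (by omega) hgt hdi
              linarith
          nlinarith
      have hsum : S ≤ ∑ i ∈ Finset.Icc 1 k, β i * x (n - (i : ℤ)) :=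
        Finset.sum_le_sum hterm
      rw [part1 n h1]
      rw [htdef]
      gcongr
  have key3' : ∀ n : ℤ, 1 ≤ n → (g : ℤ) ∣ n → t ≤ x n :=
    fun n h1 hd => key3 n.toNat n (Int.self_le_toNat n) h1 hd
  have key4 : ∀ N : ℕ, ∀ n : ℤ, (1 : ℤ) + N * k ≤ n → (g : ℤ) ∣ n →
      t ^ (N + 1) ≤ x n := by
    intro N
    induction N with
    | zero =>
      intro n hn hd
      rw [pow_one]
      exact key3' n (by push_cast at hn; linarith) hd
    | succ N ih =>
      intro n hn hd
      have h1 : (1 : ℤ) ≤ n := by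
        have : (0 : ℤ) ≤ (N + 1 : ℕ) * k := by positivity
        push_cast at hn ⊢
        nlinarith
      have htp : (0 : ℝ) ≤ t ^ (N + 1) := by positivity
      have hterm : ∀ i ∈ Finset.Icc 1 k, β i * t ^ (N + 1) ≤ β i * x (n - (i : ℤ)) := by
        intro i hi
        rcases (hβ i).eq_or_lt with hb | hb
        · rw [← hb, zero_mul, zero_mul]
        · have hdi : (g : ℤ) ∣ (n - (i : ℤ)) := dvd_sub hd (hgd i hi hb)
          have hik : i ≤ k := (Finset.mem_Icc.mp hi).2
          have hge : (1 : ℤ) + N * k ≤ n - (i : ℤ) := by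
            push_cast at hn ⊢
            have : (i : ℤ) ≤ (k : ℤ) := by exact_mod_cast hik
            nlinarith
          have := ih (n - (i : ℤ)) hge hdi
          nlinarith
      have hsum : S * t ^ (N + 1) ≤ ∑ i ∈ Finset.Icc 1 k, β i * x (n - (i : ℤ)) := by
        calc S * t ^ (N + 1) = ∑ i ∈ Finset.Icc 1 k, β i * t ^ (N + 1) := by
              rw [hSdef, Finset.sum_mul]
          _ ≤ _ := Finset.sum_le_sum hterm
      rw [part1 n h1]
      have : t ^ (N + 1 + 1) = (S * t ^ (N + 1)) / A := by
        rw [pow_succ, mul_comm, htdef, div_mul_eq_mul_div]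
      rw [this]
      gcongr
  -- conclude unboundedness
  rintro ⟨M, hM⟩
  obtain ⟨N, hN⟩ := pow_unbounded_of_one_lt M ht
  set n : ℤ := (g : ℤ) * (1 + N * k) with hndef
  have hg1 : (1 : ℤ) ≤ (g : ℤ) := by exact_mod_cast hgpos
  have h0 : (0 : ℤ) ≤ 1 + (N : ℤ) * k := by positivity
  have h1 : (1 : ℤ) + N * k ≤ n := by
    rw [hndef]
    nlinarith
  have hdvd : (g : ℤ) ∣ n := Dvd.intro _ rfl
  have hx4 := key4 N n h1 hdvd
  have hxM : x n ≤ M := hM ⟨n, rfl⟩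
  have hpow : t ^ N ≤ t ^ (N + 1) := pow_le_pow_right₀ ht.le (Nat.le_succ N)
  linarith
end

section
/- Consider x_n = (α + Σ_{i=1}^k β_i x_{n-i})/(A + Σ_{j=1}^k B_j x_{n-j}) with α > 0, Σ B_j > 0, A = Σ β_i, and let g = gcd(I_β ∪ I_B). Assume 2g | i for all i ∈ I_β and 2g | (j + g) for all j ∈ I_B, and let x̄ be the positive equilibrium. Then the initial conditions x_{-m} = x̄/2 for -m ≡ 0 mod 2g, x_{-m} = 2α/(x̄ Σ_{j∈I_B} B_j) for -m ≡ g mod 2g, and x_{-m} = x̄ otherwise, yield a periodic solution of prime period 2g. -/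
/-- With `α > 0`, `∑ Bⱼ > 0`, `A = ∑ βᵢ`, `2g ∣ i` for `i ∈ I_β`, `2g ∣ j + g`
for `j ∈ I_B` (`g = gcd (I_β ∪ I_B)`), and `x̄ = √(α/∑Bⱼ)` the positive
equilibrium, the initial conditions `x̄/2` at `n ≡ 0 (2g)`,
`2α/(x̄ ∑Bⱼ)` at `n ≡ g (2g)`, and `x̄` otherwise yield a periodic solution of
prime period `2g`. -/
theorem prime_period_two_gcd (k : ℕ) (hk : 1 ≤ k) (α A : ℝ) (β B : ℕ → ℝ)
    (hα : 0 < α) (hβ : ∀ i, 0 ≤ β i) (hB : ∀ j, 0 ≤ B j)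
    (hBsum : 0 < ∑ j ∈ Finset.Icc 1 k, B j)
    (hAβ : A = ∑ i ∈ Finset.Icc 1 k, β i)
    (g : ℕ)
    (hg : g = ((Finset.Icc 1 k).filter (fun i => 0 < β i ∨ 0 < B i)).gcd id)
    (hdivβ : ∀ i ∈ (Finset.Icc 1 k).filter (fun i => 0 < β i), 2 * g ∣ i)
    (hdivB : ∀ j ∈ (Finset.Icc 1 k).filter (fun j => 0 < B j), 2 * g ∣ j + g)
    (xbar : ℝ) (hxbar : xbar = Real.sqrt (α / ∑ j ∈ Finset.Icc 1 k, B j))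
    (x : ℤ → ℝ)
    (hx1 : ∀ n : ℤ, n ≤ 0 →
      (((2 * g : ℤ) ∣ n → x n = xbar / 2) ∧
        ((2 * g : ℤ) ∣ (n - g) → x n = 2 * α / (xbar * ∑ j ∈ Finset.Icc 1 k, B j)) ∧
        (¬ (2 * g : ℤ) ∣ n → ¬ (2 * g : ℤ) ∣ (n - g) → x n = xbar)))
    (hrec : ∀ n : ℤ, 1 ≤ n → x n =
      (α + ∑ i ∈ Finset.Icc 1 k, β i * x (n - (i : ℤ))) /
      (A + ∑ j ∈ Finset.Icc 1 k, B j * x (n - (j : ℤ)))) :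
    (∀ n : ℤ, x (n + (2 * g : ℤ)) = x n) ∧
      ∀ p : ℕ, 0 < p → (∀ n : ℤ, x (n + (p : ℤ)) = x n) → 2 * g ≤ p := by
  set S : ℝ := ∑ j ∈ Finset.Icc 1 k, B j with hSdef
  -- g is positive
  have hg0 : 0 < g := by
    obtain ⟨j, hj, hBj⟩ : ∃ j ∈ Finset.Icc 1 k, 0 < B j := by
      by_contra h
      push_neg at h
      have : S = 0 := Finset.sum_eq_zero (fun j hj => le_antisymm (h j hj) (hB j))
      linarith
    have hjmem : j ∈ (Finset.Icc 1 k).filter (fun i => 0 < β i ∨ 0 < B i) :=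
      Finset.mem_filter.2 ⟨hj, Or.inr hBj⟩
    have hdvd : g ∣ j := hg ▸ Finset.gcd_dvd hjmem
    have hj1 : 1 ≤ j := (Finset.mem_Icc.1 hj).1
    rcases Nat.eq_zero_or_pos g with h0 | h
    · subst h0; simp at hdvd; omega
    · exact h
  have hgz : (0 : ℤ) < (g : ℤ) := by exact_mod_cast hg0
  -- basic positivity facts
  have hA0 : 0 ≤ A := hAβ ▸ Finset.sum_nonneg (fun i _ => hβ i)
  have hxpos : 0 < xbar := by
    rw [hxbar]
    exact Real.sqrt_pos.2 (div_pos hα hBsum)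
  have hx2 : xbar * xbar * S = α := by
    have h1 : xbar * xbar = α / S := by
      rw [hxbar]; exact Real.mul_self_sqrt (le_of_lt (div_pos hα hBsum))
    rw [h1]; field_simp
  have hval : 2 * α / (xbar * S) = 2 * xbar := by
    rw [div_eq_iff (by positivity)]
    nlinarith [hx2]
  -- the two residue classes are disjoint
  have hnot : ∀ n : ℤ, (2 * g : ℤ) ∣ n → ¬ (2 * g : ℤ) ∣ (n - g) := by
    intro n h1 h2
    have h3 : (2 * g : ℤ) ∣ (g : ℤ) := by
      have := dvd_sub h1 h2
      simpa using this
    have := Int.le_of_dvd hgz h3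
    linarith
  -- the description of x values, to be proved for all n
  set T : ℤ → Prop := fun n =>
    ((2 * g : ℤ) ∣ n → x n = xbar / 2) ∧
      ((2 * g : ℤ) ∣ (n - g) → x n = 2 * xbar) ∧
      (¬ (2 * g : ℤ) ∣ n → ¬ (2 * g : ℤ) ∣ (n - g) → x n = xbar) with hTdef
  have hbase : ∀ n : ℤ, n ≤ 0 → T n := by
    intro n hn
    obtain ⟨h1, h2, h3⟩ := hx1 n hn
    exact ⟨h1, fun hd => by rw [h2 hd, hval], h3⟩
  -- sum computation helpers
  have sumβ : ∀ n : ℤ, ∀ c : ℝ, (∀ i ∈ Finset.Icc 1 k, 0 < β i → x (n - (i : ℤ)) = c) →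
      ∑ i ∈ Finset.Icc 1 k, β i * x (n - (i : ℤ)) = A * c := by
    intro n c hc
    rw [hAβ, Finset.sum_mul]
    refine Finset.sum_congr rfl (fun i hi => ?_)
    rcases eq_or_lt_of_le (hβ i) with h | h
    · rw [← h]; ring
    · rw [hc i hi h]
  have sumB : ∀ n : ℤ, ∀ c : ℝ, (∀ j ∈ Finset.Icc 1 k, 0 < B j → x (n - (j : ℤ)) = c) →
      ∑ j ∈ Finset.Icc 1 k, B j * x (n - (j : ℤ)) = S * c := by
    intro n c hc
    rw [hSdef, Finset.sum_mul]
    refine Finset.sum_congr rfl (fun j hj => ?_)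
    rcases eq_or_lt_of_le (hB j) with h | h
    · rw [← h]; ring
    · rw [hc j hj h]
  -- cast divisibility facts
  have hdβ : ∀ i ∈ Finset.Icc 1 k, 0 < β i → (2 * g : ℤ) ∣ (i : ℤ) := by
    intro i hi h
    exact_mod_cast hdivβ i (Finset.mem_filter.2 ⟨hi, h⟩)
  have hdB : ∀ j ∈ Finset.Icc 1 k, 0 < B j → (2 * g : ℤ) ∣ ((j : ℤ) + g) := by
    intro j hj h
    exact_mod_cast hdivB j (Finset.mem_filter.2 ⟨hj, h⟩)
  -- the recurrence step
  have step : ∀ n : ℤ, 1 ≤ n → (∀ m : ℤ, m < n → T m) → T n := by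
    intro n hn ih
    have hi1 : ∀ i ∈ Finset.Icc 1 k, (1 : ℤ) ≤ (i : ℤ) := by
      intro i hi; exact_mod_cast (Finset.mem_Icc.1 hi).1
    by_cases hd1 : (2 * g : ℤ) ∣ n
    · -- case n ≡ 0 mod 2g : x n = xbar / 2
      have hβv : ∀ i ∈ Finset.Icc 1 k, 0 < β i → x (n - (i : ℤ)) = xbar / 2 := by
        intro i hi h
        exact (ih (n - i) (by linarith [hi1 i hi])).1 (dvd_sub hd1 (hdβ i hi h))
      have hBv : ∀ j ∈ Finset.Icc 1 k, 0 < B j → x (n - (j : ℤ)) = 2 * xbar := by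
        intro j hj h
        refine (ih (n - j) (by linarith [hi1 j hj])).2.1 ?_
        have : n - (j : ℤ) - g = n - ((j : ℤ) + g) := by ring
        rw [this]
        exact dvd_sub hd1 (hdB j hj h)
      have hxn : x n = xbar / 2 := by
        rw [hrec n hn, sumβ n _ hβv, sumB n _ hBv]
        rw [div_eq_iff (by positivity)]
        nlinarith [hx2]
      exact ⟨fun _ => hxn, fun hd2 => absurd hd2 (hnot n hd1), fun h1 _ => absurd hd1 h1⟩
    · by_cases hd2 : (2 * g : ℤ) ∣ (n - g)
      · -- case n ≡ g mod 2g : x n = 2 * xbar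
        have hβv : ∀ i ∈ Finset.Icc 1 k, 0 < β i → x (n - (i : ℤ)) = 2 * xbar := by
          intro i hi h
          refine (ih (n - i) (by linarith [hi1 i hi])).2.1 ?_
          have : n - (i : ℤ) - g = (n - g) - i := by ring
          rw [this]
          exact dvd_sub hd2 (hdβ i hi h)
        have hBv : ∀ j ∈ Finset.Icc 1 k, 0 < B j → x (n - (j : ℤ)) = xbar / 2 := by
          intro j hj h
          refine (ih (n - j) (by linarith [hi1 j hj])).1 ?_
          have : n - (j : ℤ) = (n - g) - ((j : ℤ) + g) + (2 * g) := by ring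
          rw [this]
          exact dvd_add (dvd_sub hd2 (hdB j hj h)) dvd_rfl
        have hxn : x n = 2 * xbar := by
          rw [hrec n hn, sumβ n _ hβv, sumB n _ hBv]
          rw [div_eq_iff (by positivity)]
          nlinarith [hx2]
        exact ⟨fun hd => absurd hd2 (hnot n hd), fun _ => hxn, fun _ h2 => absurd hd2 h2⟩
      · -- generic case : x n = xbar
        have hβv : ∀ i ∈ Finset.Icc 1 k, 0 < β i → x (n - (i : ℤ)) = xbar := by
          intro i hi h
          refine (ih (n - i) (by linarith [hi1 i hi])).2.2 ?_ ?_
          · intro hc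
            exact hd1 (by simpa using dvd_add hc (hdβ i hi h))
          · intro hc
            have : n - g = (n - (i : ℤ) - g) + i := by ring
            exact hd2 (this ▸ dvd_add hc (hdβ i hi h))
        have hBv : ∀ j ∈ Finset.Icc 1 k, 0 < B j → x (n - (j : ℤ)) = xbar := by
          intro j hj h
          refine (ih (n - j) (by linarith [hi1 j hj])).2.2 ?_ ?_
          · intro hc
            have : n - g = (n - (j : ℤ)) + ((j : ℤ) + g) - 2 * g := by ring
            exact hd2 (this ▸ dvd_sub (dvd_add hc (hdB j hj h)) dvd_rfl)
          · intro hc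
            have : n = (n - (j : ℤ) - g) + ((j : ℤ) + g) := by ring
            exact hd1 (this ▸ dvd_add hc (hdB j hj h))
        have hxn : x n = xbar := by
          rw [hrec n hn, sumβ n _ hβv, sumB n _ hBv]
          rw [div_eq_iff (by positivity)]
          nlinarith [hx2]
        exact ⟨fun hd => absurd hd hd1, fun hd => absurd hd hd2, fun _ _ => hxn⟩
  -- strong induction giving T everywhere
  have key : ∀ n : ℤ, T n := by
    have main : ∀ m : ℕ, ∀ n : ℤ, n ≤ m → T n := by
      intro m
      induction m with
      | zero => intro n hn; exact hbase n (by exact_mod_cast hn)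
      | succ m ih =>
        intro n hn
        rcases le_or_gt n m with h | h
        · exact ih n h
        · have hn1 : (1 : ℤ) ≤ n := by omega
          exact step n hn1 (fun p hp => ih p (by omega))
    intro n
    rcases le_or_gt n 0 with h | h
    · exact hbase n h
    · exact main n.toNat n (by omega)
  constructor
  · intro n
    obtain ⟨a1, a2, a3⟩ := key n
    obtain ⟨b1, b2, b3⟩ := key (n + 2 * g)
    by_cases hd1 : (2 * g : ℤ) ∣ n
    · rw [b1 (dvd_add hd1 dvd_rfl), a1 hd1]
    · by_cases hd2 : (2 * g : ℤ) ∣ (n - g)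
      · rw [a2 hd2, b2 (by have : n + 2 * g - g = (n - g) + 2 * g := by ring
                           rw [this]; exact dvd_add hd2 dvd_rfl)]
      · rw [a3 hd1 hd2, b3 ?_ ?_]
        · intro hc
          have : n = (n + 2 * g) - 2 * g := by ring
          exact hd1 (this ▸ dvd_sub hc dvd_rfl)
        · intro hc
          have : n - g = (n + 2 * g - g) - 2 * g := by ring
          exact hd2 (this ▸ dvd_sub hc dvd_rfl)
  · intro p hp hper
    by_contra hlt
    push_neg at hlt
    have h0 : x 0 = xbar / 2 := (key 0).1 (dvd_zero _)
    have hper0 : x (-(p : ℤ)) = x 0 := by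
      have := hper (-(p : ℤ))
      simpa using this.symm
    obtain ⟨c1, c2, c3⟩ := key (-(p : ℤ))
    by_cases hd1 : (2 * g : ℤ) ∣ (-(p : ℤ))
    · have hd1' : (2 * g : ℤ) ∣ (p : ℤ) := (dvd_neg).1 hd1
      have := Int.le_of_dvd (by exact_mod_cast hp) hd1'
      have h2 : ((2 * g : ℕ) : ℤ) ≤ (p : ℤ) := by push_cast; linarith
      have := Int.ofNat_le.1 h2
      omega
    · by_cases hd2 : (2 * g : ℤ) ∣ (-(p : ℤ) - g)
      · have := c2 hd2
        rw [this, h0] at hper0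
        linarith
      · have := c3 hd1 hd2
        rw [this, h0] at hper0
        linarith
end

section
/- Under the hypotheses α > 0, ΣB_j > 0, A = Σβ_i, 2g | i for all i ∈ I_β and 2g | (j+g) for all j ∈ I_B where g = gcd(I_β ∪ I_B), the auxiliary sequence y^a_m = max over ℓ=1..⌊k/(2g)⌋ of x_{2g(m-ℓ)+a}, α/(x_{2g(m-ℓ)+a-g} Σ_{j∈I_B} B_j), and α/(x_{2gm+a-g} Σ_{j∈I_B} B_j) is monotone nonincreasing in m. -/
/-- Under `α > 0`, `∑ Bⱼ > 0`, `A = ∑ βᵢ`, `2g ∣ i` for `i ∈ I_β`, and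
`2g ∣ j + g` for `j ∈ I_B` (`g = gcd (I_β ∪ I_B)`), the auxiliary sequence
`y^a_m = max_{ℓ=1..ρ} ( x_{2g(m-ℓ)+a}, α/(x_{2g(m-ℓ)+a-g} ∑Bⱼ), α/(x_{2gm+a-g} ∑Bⱼ) )`
is nonincreasing in `m`. -/
theorem aux_sequence_monotone_two_gcd (k : ℕ) (hk : 1 ≤ k) (α A : ℝ) (β B : ℕ → ℝ)
    (hα : 0 < α) (hβ : ∀ i, 0 ≤ β i) (hB : ∀ j, 0 ≤ B j)
    (hBsum : 0 < ∑ j ∈ Finset.Icc 1 k, B j)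
    (hAβ : A = ∑ i ∈ Finset.Icc 1 k, β i)
    (g : ℕ)
    (hg : g = ((Finset.Icc 1 k).filter (fun i => 0 < β i ∨ 0 < B i)).gcd id)
    (hdivβ : ∀ i ∈ (Finset.Icc 1 k).filter (fun i => 0 < β i), 2 * g ∣ i)
    (hdivB : ∀ j ∈ (Finset.Icc 1 k).filter (fun j => 0 < B j), 2 * g ∣ j + g)
    (x : ℤ → ℝ) (hpos : ∀ n : ℤ, 0 < x n)
    (hrec : ∀ n : ℤ, 1 ≤ n → x n =
      (α + ∑ i ∈ Finset.Icc 1 k, β i * x (n - (i : ℤ))) /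
      (A + ∑ j ∈ Finset.Icc 1 k, B j * x (n - (j : ℤ))))
    (ρ : ℕ) (hρ : ρ = k / (2 * g))
    (Y : ℤ → ℕ → ℝ)
    (hY : ∀ a : ℤ, ∀ m : ℕ, Y a m = sSup
      (((fun ℓ : ℕ => x (2 * (g : ℤ) * ((m : ℤ) - (ℓ : ℤ)) + a)) '' Set.Icc 1 ρ) ∪
        ((fun ℓ : ℕ => α / (x (2 * (g : ℤ) * ((m : ℤ) - (ℓ : ℤ)) + a - (g : ℤ)) *
          ∑ j ∈ Finset.Icc 1 k, B j)) '' Set.Icc 1 ρ) ∪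
        {α / (x (2 * (g : ℤ) * (m : ℤ) + a - (g : ℤ)) * ∑ j ∈ Finset.Icc 1 k, B j)})) :
    ∀ a : ℤ, 1 ≤ a → ∀ m : ℕ, Y a (m + 1) ≤ Y a m := by
  intro a ha m
  set S : ℝ := ∑ j ∈ Finset.Icc 1 k, B j with hSdef
  have hA0 : 0 ≤ A := by
    rw [hAβ]; exact Finset.sum_nonneg fun i _ => hβ i
  obtain ⟨j0, hj0, hBj0⟩ : ∃ j ∈ Finset.Icc 1 k, 0 < B j := by
    by_contra h
    push_neg at h
    have : S ≤ 0 := Finset.sum_nonpos fun j hj => h j hj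
    linarith
  have hgpos : 0 < g := by
    rcases Nat.eq_zero_or_pos g with h0 | h
    · exfalso
      have hd := hdivB j0 (Finset.mem_filter.mpr ⟨hj0, hBj0⟩)
      rw [h0] at hd
      simp at hd
      simp [Finset.mem_Icc] at hj0
      omega
    · exact h
  -- The set whose sup is `Y a m`.
  set T : Set ℝ :=
    ((fun ℓ : ℕ => x (2 * (g : ℤ) * ((m : ℤ) - (ℓ : ℤ)) + a)) '' Set.Icc 1 ρ) ∪
      ((fun ℓ : ℕ => α / (x (2 * (g : ℤ) * ((m : ℤ) - (ℓ : ℤ)) + a - (g : ℤ)) * S)) ''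
        Set.Icc 1 ρ) ∪
      {α / (x (2 * (g : ℤ) * (m : ℤ) + a - (g : ℤ)) * S)} with hTdef
  have hYm : Y a m = sSup T := hY a m
  have hTfin : T.Finite := by
    refine Set.Finite.union (Set.Finite.union ?_ ?_) (Set.finite_singleton _)
    · exact (Set.finite_Icc 1 ρ).image _
    · exact (Set.finite_Icc 1 ρ).image _
  have hTbdd : BddAbove T := hTfin.bddAbove
  have hle : ∀ y ∈ T, y ≤ Y a m := by
    intro y hy; rw [hYm]; exact le_csSup hTbdd hy
  have hsing_mem : α / (x (2 * (g : ℤ) * (m : ℤ) + a - (g : ℤ)) * S) ∈ T :=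
    Set.mem_union_right _ rfl
  have hYpos : 0 < Y a m := by
    have h1 : 0 < α / (x (2 * (g : ℤ) * (m : ℤ) + a - (g : ℤ)) * S) := by
      apply div_pos hα (mul_pos (hpos _) hBsum)
    exact lt_of_lt_of_le h1 (hle _ hsing_mem)
  have hYne : Y a m ≠ 0 := ne_of_gt hYpos
  have hSne : S ≠ 0 := ne_of_gt hBsum
  -- first family bound
  have hx_le : ∀ ℓ : ℕ, 1 ≤ ℓ → ℓ ≤ ρ →
      x (2 * (g : ℤ) * ((m : ℤ) - (ℓ : ℤ)) + a) ≤ Y a m := by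
    intro ℓ h1 h2
    exact hle _ (Set.mem_union_left _ (Set.mem_union_left _ ⟨ℓ, Set.mem_Icc.mpr ⟨h1, h2⟩, rfl⟩))
  -- second family + singleton bound (ℓ from 0 to ρ)
  have hq_le : ∀ ℓ : ℕ, ℓ ≤ ρ →
      α / (x (2 * (g : ℤ) * ((m : ℤ) - (ℓ : ℤ)) + a - (g : ℤ)) * S) ≤ Y a m := by
    intro ℓ h2
    rcases Nat.eq_zero_or_pos ℓ with h0 | h1
    · subst h0
      have : 2 * (g : ℤ) * ((m : ℤ) - ((0 : ℕ) : ℤ)) + a - (g : ℤ)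
          = 2 * (g : ℤ) * (m : ℤ) + a - (g : ℤ) := by push_cast; ring
      rw [this]
      exact hle _ hsing_mem
    · exact hle _ (Set.mem_union_left _
        (Set.mem_union_right _ ⟨ℓ, Set.mem_Icc.mpr ⟨h1, h2⟩, rfl⟩))
  -- derived lower bound for x at the shifted indices
  have hq_ge : ∀ ℓ : ℕ, ℓ ≤ ρ →
      α / (Y a m * S) ≤ x (2 * (g : ℤ) * ((m : ℤ) - (ℓ : ℤ)) + a - (g : ℤ)) := by
    intro ℓ h2
    have h := hq_le ℓ h2
    set z := x (2 * (g : ℤ) * ((m : ℤ) - (ℓ : ℤ)) + a - (g : ℤ)) with hz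
    have hzpos : 0 < z := hpos _
    rw [div_le_iff₀ (mul_pos hzpos hBsum)] at h
    rw [div_le_iff₀ (mul_pos hYpos hBsum)]
    nlinarith
  have hquot_nonneg : 0 ≤ α / (Y a m * S) :=
    le_of_lt (div_pos hα (mul_pos hYpos hBsum))
  -- CLAIM 1 : x (2 g m + a) ≤ Y a m
  have claim1 : x (2 * (g : ℤ) * (m : ℤ) + a) ≤ Y a m := by
    set n : ℤ := 2 * (g : ℤ) * (m : ℤ) + a with hn
    have hn1 : 1 ≤ n := by
      have : (0 : ℤ) ≤ 2 * (g : ℤ) * (m : ℤ) := by positivity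
      omega
    have hnum : ∑ i ∈ Finset.Icc 1 k, β i * x (n - (i : ℤ)) ≤ A * Y a m := by
      rw [hAβ, Finset.sum_mul]
      apply Finset.sum_le_sum
      intro i hi
      rcases eq_or_lt_of_le (hβ i) with h0 | hbi
      · rw [← h0]; simp
      · obtain ⟨ℓ, hℓ⟩ := hdivβ i (Finset.mem_filter.mpr ⟨hi, hbi⟩)
        simp only [Finset.mem_Icc] at hi
        have hℓ1 : 1 ≤ ℓ := by
          rcases Nat.eq_zero_or_pos ℓ with h | h
          · subst h; simp at hℓ; omega
          · exact h
        have hmul : ℓ * (2 * g) = i := by rw [hℓ]; ring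
        have hℓρ : ℓ ≤ ρ := by
          rw [hρ]
          exact Nat.le_div_iff_mul_le (by omega) |>.mpr (by omega)
        have hcast : (i : ℤ) = 2 * (g : ℤ) * (ℓ : ℤ) := by exact_mod_cast hℓ
        have hidx : n - (i : ℤ) = 2 * (g : ℤ) * ((m : ℤ) - (ℓ : ℤ)) + a := by
          rw [hcast, hn]; ring
        rw [hidx]
        exact mul_le_mul_of_nonneg_left (hx_le ℓ hℓ1 hℓρ) (le_of_lt hbi)
    have hden : α / Y a m ≤ ∑ j ∈ Finset.Icc 1 k, B j * x (n - (j : ℤ)) := by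
      have heq : α / Y a m = ∑ j ∈ Finset.Icc 1 k, B j * (α / (Y a m * S)) := by
        rw [← Finset.sum_mul, ← hSdef]
        field_simp
      rw [heq]
      apply Finset.sum_le_sum
      intro j hj
      rcases eq_or_lt_of_le (hB j) with h0 | hbj
      · rw [← h0]; simp
      · obtain ⟨ℓ', hℓ'⟩ := hdivB j (Finset.mem_filter.mpr ⟨hj, hbj⟩)
        simp only [Finset.mem_Icc] at hj
        have hℓ'1 : 1 ≤ ℓ' := by
          rcases Nat.eq_zero_or_pos ℓ' with h | h
          · subst h; simp at hℓ'; omega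
          · exact h
        have ht : ℓ' - 1 + 1 = ℓ' := by omega
        have hmul : (ℓ' - 1) * (2 * g) + 2 * g = 2 * g * ℓ' := by
          calc (ℓ' - 1) * (2 * g) + 2 * g = ((ℓ' - 1) + 1) * (2 * g) := by ring
            _ = ℓ' * (2 * g) := by rw [ht]
            _ = 2 * g * ℓ' := by ring
        have hℓρ : ℓ' - 1 ≤ ρ := by
          rw [hρ]
          exact Nat.le_div_iff_mul_le (by omega) |>.mpr (by omega)
        have hcast : (j : ℤ) = 2 * (g : ℤ) * (((ℓ' - 1 : ℕ)) : ℤ) + (g : ℤ) := by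
          have : ((ℓ' : ℤ)) = ((ℓ' - 1 : ℕ) : ℤ) + 1 := by omega
          have hjc : (j : ℤ) + (g : ℤ) = 2 * (g : ℤ) * (ℓ' : ℤ) := by exact_mod_cast hℓ'
          rw [this] at hjc
          linarith
        have hidx : n - (j : ℤ)
            = 2 * (g : ℤ) * ((m : ℤ) - ((ℓ' - 1 : ℕ) : ℤ)) + a - (g : ℤ) := by
          rw [hcast, hn]; ring
        rw [hidx]
        exact mul_le_mul_of_nonneg_left (hq_ge (ℓ' - 1) hℓρ) (le_of_lt hbj)
    have hsum_pos : 0 < ∑ j ∈ Finset.Icc 1 k, B j * x (n - (j : ℤ)) := by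
      apply Finset.sum_pos'
      · intro j _; exact mul_nonneg (hB j) (le_of_lt (hpos _))
      · exact ⟨j0, hj0, mul_pos hBj0 (hpos _)⟩
    have hDpos : 0 < A + ∑ j ∈ Finset.Icc 1 k, B j * x (n - (j : ℤ)) := by linarith
    rw [hrec n hn1, div_le_iff₀ hDpos]
    have key : α + A * Y a m = Y a m * (A + α / Y a m) := by field_simp; ring
    have h2 : Y a m * (A + α / Y a m) ≤
        Y a m * (A + ∑ j ∈ Finset.Icc 1 k, B j * x (n - (j : ℤ))) := by
      apply mul_le_mul_of_nonneg_left _ (le_of_lt hYpos)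
      linarith
    linarith
  -- CLAIM 2 : x (2 g (m+1) + a - g) ≥ α / (Y a m * S)
  have claim2 : α / (Y a m * S) ≤ x (2 * (g : ℤ) * ((m : ℤ) + 1) + a - (g : ℤ)) := by
    set n : ℤ := 2 * (g : ℤ) * ((m : ℤ) + 1) + a - (g : ℤ) with hn
    have hn1 : 1 ≤ n := by
      have h2 : (1 : ℤ) ≤ (g : ℤ) := by exact_mod_cast hgpos
      have h3 : (0 : ℤ) ≤ (m : ℤ) := Int.ofNat_nonneg m
      have h1 : (g : ℤ) ≤ 2 * (g : ℤ) * ((m : ℤ) + 1) := by nlinarith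
      rw [hn]
      linarith
    have hnum : α + A * (α / (Y a m * S)) ≤
        α + ∑ i ∈ Finset.Icc 1 k, β i * x (n - (i : ℤ)) := by
      have h1 : A * (α / (Y a m * S)) ≤ ∑ i ∈ Finset.Icc 1 k, β i * x (n - (i : ℤ)) := by
        rw [hAβ, Finset.sum_mul]
        apply Finset.sum_le_sum
        intro i hi
        rcases eq_or_lt_of_le (hβ i) with h0 | hbi
        · rw [← h0]; simp
        · obtain ⟨ℓ, hℓ⟩ := hdivβ i (Finset.mem_filter.mpr ⟨hi, hbi⟩)
          simp only [Finset.mem_Icc] at hi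
          have hℓ1 : 1 ≤ ℓ := by
            rcases Nat.eq_zero_or_pos ℓ with h | h
            · subst h; simp at hℓ; omega
            · exact h
          have ht : ℓ - 1 + 1 = ℓ := by omega
          have hmul : (ℓ - 1) * (2 * g) + 2 * g = 2 * g * ℓ := by
            calc (ℓ - 1) * (2 * g) + 2 * g = ((ℓ - 1) + 1) * (2 * g) := by ring
              _ = ℓ * (2 * g) := by rw [ht]
              _ = 2 * g * ℓ := by ring
          have hℓρ : ℓ - 1 ≤ ρ := by
            rw [hρ]
            exact Nat.le_div_iff_mul_le (by omega) |>.mpr (by omega)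
          have hcast : (i : ℤ) = 2 * (g : ℤ) * (((ℓ - 1 : ℕ)) : ℤ) + 2 * (g : ℤ) := by
            have h' : ((ℓ : ℤ)) = ((ℓ - 1 : ℕ) : ℤ) + 1 := by omega
            have hic : (i : ℤ) = 2 * (g : ℤ) * (ℓ : ℤ) := by exact_mod_cast hℓ
            rw [h'] at hic
            linarith
          have hidx : n - (i : ℤ)
              = 2 * (g : ℤ) * ((m : ℤ) - ((ℓ - 1 : ℕ) : ℤ)) + a - (g : ℤ) := by
            rw [hcast, hn]; ring
          rw [hidx]
          exact mul_le_mul_of_nonneg_left (hq_ge (ℓ - 1) hℓρ) (le_of_lt hbi)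
      linarith
    have hden : ∑ j ∈ Finset.Icc 1 k, B j * x (n - (j : ℤ)) ≤ S * Y a m := by
      rw [hSdef, Finset.sum_mul]
      apply Finset.sum_le_sum
      intro j hj
      rcases eq_or_lt_of_le (hB j) with h0 | hbj
      · rw [← h0]; simp
      · obtain ⟨ℓ', hℓ'⟩ := hdivB j (Finset.mem_filter.mpr ⟨hj, hbj⟩)
        simp only [Finset.mem_Icc] at hj
        have hℓ'1 : 1 ≤ ℓ' := by
          rcases Nat.eq_zero_or_pos ℓ' with h | h
          · subst h; simp at hℓ'; omega
          · exact h
        have hcast : (j : ℤ) = 2 * (g : ℤ) * (((ℓ' - 1 : ℕ)) : ℤ) + (g : ℤ) := by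
          have h' : ((ℓ' : ℤ)) = ((ℓ' - 1 : ℕ) : ℤ) + 1 := by omega
          have hjc : (j : ℤ) + (g : ℤ) = 2 * (g : ℤ) * (ℓ' : ℤ) := by exact_mod_cast hℓ'
          rw [h'] at hjc
          linarith
        rcases Nat.eq_zero_or_pos (ℓ' - 1) with h0' | h1'
        · have hidx : n - (j : ℤ) = 2 * (g : ℤ) * (m : ℤ) + a := by
            rw [hcast, hn, h0']; push_cast; ring
          rw [hidx]
          exact mul_le_mul_of_nonneg_left claim1 (le_of_lt hbj)
        · have ht : ℓ' - 1 + 1 = ℓ' := by omega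
          have hmul : (ℓ' - 1) * (2 * g) + 2 * g = 2 * g * ℓ' := by
            calc (ℓ' - 1) * (2 * g) + 2 * g = ((ℓ' - 1) + 1) * (2 * g) := by ring
              _ = ℓ' * (2 * g) := by rw [ht]
              _ = 2 * g * ℓ' := by ring
          have hℓρ : ℓ' - 1 ≤ ρ := by
            rw [hρ]
            exact Nat.le_div_iff_mul_le (by omega) |>.mpr (by omega)
          have hidx : n - (j : ℤ)
              = 2 * (g : ℤ) * ((m : ℤ) - ((ℓ' - 1 : ℕ) : ℤ)) + a := by
            rw [hcast, hn]; ring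
          rw [hidx]
          exact mul_le_mul_of_nonneg_left (hx_le (ℓ' - 1) h1' hℓρ) (le_of_lt hbj)
    have hsum_pos : 0 < ∑ j ∈ Finset.Icc 1 k, B j * x (n - (j : ℤ)) := by
      apply Finset.sum_pos'
      · intro j _; exact mul_nonneg (hB j) (le_of_lt (hpos _))
      · exact ⟨j0, hj0, mul_pos hBj0 (hpos _)⟩
    have hDpos : 0 < A + ∑ j ∈ Finset.Icc 1 k, B j * x (n - (j : ℤ)) := by linarith
    rw [hrec n hn1, le_div_iff₀ hDpos]
    have key : (α / (Y a m * S)) * (A + S * Y a m) = α + A * (α / (Y a m * S)) := by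
      field_simp
      ring
    have h2 : (α / (Y a m * S)) * (A + ∑ j ∈ Finset.Icc 1 k, B j * x (n - (j : ℤ)))
        ≤ (α / (Y a m * S)) * (A + S * Y a m) := by
      apply mul_le_mul_of_nonneg_left _ hquot_nonneg
      linarith
    linarith
  -- Now conclude
  rw [hY a (m + 1)]
  apply csSup_le
  · exact ⟨_, Set.mem_union_right _ rfl⟩
  intro y hy
  rcases hy with (⟨ℓ, hℓ, rfl⟩ | ⟨ℓ, hℓ, rfl⟩) | hy
  · -- first family at m+1
    dsimp only
    rw [Set.mem_Icc] at hℓ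
    rcases Nat.eq_or_lt_of_le hℓ.1 with h1 | h1
    · have hidx : 2 * (g : ℤ) * (((m + 1 : ℕ) : ℤ) - (ℓ : ℤ)) + a
          = 2 * (g : ℤ) * (m : ℤ) + a := by
        have : (ℓ : ℤ) = 1 := by omega
        rw [this]; push_cast; ring
      rw [hidx]; exact claim1
    · have hℓ1 : 1 ≤ ℓ - 1 := by omega
      have hℓρ : ℓ - 1 ≤ ρ := by omega
      have hidx : 2 * (g : ℤ) * (((m + 1 : ℕ) : ℤ) - (ℓ : ℤ)) + a
          = 2 * (g : ℤ) * ((m : ℤ) - ((ℓ - 1 : ℕ) : ℤ)) + a := by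
        have h' : ((ℓ : ℤ)) = ((ℓ - 1 : ℕ) : ℤ) + 1 := by omega
        rw [h']; push_cast; ring
      rw [hidx]; exact hx_le (ℓ - 1) hℓ1 hℓρ
  · -- second family at m+1
    dsimp only
    rw [Set.mem_Icc] at hℓ
    have hℓρ : ℓ - 1 ≤ ρ := by omega
    have hidx : 2 * (g : ℤ) * (((m + 1 : ℕ) : ℤ) - (ℓ : ℤ)) + a - (g : ℤ)
        = 2 * (g : ℤ) * ((m : ℤ) - ((ℓ - 1 : ℕ) : ℤ)) + a - (g : ℤ) := by
      have h' : ((ℓ : ℤ)) = ((ℓ - 1 : ℕ) : ℤ) + 1 := by omega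
      rw [h']; push_cast; ring
    rw [hidx]; exact hq_le (ℓ - 1) hℓρ
  · -- new singleton
    simp only [Set.mem_singleton_iff] at hy
    subst hy
    have hidx : 2 * (g : ℤ) * ((m + 1 : ℕ) : ℤ) + a - (g : ℤ)
        = 2 * (g : ℤ) * ((m : ℤ) + 1) + a - (g : ℤ) := by push_cast; ring
    rw [hidx]
    set z := x (2 * (g : ℤ) * ((m : ℤ) + 1) + a - (g : ℤ)) with hz
    have hzpos : 0 < z := hpos _
    have h := claim2
    rw [div_le_iff₀ (mul_pos hYpos hBsum)] at h
    rw [div_le_iff₀ (mul_pos hzpos hBsum)]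
    nlinarith
end

section
/- Every positive solution of x_n = (α + Σ_{i=1}^k β_i x_{n-i})/(A + Σ_{j=1}^k B_j x_{n-j}) with α > 0, ΣB_j > 0, A = Σβ_i, 2g | i for all i ∈ I_β and 2g | (j+g) for all j ∈ I_B (g = gcd(I_β ∪ I_B)) converges to a periodic solution of period 2g; i.e., for each residue a mod 2g the subsequence (x_{2gm+a})_m converges. -/
open Filter Topology

lemma finset_gcd_bezout (F : Finset ℕ) :
    ∃ f : ℕ → ℤ, ((F.gcd id : ℕ) : ℤ) = ∑ u ∈ F, f u * (u : ℤ) := by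
  classical
  induction F using Finset.induction with
  | empty => exact ⟨fun _ => 0, by simp⟩
  | @insert b F' hb ih =>
    obtain ⟨f, hf⟩ := ih
    set d : ℕ := F'.gcd id with hd
    refine ⟨fun u => if u = b then Nat.gcdA b d else Nat.gcdB b d * f u, ?_⟩
    rw [Finset.gcd_insert, Finset.sum_insert hb]
    have h1 : ∀ u ∈ F', (if u = b then Nat.gcdA b d else Nat.gcdB b d * f u) * (u:ℤ)
        = Nat.gcdB b d * (f u * u) := by
      intro u hu
      have : u ≠ b := by rintro rfl; exact hb hu
      simp [this, mul_assoc]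
    rw [Finset.sum_congr rfl h1, ← Finset.mul_sum, ← hf,
      show (fun u => if u = b then Nat.gcdA b d else Nat.gcdB b d * f u) b = Nat.gcdA b d from by simp]
    have h2 : gcd (id b) d = Nat.gcd b d := rfl
    rw [h2, Nat.gcd_eq_gcd_ab b d]; ring

lemma coverage (F : Finset ℕ) (hne : F.Nonempty) (hpos : ∀ u ∈ F, 0 < u) :
    ∃ K : ℕ, ∀ n : ℕ, K ≤ n → F.gcd id ∣ n → n ∈ AddSubmonoid.closure (F : Set ℕ) := by
  classical
  obtain ⟨a0, ha0⟩ := hne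
  have ha0pos : 0 < a0 := hpos a0 ha0
  set d : ℕ := F.gcd id with hd
  have hdd : d ∣ a0 := Finset.gcd_dvd ha0
  have hdpos : 0 < d := Nat.pos_of_ne_zero (by
    intro h0; rw [h0, zero_dvd_iff] at hdd; omega)
  obtain ⟨f, hf⟩ := finset_gcd_bezout F
  set m : ℕ → ℕ := fun ρ => ∑ u ∈ F, ((((ρ / d : ℕ) : ℤ) * f u) % (a0:ℤ)).toNat * u with hm
  have hmmem : ∀ ρ, m ρ ∈ AddSubmonoid.closure (F : Set ℕ) := by
    intro ρ
    refine AddSubmonoid.sum_mem _ (fun u hu => ?_)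
    have hu' : u ∈ AddSubmonoid.closure (F : Set ℕ) := AddSubmonoid.subset_closure hu
    simpa [nsmul_eq_mul] using nsmul_mem hu' ((((ρ / d : ℕ) : ℤ) * f u) % (a0:ℤ)).toNat
  have ha0ne : (a0:ℤ) ≠ 0 := by exact_mod_cast ha0pos.ne'
  have hmcong : ∀ ρ : ℕ, d ∣ ρ → ((a0:ℤ)) ∣ ((m ρ : ℤ) - (ρ:ℤ)) := by
    intro ρ hρ
    have hcast : ((m ρ : ℤ)) = ∑ u ∈ F, ((((ρ / d : ℕ) : ℤ) * f u) % (a0:ℤ)) * (u:ℤ) := by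
      rw [hm]; push_cast
      refine Finset.sum_congr rfl fun u hu => ?_
      rw [Int.toNat_of_nonneg (Int.emod_nonneg _ ha0ne)]
    have hsum : ((ρ:ℤ)) = ∑ u ∈ F, ((((ρ / d : ℕ) : ℤ)) * f u) * (u:ℤ) := by
      have h3 : (∑ u ∈ F, ((((ρ / d : ℕ):ℤ)) * f u) * (u:ℤ)) = ((ρ/d : ℕ):ℤ) * ∑ u ∈ F, f u * u := by
        rw [Finset.mul_sum]; exact Finset.sum_congr rfl fun u hu => by ring
      rw [h3, ← hf, ← Nat.cast_mul, Nat.div_mul_cancel hρ]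
    rw [hcast, hsum, ← Finset.sum_sub_distrib]
    refine Finset.dvd_sum (fun u hu => ?_)
    rw [← sub_mul]
    exact Dvd.dvd.mul_right Int.dvd_emod_sub_self _
  refine ⟨(Finset.range a0).sup m, fun n hn hdvd => ?_⟩
  set ρ := n % a0 with hρdef
  have hρlt : ρ < a0 := Nat.mod_lt _ ha0pos
  have hdρ : d ∣ ρ := (Nat.dvd_mod_iff hdd).mpr hdvd
  have hmρ : m ρ ≤ n := le_trans (Finset.le_sup (Finset.mem_range.mpr hρlt)) hn
  have h1 : (a0:ℤ) ∣ (n:ℤ) - ρ := by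
    have h6 : a0 ∣ n - ρ := Nat.dvd_sub_mod n
    have h7 : ρ ≤ n := Nat.mod_le n a0
    have := Int.natCast_dvd_natCast.mpr h6
    rwa [Nat.cast_sub h7] at this
  have h2 : (a0:ℤ) ∣ (n:ℤ) - m ρ := by
    have h8 := (hmcong ρ hdρ)
    have h4 : (n:ℤ) - m ρ = ((n:ℤ) - ρ) - ((m ρ:ℤ) - ρ) := by ring
    rw [h4]; exact dvd_sub h1 h8
  obtain ⟨t, ht⟩ := h2
  have htnn : 0 ≤ t := by
    nlinarith [ht, (by exact_mod_cast hmρ : (m ρ:ℤ) ≤ (n:ℤ)), (by exact_mod_cast ha0pos : (0:ℤ) < a0)]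
  have hn' : n = m ρ + t.toNat * a0 := by
    have h5 : (n:ℤ) = m ρ + (t.toNat:ℤ) * a0 := by rw [Int.toNat_of_nonneg htnn]; linarith [ht]
    exact_mod_cast h5
  rw [hn']
  exact AddSubmonoid.add_mem _ (hmmem ρ)
    (by simpa [nsmul_eq_mul] using nsmul_mem (AddSubmonoid.subset_closure ha0 : a0 ∈ AddSubmonoid.closure (F : Set ℕ)) t.toNat)

lemma limsol (g : ℕ) (m0 M0 : ℝ) (hm : m0 ≤ M0) (x : ℤ → ℝ) (ψ : ℕ → ℤ)
    (Hbd : ∀ s : ℤ, ((2*(g:ℤ)) ∣ s ∨ (2*(g:ℤ)) ∣ (s - g)) →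
      ∀ᶠ t in atTop, x (ψ t + s) ∈ Set.Icc m0 M0) :
    ∃ φ : ℕ → ℕ, StrictMono φ ∧ ∃ ω : ℤ → ℝ, (∀ s, ω s ∈ Set.Icc m0 M0) ∧
      ∀ s : ℤ, ((2*(g:ℤ)) ∣ s ∨ (2*(g:ℤ)) ∣ (s - g)) →
        Tendsto (fun t => x (ψ (φ t) + s)) atTop (𝓝 (ω s)) := by
  set y : ℕ → (ℤ → ℝ) := fun t s => max m0 (min M0 (x (ψ t + s))) with hy
  have hyK : ∀ t, y t ∈ Set.pi Set.univ (fun _ : ℤ => Set.Icc m0 M0) := by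
    intro t s _
    exact ⟨le_max_left _ _, max_le hm (min_le_left _ _)⟩
  obtain ⟨ω, hωK, φ, hφ, hconv⟩ :=
    ((isCompact_univ_pi (fun _ : ℤ => isCompact_Icc)).isSeqCompact) hyK
  have hpt := tendsto_pi_nhds.mp hconv
  refine ⟨φ, hφ, ω, fun s => hωK s (Set.mem_univ s), fun s hs => ?_⟩
  have h1 : Tendsto (fun t => y (φ t) s) atTop (𝓝 (ω s)) := hpt s
  have h2 : ∀ᶠ t in atTop, x (ψ (φ t) + s) = y (φ t) s := by
    filter_upwards [hφ.tendsto_atTop.eventually (Hbd s hs)] with t ht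
    simp only [hy]
    rw [min_eq_right ht.2, max_eq_right ht.1]
  exact Filter.Tendsto.congr' (Filter.EventuallyEq.symm h2) h1

lemma exists_extraction (v : ℤ → ℝ) (L : ℝ)
    (hfreq : ∀ ε : ℝ, 0 < ε → ∀ N : ℤ, ∃ n : ℤ, N ≤ n ∧ |v n - L| < ε) :
    ∃ ψ0 : ℕ → ℤ, Tendsto ψ0 atTop atTop ∧ Tendsto (fun t => v (ψ0 t)) atTop (𝓝 L) := by
  have hfreq' : ∀ (t : ℕ) (N : ℤ), ∃ n : ℤ, N ≤ n ∧ |v n - L| < 1/((t:ℝ)+1) :=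
    fun t N => hfreq (1/((t:ℝ)+1)) (by positivity) N
  choose n hn1 hn2 using hfreq'
  let ψ0 : ℕ → ℤ := fun t => Nat.rec (n 0 0) (fun t prev => n (t+1) (prev + 1)) t
  have hstep : ∀ t : ℕ, ψ0 t + 1 ≤ ψ0 (t+1) := fun t => hn1 (t+1) (ψ0 t + 1)
  have hmono : ∀ t : ℕ, ψ0 0 + t ≤ ψ0 t := by
    intro t; induction t with
    | zero => simp
    | succ t ih => have := hstep t; push_cast; push_cast at ih; omega
  have htend : Tendsto ψ0 atTop atTop := by
    apply tendsto_atTop_mono hmono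
    apply tendsto_atTop_add_const_left
    exact tendsto_natCast_atTop_atTop
  refine ⟨ψ0, htend, ?_⟩
  have hbd : ∀ t : ℕ, |v (ψ0 t) - L| < 1/((t:ℝ)+1) := by
    intro t
    cases t with
    | zero => exact hn2 0 0
    | succ t => exact hn2 (t+1) (ψ0 t + 1)
  rw [Metric.tendsto_atTop]
  intro ε hε
  obtain ⟨N, hN⟩ := exists_nat_one_div_lt hε
  refine ⟨N, fun t ht => ?_⟩
  rw [Real.dist_eq]
  calc |v (ψ0 t) - L| < 1/((t:ℝ)+1) := hbd t
    _ ≤ 1/((N:ℝ)+1) := by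
        apply div_le_div_of_nonneg_left (by norm_num) (by positivity)
        have : (N:ℝ) ≤ t := Nat.cast_le.mpr ht
        linarith
    _ < ε := hN

lemma sublim_bounds (v : ℤ → ℝ) (m0 M0 : ℝ) (hbdd : ∀ᶠ n in atTop, v n ∈ Set.Icc m0 M0)
    (q : ℕ → ℤ) (hq : Tendsto q atTop atTop) (L : ℝ)
    (hL : Tendsto (fun t => v (q t)) atTop (𝓝 L)) :
    liminf v atTop ≤ L ∧ L ≤ limsup v atTop := by
  have hb1 : IsBoundedUnder (· ≤ ·) (atTop : Filter ℤ) v :=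
    ⟨M0, by filter_upwards [hbdd] with n hn; exact hn.2⟩
  have hb2 : IsBoundedUnder (· ≥ ·) (atTop : Filter ℤ) v :=
    ⟨m0, by filter_upwards [hbdd] with n hn; exact hn.1⟩
  constructor
  · by_contra h
    push_neg at h
    set c := (L + liminf v atTop)/2 with hc
    have h1 : c < liminf v atTop := by rw [hc]; linarith
    have h2 : ∀ᶠ n in atTop, c < v n := eventually_lt_of_lt_liminf h1 hb2
    have h3 : ∀ᶠ t in atTop, c < v (q t) := hq.eventually h2
    have : c ≤ L := ge_of_tendsto hL (h3.mono fun t ht => ht.le)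
    rw [hc] at this; linarith
  · by_contra h
    push_neg at h
    set c := (L + limsup v atTop)/2 with hc
    have h1 : limsup v atTop < c := by rw [hc]; linarith
    have h2 : ∀ᶠ n in atTop, v n < c := eventually_lt_of_limsup_lt h1 hb1
    have h3 : ∀ᶠ t in atTop, v (q t) < c := hq.eventually h2
    have : L ≤ c := le_of_tendsto hL (h3.mono fun t ht => ht.le)
    rw [hc] at this; linarith

lemma affine_tendsto (g : ℕ) (hg : 1 ≤ g) (a : ℤ) (ψ0 : ℕ → ℤ) (h : Tendsto ψ0 atTop atTop) :
    Tendsto (fun t => 2*(g:ℤ)*ψ0 t + a) atTop atTop := by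
  rw [tendsto_atTop] at h ⊢
  intro b
  filter_upwards [h (max (b - a) 0)] with t ht
  have h1 : (1:ℤ) ≤ (g:ℤ) := by exact_mod_cast hg
  have h2 : 0 ≤ ψ0 t := le_trans (le_max_right _ _) ht
  have h3 : b - a ≤ ψ0 t := le_trans (le_max_left _ _) ht
  nlinarith
lemma inv_rect
    (k : ℕ) (α A : ℝ) (β B : ℕ → ℝ)
    (hα : 0 < α) (hβ : ∀ i, 0 ≤ β i) (hB : ∀ j, 0 ≤ B j)
    (hAβ : A = ∑ i ∈ Finset.Icc 1 k, β i)
    (g : ℕ)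
    (hdivβ : ∀ i ∈ (Finset.Icc 1 k).filter (fun i => 0 < β i), 2 * g ∣ i)
    (hdivB : ∀ j ∈ (Finset.Icc 1 k).filter (fun j => 0 < B j), 2 * g ∣ j + g)
    (x : ℤ → ℝ) (hpos : ∀ n : ℤ, 0 < x n)
    (hrec : ∀ n : ℤ, 1 ≤ n → x n =
      (α + ∑ i ∈ Finset.Icc 1 k, β i * x (n - (i : ℤ))) /
      (A + ∑ j ∈ Finset.Icc 1 k, B j * x (n - (j : ℤ))))
    (S : ℝ) (hS : S = ∑ j ∈ Finset.Icc 1 k, B j) (hSpos : 0 < S)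
    (a : ℤ) (p P q Q : ℝ) (hp : 0 < p) (hq : 0 < q)
    (hqP : S * (q * P) = α) (hpQ : S * (p * Q) = α)
    (n0 : ℤ) (hn0 : 1 ≤ n0)
    (hbase : ∀ s : ℤ, n0 - k ≤ s → s < n0 →
      ((2 * (g:ℤ)) ∣ (s - a) → x s ∈ Set.Icc p P) ∧
      ((2 * (g:ℤ)) ∣ (s - a - g) → x s ∈ Set.Icc q Q)) :
    ∀ n : ℤ, n0 - (k:ℤ) ≤ n →
      ((2 * (g:ℤ)) ∣ (n - a) → x n ∈ Set.Icc p P) ∧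
      ((2 * (g:ℤ)) ∣ (n - a - g) → x n ∈ Set.Icc q Q) := by
  have hA : 0 ≤ A := hAβ ▸ Finset.sum_nonneg (fun i _ => hβ i)
  have hP : 0 < P := by have h := mul_pos hSpos hq; nlinarith [h]
  have hQ : 0 < Q := by have h := mul_pos hSpos hp; nlinarith [h]
  have key : ∀ t : ℕ, ∀ n : ℤ, n0 - (k:ℤ) ≤ n → n < n0 + t →
      ((2 * (g:ℤ)) ∣ (n - a) → x n ∈ Set.Icc p P) ∧
      ((2 * (g:ℤ)) ∣ (n - a - g) → x n ∈ Set.Icc q Q) := by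
    intro t
    induction t with
    | zero => intro n h1 h2; exact hbase n h1 (by omega)
    | succ t ih =>
      intro n h1 h2
      by_cases hlt : n < n0 + t
      · exact ih n h1 hlt
      · have hn : 1 ≤ n := by omega
        have hx := hrec n hn
        -- positivity of denominator
        have hj0 : ∃ j0 ∈ Finset.Icc 1 k, 0 < B j0 := by
          by_contra h
          push_neg at h
          have : S = 0 := by
            rw [hS]; apply Finset.sum_eq_zero; intro j hj; exact le_antisymm (h j hj) (hB j)
          linarith
        obtain ⟨j0, hj0mem, hj0pos⟩ := hj0
        have hdenpos : 0 < A + ∑ j ∈ Finset.Icc 1 k, B j * x (n - (j:ℤ)) := by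
          have h1 : 0 < ∑ j ∈ Finset.Icc 1 k, B j * x (n - (j:ℤ)) := by
            apply Finset.sum_pos' (fun j _ => mul_nonneg (hB j) (hpos _).le)
            exact ⟨j0, hj0mem, mul_pos hj0pos (hpos _)⟩
          linarith
        constructor
        · -- class a
          intro hca
          have hβbd : ∀ i ∈ Finset.Icc 1 k, β i * p ≤ β i * x (n - (i:ℤ)) ∧ β i * x (n - (i:ℤ)) ≤ β i * P := by
            intro i hi
            rcases eq_or_lt_of_le (hβ i) with h0 | h0
            · simp [← h0]
            · have hmem : i ∈ (Finset.Icc 1 k).filter (fun i => 0 < β i) := Finset.mem_filter.mpr ⟨hi, h0⟩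
              have hdvd : (2 * (g:ℤ)) ∣ (i:ℤ) := by
                have := hdivβ i hmem
                exact_mod_cast Int.natCast_dvd_natCast.mpr this
              have hik := Finset.mem_Icc.mp hi
              have hx' := (ih (n - (i:ℤ)) (by omega) (by omega)).1 (by
                have : n - (i:ℤ) - a = (n - a) - (i:ℤ) := by ring
                rw [this]; exact dvd_sub hca hdvd)
              exact ⟨mul_le_mul_of_nonneg_left hx'.1 h0.le, mul_le_mul_of_nonneg_left hx'.2 h0.le⟩
          have hBbd : ∀ j ∈ Finset.Icc 1 k, B j * q ≤ B j * x (n - (j:ℤ)) ∧ B j * x (n - (j:ℤ)) ≤ B j * Q := by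
            intro j hj
            rcases eq_or_lt_of_le (hB j) with h0 | h0
            · simp [← h0]
            · have hmem : j ∈ (Finset.Icc 1 k).filter (fun j => 0 < B j) := Finset.mem_filter.mpr ⟨hj, h0⟩
              have hdvd : (2 * (g:ℤ)) ∣ ((j:ℤ) + g) := by
                have := hdivB j hmem
                exact_mod_cast Int.natCast_dvd_natCast.mpr this
              have hjk := Finset.mem_Icc.mp hj
              have hx' := (ih (n - (j:ℤ)) (by omega) (by omega)).2 (by
                have h5 : n - (j:ℤ) - a - g = (n - a) - ((j:ℤ) + g) := by ring
                rw [h5]; exact dvd_sub hca hdvd)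
              exact ⟨mul_le_mul_of_nonneg_left hx'.1 h0.le, mul_le_mul_of_nonneg_left hx'.2 h0.le⟩
          have hnum_le : α + ∑ i ∈ Finset.Icc 1 k, β i * x (n - (i:ℤ)) ≤ α + A * P := by
            have := Finset.sum_le_sum (fun i hi => (hβbd i hi).2)
            rw [← Finset.sum_mul] at this
            rw [hAβ]; linarith
          have hnum_ge : α + A * p ≤ α + ∑ i ∈ Finset.Icc 1 k, β i * x (n - (i:ℤ)) := by
            have := Finset.sum_le_sum (fun i hi => (hβbd i hi).1)
            rw [← Finset.sum_mul] at this
            rw [hAβ]; linarith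
          have hden_le : A + ∑ j ∈ Finset.Icc 1 k, B j * x (n - (j:ℤ)) ≤ A + S * Q := by
            have := Finset.sum_le_sum (fun j hj => (hBbd j hj).2)
            rw [← Finset.sum_mul] at this
            rw [hS]; linarith
          have hden_ge : A + S * q ≤ A + ∑ j ∈ Finset.Icc 1 k, B j * x (n - (j:ℤ)) := by
            have := Finset.sum_le_sum (fun j hj => (hBbd j hj).1)
            rw [← Finset.sum_mul] at this
            rw [hS]; linarith
          rw [hx]
          constructor
          · rw [le_div_iff₀ hdenpos]
            nlinarith
          · rw [div_le_iff₀ hdenpos]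
            nlinarith
        · -- class b
          intro hcb
          have hβbd : ∀ i ∈ Finset.Icc 1 k, β i * q ≤ β i * x (n - (i:ℤ)) ∧ β i * x (n - (i:ℤ)) ≤ β i * Q := by
            intro i hi
            rcases eq_or_lt_of_le (hβ i) with h0 | h0
            · simp [← h0]
            · have hmem : i ∈ (Finset.Icc 1 k).filter (fun i => 0 < β i) := Finset.mem_filter.mpr ⟨hi, h0⟩
              have hdvd : (2 * (g:ℤ)) ∣ (i:ℤ) := by
                have := hdivβ i hmem
                exact_mod_cast Int.natCast_dvd_natCast.mpr this
              have hik := Finset.mem_Icc.mp hi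
              have hx' := (ih (n - (i:ℤ)) (by omega) (by omega)).2 (by
                have h5 : n - (i:ℤ) - a - g = (n - a - g) - (i:ℤ) := by ring
                rw [h5]; exact dvd_sub hcb hdvd)
              exact ⟨mul_le_mul_of_nonneg_left hx'.1 h0.le, mul_le_mul_of_nonneg_left hx'.2 h0.le⟩
          have hBbd : ∀ j ∈ Finset.Icc 1 k, B j * p ≤ B j * x (n - (j:ℤ)) ∧ B j * x (n - (j:ℤ)) ≤ B j * P := by
            intro j hj
            rcases eq_or_lt_of_le (hB j) with h0 | h0
            · simp [← h0]
            · have hmem : j ∈ (Finset.Icc 1 k).filter (fun j => 0 < B j) := Finset.mem_filter.mpr ⟨hj, h0⟩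
              have hdvd : (2 * (g:ℤ)) ∣ ((j:ℤ) + g) := by
                have := hdivB j hmem
                exact_mod_cast Int.natCast_dvd_natCast.mpr this
              have hjk := Finset.mem_Icc.mp hj
              have hx' := (ih (n - (j:ℤ)) (by omega) (by omega)).1 (by
                have h5 : n - (j:ℤ) - a = (n - a - g) - ((j:ℤ) + g) + (2 * g) := by ring
                rw [h5]
                exact dvd_add (dvd_sub hcb hdvd) ⟨1, by ring⟩)
              exact ⟨mul_le_mul_of_nonneg_left hx'.1 h0.le, mul_le_mul_of_nonneg_left hx'.2 h0.le⟩
          have hnum_le : α + ∑ i ∈ Finset.Icc 1 k, β i * x (n - (i:ℤ)) ≤ α + A * Q := by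
            have := Finset.sum_le_sum (fun i hi => (hβbd i hi).2)
            rw [← Finset.sum_mul] at this
            rw [hAβ]; linarith
          have hnum_ge : α + A * q ≤ α + ∑ i ∈ Finset.Icc 1 k, β i * x (n - (i:ℤ)) := by
            have := Finset.sum_le_sum (fun i hi => (hβbd i hi).1)
            rw [← Finset.sum_mul] at this
            rw [hAβ]; linarith
          have hden_le : A + ∑ j ∈ Finset.Icc 1 k, B j * x (n - (j:ℤ)) ≤ A + S * P := by
            have := Finset.sum_le_sum (fun j hj => (hBbd j hj).2)
            rw [← Finset.sum_mul] at this
            rw [hS]; linarith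
          have hden_ge : A + S * p ≤ A + ∑ j ∈ Finset.Icc 1 k, B j * x (n - (j:ℤ)) := by
            have := Finset.sum_le_sum (fun j hj => (hBbd j hj).1)
            rw [← Finset.sum_mul] at this
            rw [hS]; linarith
          rw [hx]
          constructor
          · rw [le_div_iff₀ hdenpos]
            nlinarith
          · rw [div_le_iff₀ hdenpos]
            nlinarith
  intro n h1
  rcases Int.lt_or_le n n0 with h | h
  · exact hbase n h1 h |> fun hb => hb
  · have : n < n0 + ((n - n0).toNat + 1) := by
      have := Int.toNat_of_nonneg (by omega : (0:ℤ) ≤ n - n0)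
      omega
    exact key _ n h1 this

lemma omega_rec
    (k : ℕ) (α A : ℝ) (β B : ℕ → ℝ)
    (hβ : ∀ i, 0 ≤ β i) (hB : ∀ j, 0 ≤ B j)
    (g : ℕ)
    (hdivβ : ∀ i ∈ (Finset.Icc 1 k).filter (fun i => 0 < β i), 2 * g ∣ i)
    (hdivB : ∀ j ∈ (Finset.Icc 1 k).filter (fun j => 0 < B j), 2 * g ∣ j + g)
    (x : ℤ → ℝ)
    (hrec : ∀ n : ℤ, 1 ≤ n → x n =
      (α + ∑ i ∈ Finset.Icc 1 k, β i * x (n - (i : ℤ))) /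
      (A + ∑ j ∈ Finset.Icc 1 k, B j * x (n - (j : ℤ))))
    (j0 : ℕ) (hj0mem : j0 ∈ Finset.Icc 1 k) (hj0pos : 0 < B j0)
    (hA : 0 ≤ A)
    (m0 M0 : ℝ) (hm0pos : 0 < m0)
    (Ψ : ℕ → ℤ) (hΨ : Tendsto Ψ atTop atTop)
    (ω : ℤ → ℝ) (hωbd : ∀ s, ω s ∈ Set.Icc m0 M0)
    (hωconv : ∀ s : ℤ, ((2*(g:ℤ)) ∣ s ∨ (2*(g:ℤ)) ∣ (s - g)) →
      Tendsto (fun t => x (Ψ t + s)) atTop (𝓝 (ω s))) :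
    ∀ s : ℤ, ((2*(g:ℤ)) ∣ s ∨ (2*(g:ℤ)) ∣ (s - g)) →
      ω s * (A + ∑ j ∈ Finset.Icc 1 k, B j * ω (s - (j:ℤ)))
        = α + ∑ i ∈ Finset.Icc 1 k, β i * ω (s - (i:ℤ)) := by
  intro s hs
  have hclsi : ∀ i ∈ Finset.Icc 1 k, 0 < β i →
      ((2*(g:ℤ)) ∣ (s - (i:ℤ)) ∨ (2*(g:ℤ)) ∣ (s - (i:ℤ) - g)) := by
    intro i hi hipos
    have hdvd : (2*(g:ℤ)) ∣ (i:ℤ) := by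
      have := hdivβ i (Finset.mem_filter.mpr ⟨hi, hipos⟩)
      exact_mod_cast Int.natCast_dvd_natCast.mpr this
    rcases hs with h | h
    · exact Or.inl (dvd_sub h hdvd)
    · right
      have h5 : s - (i:ℤ) - g = (s - g) - (i:ℤ) := by ring
      rw [h5]; exact dvd_sub h hdvd
  have hclsj : ∀ j ∈ Finset.Icc 1 k, 0 < B j →
      ((2*(g:ℤ)) ∣ (s - (j:ℤ)) ∨ (2*(g:ℤ)) ∣ (s - (j:ℤ) - g)) := by
    intro j hj hjpos
    have hdvd : (2*(g:ℤ)) ∣ ((j:ℤ) + g) := by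
      have := hdivB j (Finset.mem_filter.mpr ⟨hj, hjpos⟩)
      exact_mod_cast Int.natCast_dvd_natCast.mpr this
    rcases hs with h | h
    · right
      have h5 : s - (j:ℤ) - g = s - ((j:ℤ) + g) := by ring
      rw [h5]; exact dvd_sub h hdvd
    · left
      have h5 : s - (j:ℤ) = (s - g) - ((j:ℤ) + g) + 2*(g:ℤ)*1 := by ring
      rw [h5]; exact dvd_add (dvd_sub h hdvd) ⟨1, by ring⟩
  have hnum : Tendsto (fun t => α + ∑ i ∈ Finset.Icc 1 k, β i * x (Ψ t + s - (i:ℤ))) atTop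
      (𝓝 (α + ∑ i ∈ Finset.Icc 1 k, β i * ω (s - (i:ℤ)))) := by
    apply Tendsto.const_add
    apply tendsto_finset_sum
    intro i hi
    rcases eq_or_lt_of_le (hβ i) with h0 | h0
    · simp only [← h0, zero_mul]; exact tendsto_const_nhds
    · have h1 := hωconv (s - (i:ℤ)) (hclsi i hi h0)
      have h2 : (fun t => x (Ψ t + (s - (i:ℤ)))) = fun t => x (Ψ t + s - (i:ℤ)) := by
        funext t; congr 1; ring
      rw [h2] at h1
      exact h1.const_mul _
  have hden : Tendsto (fun t => A + ∑ j ∈ Finset.Icc 1 k, B j * x (Ψ t + s - (j:ℤ))) atTop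
      (𝓝 (A + ∑ j ∈ Finset.Icc 1 k, B j * ω (s - (j:ℤ)))) := by
    apply Tendsto.const_add
    apply tendsto_finset_sum
    intro j hj
    rcases eq_or_lt_of_le (hB j) with h0 | h0
    · simp only [← h0, zero_mul]; exact tendsto_const_nhds
    · have h1 := hωconv (s - (j:ℤ)) (hclsj j hj h0)
      have h2 : (fun t => x (Ψ t + (s - (j:ℤ)))) = fun t => x (Ψ t + s - (j:ℤ)) := by
        funext t; congr 1; ring
      rw [h2] at h1
      exact h1.const_mul _
  have hDpos : 0 < A + ∑ j ∈ Finset.Icc 1 k, B j * ω (s - (j:ℤ)) := by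
    have h1 : B j0 * m0 ≤ B j0 * ω (s - (j0:ℤ)) :=
      mul_le_mul_of_nonneg_left (hωbd _).1 hj0pos.le
    have h2 : B j0 * ω (s - (j0:ℤ)) ≤ ∑ j ∈ Finset.Icc 1 k, B j * ω (s - (j:ℤ)) :=
      Finset.single_le_sum (f := fun j => B j * ω (s - (j:ℤ)))
        (fun j hj => mul_nonneg (hB j) (le_trans hm0pos.le (hωbd (s - (j:ℤ))).1)) hj0mem
    nlinarith [mul_pos hj0pos hm0pos]
  have hx : ∀ᶠ t in atTop, x (Ψ t + s) =
      (α + ∑ i ∈ Finset.Icc 1 k, β i * x (Ψ t + s - (i:ℤ))) /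
      (A + ∑ j ∈ Finset.Icc 1 k, B j * x (Ψ t + s - (j:ℤ))) := by
    filter_upwards [hΨ.eventually (eventually_ge_atTop (1 - s))] with t ht
    exact hrec (Ψ t + s) (by linarith)
  have hlhs : Tendsto (fun t => x (Ψ t + s)) atTop (𝓝 (ω s)) := hωconv s hs
  have hrhs : Tendsto (fun t =>
      (α + ∑ i ∈ Finset.Icc 1 k, β i * x (Ψ t + s - (i:ℤ))) /
      (A + ∑ j ∈ Finset.Icc 1 k, B j * x (Ψ t + s - (j:ℤ)))) atTop
      (𝓝 ((α + ∑ i ∈ Finset.Icc 1 k, β i * ω (s - (i:ℤ))) /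
        (A + ∑ j ∈ Finset.Icc 1 k, B j * ω (s - (j:ℤ))))) :=
    hnum.div hden hDpos.ne'
  have heq := tendsto_nhds_unique (hlhs.congr' hx) hrhs
  rw [heq, div_mul_cancel₀]
  exact hDpos.ne'

set_option maxHeartbeats 4000000 in
/-- Every positive solution of `xₙ = (α + ∑ βᵢ x_{n-i})/(A + ∑ Bⱼ x_{n-j})` with
`α > 0`, `∑ Bⱼ > 0`, `A = ∑ βᵢ`, `2g ∣ i` for `i ∈ I_β`, `2g ∣ j + g` for
`j ∈ I_B` (`g = gcd (I_β ∪ I_B)`) converges to a periodic solution of period `2g`: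
each subsequence `(x_{2gm+a})_m` converges. -/
theorem converges_to_periodic_two_gcd (k : ℕ) (hk : 1 ≤ k) (α A : ℝ) (β B : ℕ → ℝ)
    (hα : 0 < α) (hβ : ∀ i, 0 ≤ β i) (hB : ∀ j, 0 ≤ B j)
    (hBsum : 0 < ∑ j ∈ Finset.Icc 1 k, B j)
    (hAβ : A = ∑ i ∈ Finset.Icc 1 k, β i)
    (g : ℕ)
    (hg : g = ((Finset.Icc 1 k).filter (fun i => 0 < β i ∨ 0 < B i)).gcd id)
    (hdivβ : ∀ i ∈ (Finset.Icc 1 k).filter (fun i => 0 < β i), 2 * g ∣ i)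
    (hdivB : ∀ j ∈ (Finset.Icc 1 k).filter (fun j => 0 < B j), 2 * g ∣ j + g)
    (x : ℤ → ℝ) (hpos : ∀ n : ℤ, 0 < x n)
    (hrec : ∀ n : ℤ, 1 ≤ n → x n =
      (α + ∑ i ∈ Finset.Icc 1 k, β i * x (n - (i : ℤ))) /
      (A + ∑ j ∈ Finset.Icc 1 k, B j * x (n - (j : ℤ)))) :
    ∀ a : ℤ, ∃ L : ℝ,
      Tendsto (fun m : ℕ => x (2 * (g : ℤ) * (m : ℤ) + a)) atTop (𝓝 L) := by
  intro a
  classical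
  -- ## basic constants
  obtain ⟨j0, hj0mem, hj0pos⟩ : ∃ j0 ∈ Finset.Icc 1 k, 0 < B j0 := by
    by_contra h; push_neg at h
    have : ∑ j ∈ Finset.Icc 1 k, B j = 0 :=
      Finset.sum_eq_zero fun j hj => le_antisymm (h j hj) (hB j)
    linarith
  have hj0F : j0 ∈ (Finset.Icc 1 k).filter (fun i => 0 < β i ∨ 0 < B i) :=
    Finset.mem_filter.mpr ⟨hj0mem, Or.inr hj0pos⟩
  have hg1 : 1 ≤ g := by
    rcases Nat.eq_zero_or_pos g with h0 | h; swap
    · exact h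
    exfalso
    have h1 : ((Finset.Icc 1 k).filter (fun i => 0 < β i ∨ 0 < B i)).gcd id ∣ j0 :=
      Finset.gcd_dvd hj0F
    rw [← hg, h0, zero_dvd_iff] at h1
    have := Finset.mem_Icc.mp hj0mem
    omega
  have hgZ : (1:ℤ) ≤ (g:ℤ) := by exact_mod_cast hg1
  have hgnd : ¬ (2*(g:ℤ)) ∣ (g:ℤ) := by
    rintro ⟨e, he⟩
    rcases le_or_gt e 0 with h | h
    · nlinarith
    · have h1 : (1:ℤ) ≤ e := h
      nlinarith
  set S := ∑ j ∈ Finset.Icc 1 k, B j with hSdef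
  have hSpos : 0 < S := hBsum
  set c := α / S with hc
  have hcpos : 0 < c := div_pos hα hSpos
  have hSc : S * c = α := by rw [hc]; field_simp
  have hA : 0 ≤ A := hAβ ▸ Finset.sum_nonneg fun i _ => hβ i
  -- ## global bounds
  have hIcc : (Finset.Icc (1:ℤ) (k:ℤ)).Nonempty := by
    apply Finset.nonempty_Icc.mpr
    exact_mod_cast hk
  set m0 := (Finset.Icc (1:ℤ) (k:ℤ)).inf' hIcc (fun s => min (x s) (c / x s)) with hm0
  have hm0pos : 0 < m0 := by
    rw [hm0, Finset.lt_inf'_iff]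
    intro s hs
    exact lt_min (hpos s) (div_pos hcpos (hpos s))
  set M0 := c / m0 with hM0
  have hm0M0 : ∀ s ∈ Finset.Icc (1:ℤ) (k:ℤ), x s ∈ Set.Icc m0 M0 := by
    intro s hs
    have h1 : m0 ≤ x s := le_trans (Finset.inf'_le _ hs) (min_le_left _ _)
    have h2 : m0 ≤ c / x s := le_trans (Finset.inf'_le _ hs) (min_le_right _ _)
    refine ⟨h1, ?_⟩
    rw [hM0, le_div_iff₀ hm0pos]
    calc x s * m0 ≤ x s * (c / x s) := mul_le_mul_of_nonneg_left h2 (hpos s).le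
      _ = c := by rw [mul_comm, div_mul_cancel₀ _ (hpos s).ne']
  have hone : (1:ℤ) ∈ Finset.Icc (1:ℤ) (k:ℤ) := Finset.mem_Icc.mpr ⟨le_refl _, by exact_mod_cast hk⟩
  have hm0le : m0 ≤ M0 := by
    rw [hM0, le_div_iff₀ hm0pos]
    have h1 : m0 ≤ x 1 := le_trans (Finset.inf'_le _ hone) (min_le_left _ _)
    have h2 : m0 ≤ c / x 1 := le_trans (Finset.inf'_le _ hone) (min_le_right _ _)
    calc m0 * m0 ≤ x 1 * (c / x 1) := mul_le_mul h1 h2 hm0pos.le (hpos 1).le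
      _ = c := by rw [mul_comm, div_mul_cancel₀ _ (hpos 1).ne']
  have hm0M0' : S * (m0 * M0) = α := by
    rw [hM0, mul_div_cancel₀ _ hm0pos.ne']
    exact hSc
  have GB : ∀ n : ℤ, 1 ≤ n →
      ((2*(g:ℤ)) ∣ (n - a) → x n ∈ Set.Icc m0 M0) ∧
      ((2*(g:ℤ)) ∣ (n - a - g) → x n ∈ Set.Icc m0 M0) := by
    intro n hn
    have hkZ : (1:ℤ) ≤ (k:ℤ) := by exact_mod_cast hk
    have happ := inv_rect k α A β B hα hβ hB hAβ g hdivβ hdivB x hpos hrec S hSdef hSpos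
      a m0 M0 m0 M0 hm0pos hm0pos hm0M0' hm0M0' ((k:ℤ)+1) (by omega)
      (fun s h1 h2 => by
        have hs : s ∈ Finset.Icc (1:ℤ) (k:ℤ) := Finset.mem_Icc.mpr ⟨by omega, by omega⟩
        exact ⟨fun _ => hm0M0 s hs, fun _ => hm0M0 s hs⟩)
    exact happ n (by omega)
  -- ## the two subsequences and their liminf / limsup
  clear_value S c m0 M0
  set v : ℤ → ℝ := fun n => x (2*(g:ℤ)*n + a) with hv
  set w : ℤ → ℝ := fun n => x (2*(g:ℤ)*n + a + g) with hw
  have hclsv : ∀ n : ℤ, (2*(g:ℤ)) ∣ (2*(g:ℤ)*n + a - a) := fun n => ⟨n, by ring⟩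
  have hclsw : ∀ n : ℤ, (2*(g:ℤ)) ∣ (2*(g:ℤ)*n + a + g - a - g) := fun n => ⟨n, by ring⟩
  have hev1 : ∀ᶠ n : ℤ in atTop, 1 ≤ 2*(g:ℤ)*n + a ∧ 1 ≤ 2*(g:ℤ)*n + a + g := by
    filter_upwards [eventually_ge_atTop (|a| + 1)] with n hn
    have h0 : 0 ≤ n := le_trans (by positivity) hn
    have h1 : n ≤ 2*(g:ℤ)*n := by nlinarith
    constructor <;> nlinarith [le_abs_self a, neg_abs_le a]
  have hvbd : ∀ᶠ n : ℤ in atTop, v n ∈ Set.Icc m0 M0 := by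
    filter_upwards [hev1] with n hn
    exact (GB _ hn.1).1 (hclsv n)
  have hwbd : ∀ᶠ n : ℤ in atTop, w n ∈ Set.Icc m0 M0 := by
    filter_upwards [hev1] with n hn
    exact (GB _ hn.2).2 (hclsw n)
  have hvB1 : IsBoundedUnder (· ≤ ·) (atTop : Filter ℤ) v :=
    ⟨M0, by filter_upwards [hvbd] with n h; exact h.2⟩
  have hvB2 : IsBoundedUnder (· ≥ ·) (atTop : Filter ℤ) v :=
    ⟨m0, by filter_upwards [hvbd] with n h; exact h.1⟩
  have hwB1 : IsBoundedUnder (· ≤ ·) (atTop : Filter ℤ) w :=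
    ⟨M0, by filter_upwards [hwbd] with n h; exact h.2⟩
  have hwB2 : IsBoundedUnder (· ≥ ·) (atTop : Filter ℤ) w :=
    ⟨m0, by filter_upwards [hwbd] with n h; exact h.1⟩
  set μ := liminf v atTop with hμdef
  set Λ := limsup w atTop with hΛdef
  have hμlb : m0 ≤ μ := le_liminf_of_le hvB1.isCoboundedUnder_ge
    (by filter_upwards [hvbd] with n h; exact h.1)
  have hΛlb : m0 ≤ Λ := le_trans
    (le_liminf_of_le hwB1.isCoboundedUnder_ge (by filter_upwards [hwbd] with n h; exact h.1))
    (liminf_le_limsup hwB1 hwB2)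
  have hμpos : 0 < μ := lt_of_lt_of_le hm0pos hμlb
  have hΛpos : 0 < Λ := lt_of_lt_of_le hm0pos hΛlb
  clear_value μ Λ
  -- ## limiting solution through μ (class a)
  have hfreqμ : ∀ ε : ℝ, 0 < ε → ∀ N : ℤ, ∃ n : ℤ, N ≤ n ∧ |v n - μ| < ε := by
    intro ε hε N
    have h1 : ∀ᶠ n in atTop, μ - ε < v n := eventually_lt_of_lt_liminf (by linarith) hvB2
    have h2 : ∃ᶠ n in atTop, v n < μ + ε :=
      frequently_lt_of_liminf_lt hvB1.isCoboundedUnder_ge (by linarith)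
    obtain ⟨n, hn1, hn2, hn3⟩ := (h2.and_eventually (h1.and (eventually_ge_atTop N))).exists
    exact ⟨n, hn3, abs_sub_lt_iff.mpr ⟨by linarith, by linarith⟩⟩
  obtain ⟨ψ0, hψ0, hvψ0⟩ := exists_extraction v μ hfreqμ
  set ψ : ℕ → ℤ := fun t => 2*(g:ℤ)*ψ0 t + a with hψ
  have hψtend : Tendsto ψ atTop atTop := affine_tendsto g hg1 a ψ0 hψ0
  have Hbd : ∀ s : ℤ, ((2*(g:ℤ)) ∣ s ∨ (2*(g:ℤ)) ∣ (s - g)) →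
      ∀ᶠ t in atTop, x (ψ t + s) ∈ Set.Icc m0 M0 := by
    intro s hs
    filter_upwards [hψtend.eventually (eventually_ge_atTop (1 - s))] with t ht
    have h1 : 1 ≤ ψ t + s := by linarith
    rcases hs with h | h
    · refine (GB _ h1).1 ?_
      obtain ⟨e, he⟩ := h
      exact ⟨ψ0 t + e, by simp only [hψ]; rw [he]; ring⟩
    · refine (GB _ h1).2 ?_
      obtain ⟨e, he⟩ := h
      refine ⟨ψ0 t + e, ?_⟩
      simp only [hψ]
      have h2 : s = 2*(g:ℤ)*e + g := by linarith [he]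
      rw [h2]; ring
  obtain ⟨φ, hφ, ω, hωbd, hωconv⟩ := limsol g m0 M0 hm0le x ψ Hbd
  have hω0 : ω 0 = μ := by
    have h1 : Tendsto (fun t => x (ψ (φ t) + 0)) atTop (𝓝 (ω 0)) :=
      hωconv 0 (Or.inl (dvd_zero _))
    have h2 : Tendsto (fun t => v (ψ0 (φ t))) atTop (𝓝 μ) := hvψ0.comp hφ.tendsto_atTop
    have h3 : (fun t => x (ψ (φ t) + 0)) = fun t => v (ψ0 (φ t)) := by
      funext t; simp only [hψ, hv]; congr 1; ring
    rw [h3] at h1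
    exact tendsto_nhds_unique h1 h2
  have hωa : ∀ s : ℤ, (2*(g:ℤ)) ∣ s → μ ≤ ω s ∧ ω s ≤ limsup v atTop := by
    intro s hs
    obtain ⟨e, he⟩ := hs
    have hq : Tendsto (fun t => ψ0 (φ t) + e) atTop atTop :=
      tendsto_atTop_add_const_right _ e (hψ0.comp hφ.tendsto_atTop)
    have hconv : Tendsto (fun t => v (ψ0 (φ t) + e)) atTop (𝓝 (ω s)) := by
      have h1 := hωconv s (Or.inl ⟨e, he⟩)
      have h3 : (fun t => x (ψ (φ t) + s)) = fun t => v (ψ0 (φ t) + e) := by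
        funext t; simp only [hψ, hv]; congr 1; rw [he]; ring
      rwa [h3] at h1
    have h4 := sublim_bounds v m0 M0 hvbd _ hq _ hconv
    rw [← hμdef] at h4
    exact h4
  have hωb : ∀ s : ℤ, (2*(g:ℤ)) ∣ (s - g) → liminf w atTop ≤ ω s ∧ ω s ≤ Λ := by
    intro s hs
    obtain ⟨e, he⟩ := hs
    have hq : Tendsto (fun t => ψ0 (φ t) + e) atTop atTop :=
      tendsto_atTop_add_const_right _ e (hψ0.comp hφ.tendsto_atTop)
    have hconv : Tendsto (fun t => w (ψ0 (φ t) + e)) atTop (𝓝 (ω s)) := by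
      have h1 := hωconv s (Or.inr ⟨e, he⟩)
      have h3 : (fun t => x (ψ (φ t) + s)) = fun t => w (ψ0 (φ t) + e) := by
        funext t; simp only [hψ, hw]; congr 1
        have h2 : s = 2*(g:ℤ)*e + g := by linarith [he]
        rw [h2]; ring
      rwa [h3] at h1
    have h4 := sublim_bounds w m0 M0 hwbd _ hq _ hconv
    rw [← hΛdef] at h4
    exact h4
  have hrecω := omega_rec k α A β B hβ hB g hdivβ hdivB x hrec j0 hj0mem hj0pos hA
    m0 M0 hm0pos (fun t => ψ (φ t)) (hψtend.comp hφ.tendsto_atTop) ω hωbd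
    (fun s hs => hωconv s hs)
  -- ## limiting solution through Λ (class b)
  have hfreqΛ : ∀ ε : ℝ, 0 < ε → ∀ N : ℤ, ∃ n : ℤ, N ≤ n ∧ |w n - Λ| < ε := by
    intro ε hε N
    have h1 : ∀ᶠ n in atTop, w n < Λ + ε := eventually_lt_of_limsup_lt (by linarith) hwB1
    have h2 : ∃ᶠ n in atTop, Λ - ε < w n :=
      frequently_lt_of_lt_limsup hwB2.isCoboundedUnder_le (by linarith)
    obtain ⟨n, hn1, hn2, hn3⟩ := (h2.and_eventually (h1.and (eventually_ge_atTop N))).exists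
    exact ⟨n, hn3, abs_sub_lt_iff.mpr ⟨by linarith, by linarith⟩⟩
  obtain ⟨ψ0', hψ0', hwψ0'⟩ := exists_extraction w Λ hfreqΛ
  set ψ' : ℕ → ℤ := fun t => 2*(g:ℤ)*ψ0' t + (a + g) with hψ'
  have hψtend' : Tendsto ψ' atTop atTop := affine_tendsto g hg1 (a + g) ψ0' hψ0'
  have Hbd' : ∀ s : ℤ, ((2*(g:ℤ)) ∣ s ∨ (2*(g:ℤ)) ∣ (s - g)) →
      ∀ᶠ t in atTop, x (ψ' t + s) ∈ Set.Icc m0 M0 := by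
    intro s hs
    filter_upwards [hψtend'.eventually (eventually_ge_atTop (1 - s))] with t ht
    have h1 : 1 ≤ ψ' t + s := by linarith
    rcases hs with h | h
    · refine (GB _ h1).2 ?_
      obtain ⟨e, he⟩ := h
      exact ⟨ψ0' t + e, by simp only [hψ']; rw [he]; ring⟩
    · refine (GB _ h1).1 ?_
      obtain ⟨e, he⟩ := h
      refine ⟨ψ0' t + e + 1, ?_⟩
      simp only [hψ']
      have h2 : s = 2*(g:ℤ)*e + g := by linarith [he]
      rw [h2]; ring
  obtain ⟨φ', hφ', ω', hωbd', hωconv'⟩ := limsol g m0 M0 hm0le x ψ' Hbd'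
  have hω'0 : ω' 0 = Λ := by
    have h1 : Tendsto (fun t => x (ψ' (φ' t) + 0)) atTop (𝓝 (ω' 0)) :=
      hωconv' 0 (Or.inl (dvd_zero _))
    have h2 : Tendsto (fun t => w (ψ0' (φ' t))) atTop (𝓝 Λ) := hwψ0'.comp hφ'.tendsto_atTop
    have h3 : (fun t => x (ψ' (φ' t) + 0)) = fun t => w (ψ0' (φ' t)) := by
      funext t; simp only [hψ', hw]; congr 1; ring
    rw [h3] at h1
    exact tendsto_nhds_unique h1 h2
  have hω'a : ∀ s : ℤ, (2*(g:ℤ)) ∣ s → ω' s ≤ Λ := by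
    intro s hs
    obtain ⟨e, he⟩ := hs
    have hq : Tendsto (fun t => ψ0' (φ' t) + e) atTop atTop :=
      tendsto_atTop_add_const_right _ e (hψ0'.comp hφ'.tendsto_atTop)
    have hconv : Tendsto (fun t => w (ψ0' (φ' t) + e)) atTop (𝓝 (ω' s)) := by
      have h1 := hωconv' s (Or.inl ⟨e, he⟩)
      have h3 : (fun t => x (ψ' (φ' t) + s)) = fun t => w (ψ0' (φ' t) + e) := by
        funext t; simp only [hψ', hw]; congr 1; rw [he]; ring
      rwa [h3] at h1
    have h4 := sublim_bounds w m0 M0 hwbd _ hq _ hconv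
    rw [← hΛdef] at h4
    exact h4.2
  have hω'b : ∀ s : ℤ, (2*(g:ℤ)) ∣ (s - g) → μ ≤ ω' s := by
    intro s hs
    obtain ⟨e, he⟩ := hs
    have hq : Tendsto (fun t => ψ0' (φ' t) + e + 1) atTop atTop :=
      tendsto_atTop_add_const_right _ 1
        (tendsto_atTop_add_const_right _ e (hψ0'.comp hφ'.tendsto_atTop))
    have hconv : Tendsto (fun t => v (ψ0' (φ' t) + e + 1)) atTop (𝓝 (ω' s)) := by
      have h1 := hωconv' s (Or.inr ⟨e, he⟩)
      have h3 : (fun t => x (ψ' (φ' t) + s)) = fun t => v (ψ0' (φ' t) + e + 1) := by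
        funext t; simp only [hψ', hv]; congr 1
        have h2 : s = 2*(g:ℤ)*e + g := by linarith [he]
        rw [h2]; ring
      rwa [h3] at h1
    have h4 := sublim_bounds v m0 M0 hvbd _ hq _ hconv
    rw [← hμdef] at h4
    exact h4.1
  have hrecω' := omega_rec k α A β B hβ hB g hdivβ hdivB x hrec j0 hj0mem hj0pos hA
    m0 M0 hm0pos (fun t => ψ' (φ' t)) (hψtend'.comp hφ'.tendsto_atTop) ω' hωbd'
    (fun s hs => hωconv' s hs)
  -- ## the fundamental relation μΛ = c
  have hdvdiZ : ∀ i ∈ Finset.Icc 1 k, 0 < β i → (2*(g:ℤ)) ∣ (i:ℤ) := by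
    intro i hi hipos
    have := hdivβ i (Finset.mem_filter.mpr ⟨hi, hipos⟩)
    exact_mod_cast Int.natCast_dvd_natCast.mpr this
  have hdvdjZ : ∀ j ∈ Finset.Icc 1 k, 0 < B j → (2*(g:ℤ)) ∣ ((j:ℤ) + g) := by
    intro j hj hjpos
    have := hdivB j (Finset.mem_filter.mpr ⟨hj, hjpos⟩)
    exact_mod_cast Int.natCast_dvd_natCast.mpr this
  have hμΛge : α ≤ S * (μ * Λ) := by
    have h0 := hrecω 0 (Or.inl (dvd_zero _))
    rw [hω0] at h0
    have hN : A * μ ≤ ∑ i ∈ Finset.Icc 1 k, β i * ω (0 - (i:ℤ)) := by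
      rw [hAβ, Finset.sum_mul]
      refine Finset.sum_le_sum fun i hi => ?_
      rcases eq_or_lt_of_le (hβ i) with h0' | h0'
      · rw [← h0']; simp
      · refine mul_le_mul_of_nonneg_left ?_ h0'.le
        refine (hωa _ ?_).1
        have h5 : (0:ℤ) - (i:ℤ) = -(i:ℤ) := by ring
        rw [h5]
        exact dvd_neg.mpr (hdvdiZ i hi h0')
    have hD : ∑ j ∈ Finset.Icc 1 k, B j * ω (0 - (j:ℤ)) ≤ S * Λ := by
      rw [hSdef, Finset.sum_mul]
      refine Finset.sum_le_sum fun j hj => ?_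
      rcases eq_or_lt_of_le (hB j) with h0' | h0'
      · rw [← h0']; simp
      · refine mul_le_mul_of_nonneg_left ?_ h0'.le
        refine (hωb _ ?_).2
        have h5 : (0:ℤ) - (j:ℤ) - g = -((j:ℤ) + g) := by ring
        rw [h5]
        exact dvd_neg.mpr (hdvdjZ j hj h0')
    have hexp : μ * A + μ * (∑ j ∈ Finset.Icc 1 k, B j * ω (0 - (j:ℤ))) =
        α + ∑ i ∈ Finset.Icc 1 k, β i * ω (0 - (i:ℤ)) := by
      rw [← h0]; ring
    have h6 : μ * (∑ j ∈ Finset.Icc 1 k, B j * ω (0 - (j:ℤ))) ≤ μ * (S * Λ) :=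
      mul_le_mul_of_nonneg_left hD hμpos.le
    have h7 : μ * (S * Λ) = S * (μ * Λ) := by ring
    linarith
  have hμΛle : S * (μ * Λ) ≤ α := by
    have h0 := hrecω' 0 (Or.inl (dvd_zero _))
    rw [hω'0] at h0
    have hN : ∑ i ∈ Finset.Icc 1 k, β i * ω' (0 - (i:ℤ)) ≤ A * Λ := by
      rw [hAβ, Finset.sum_mul]
      refine Finset.sum_le_sum fun i hi => ?_
      rcases eq_or_lt_of_le (hβ i) with h0' | h0'
      · rw [← h0']; simp
      · refine mul_le_mul_of_nonneg_left ?_ h0'.le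
        refine hω'a _ ?_
        have h5 : (0:ℤ) - (i:ℤ) = -(i:ℤ) := by ring
        rw [h5]
        exact dvd_neg.mpr (hdvdiZ i hi h0')
    have hD : S * μ ≤ ∑ j ∈ Finset.Icc 1 k, B j * ω' (0 - (j:ℤ)) := by
      rw [hSdef, Finset.sum_mul]
      refine Finset.sum_le_sum fun j hj => ?_
      rcases eq_or_lt_of_le (hB j) with h0' | h0'
      · rw [← h0']; simp
      · refine mul_le_mul_of_nonneg_left ?_ h0'.le
        refine hω'b _ ?_
        have h5 : (0:ℤ) - (j:ℤ) - g = -((j:ℤ) + g) := by ring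
        rw [h5]
        exact dvd_neg.mpr (hdvdjZ j hj h0')
    have hexp : Λ * A + Λ * (∑ j ∈ Finset.Icc 1 k, B j * ω' (0 - (j:ℤ))) =
        α + ∑ i ∈ Finset.Icc 1 k, β i * ω' (0 - (i:ℤ)) := by
      rw [← h0]; ring
    have h6 : Λ * (S * μ) ≤ Λ * (∑ j ∈ Finset.Icc 1 k, B j * ω' (0 - (j:ℤ))) :=
      mul_le_mul_of_nonneg_left hD hΛpos.le
    have h7 : Λ * (S * μ) = S * (μ * Λ) := by ring
    linarith
  have hμΛ : S * (μ * Λ) = α := le_antisymm hμΛle hμΛge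
  have hμΛ' : μ * Λ = c := by
    rw [hc, eq_div_iff hSpos.ne']
    linear_combination hμΛ
  
  -- ## forcing steps
  have stepA : ∀ s : ℤ, (2*(g:ℤ)) ∣ s → ω s = μ →
      (∀ i ∈ Finset.Icc 1 k, 0 < β i → ω (s - (i:ℤ)) = μ) ∧
      (∀ j ∈ Finset.Icc 1 k, 0 < B j → ω (s - (j:ℤ)) = Λ) := by
    intro s hsA hωs
    have hrs := hrecω s (Or.inl hsA)
    rw [hωs] at hrs
    have hNt : ∀ i ∈ Finset.Icc 1 k, β i * μ ≤ β i * ω (s - (i:ℤ)) := by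
      intro i hi
      rcases eq_or_lt_of_le (hβ i) with h0 | h0
      · rw [← h0]; simp
      · exact mul_le_mul_of_nonneg_left (hωa _ (dvd_sub hsA (hdvdiZ i hi h0))).1 h0.le
    have hDt : ∀ j ∈ Finset.Icc 1 k, B j * ω (s - (j:ℤ)) ≤ B j * Λ := by
      intro j hj
      rcases eq_or_lt_of_le (hB j) with h0 | h0
      · rw [← h0]; simp
      · refine mul_le_mul_of_nonneg_left (hωb _ ?_).2 h0.le
        have h5 : s - (j:ℤ) - g = s - ((j:ℤ) + g) := by ring
        rw [h5]; exact dvd_sub hsA (hdvdjZ j hj h0)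
    have hNge : A * μ ≤ ∑ i ∈ Finset.Icc 1 k, β i * ω (s - (i:ℤ)) := by
      rw [hAβ, Finset.sum_mul]; exact Finset.sum_le_sum hNt
    have hDle : ∑ j ∈ Finset.Icc 1 k, B j * ω (s - (j:ℤ)) ≤ S * Λ := by
      rw [hSdef, Finset.sum_mul]; exact Finset.sum_le_sum hDt
    have hexp : μ * A + μ * (∑ j ∈ Finset.Icc 1 k, B j * ω (s - (j:ℤ))) =
        α + ∑ i ∈ Finset.Icc 1 k, β i * ω (s - (i:ℤ)) := by
      rw [← hrs]; ring
    have h6 : μ * (∑ j ∈ Finset.Icc 1 k, B j * ω (s - (j:ℤ))) ≤ μ * (S * Λ) :=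
      mul_le_mul_of_nonneg_left hDle hμpos.le
    have h7 : μ * (S * Λ) = S * (μ * Λ) := by ring
    have hNeq : ∑ i ∈ Finset.Icc 1 k, β i * ω (s - (i:ℤ)) = A * μ := by linarith
    have hDeq : ∑ j ∈ Finset.Icc 1 k, B j * ω (s - (j:ℤ)) = S * Λ := by
      have h8 : μ * (∑ j ∈ Finset.Icc 1 k, B j * ω (s - (j:ℤ))) = μ * (S * Λ) := by linarith
      exact mul_left_cancel₀ hμpos.ne' h8
    constructor
    · intro i hi hipos
      have hsum0 : ∑ i' ∈ Finset.Icc 1 k, (β i' * ω (s - (i':ℤ)) - β i' * μ) = 0 := by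
        rw [Finset.sum_sub_distrib, hNeq, ← Finset.sum_mul, ← hAβ, sub_self]
      have h9 := (Finset.sum_eq_zero_iff_of_nonneg
        (fun i' hi' => sub_nonneg.mpr (hNt i' hi'))).mp hsum0 i hi
      have h10 : β i * ω (s - (i:ℤ)) = β i * μ := by linarith [h9]
      exact mul_left_cancel₀ hipos.ne' h10
    · intro j hj hjpos
      have hsum0 : ∑ j' ∈ Finset.Icc 1 k, (B j' * Λ - B j' * ω (s - (j':ℤ))) = 0 := by
        rw [Finset.sum_sub_distrib, hDeq, ← Finset.sum_mul, ← hSdef, sub_self]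
      have h9 := (Finset.sum_eq_zero_iff_of_nonneg
        (fun j' hj' => sub_nonneg.mpr (hDt j' hj'))).mp hsum0 j hj
      have h10 : B j * ω (s - (j:ℤ)) = B j * Λ := by linarith [h9]
      exact mul_left_cancel₀ hjpos.ne' h10
  have stepB : ∀ s : ℤ, (2*(g:ℤ)) ∣ (s - g) → ω s = Λ →
      (∀ i ∈ Finset.Icc 1 k, 0 < β i → ω (s - (i:ℤ)) = Λ) ∧
      (∀ j ∈ Finset.Icc 1 k, 0 < B j → ω (s - (j:ℤ)) = μ) := by
    intro s hsB hωs
    have hrs := hrecω s (Or.inr hsB)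
    rw [hωs] at hrs
    have hNt : ∀ i ∈ Finset.Icc 1 k, β i * ω (s - (i:ℤ)) ≤ β i * Λ := by
      intro i hi
      rcases eq_or_lt_of_le (hβ i) with h0 | h0
      · rw [← h0]; simp
      · refine mul_le_mul_of_nonneg_left (hωb _ ?_).2 h0.le
        have h5 : s - (i:ℤ) - g = (s - g) - (i:ℤ) := by ring
        rw [h5]; exact dvd_sub hsB (hdvdiZ i hi h0)
    have hDt : ∀ j ∈ Finset.Icc 1 k, B j * μ ≤ B j * ω (s - (j:ℤ)) := by
      intro j hj
      rcases eq_or_lt_of_le (hB j) with h0 | h0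
      · rw [← h0]; simp
      · refine mul_le_mul_of_nonneg_left (hωa _ ?_).1 h0.le
        have h5 : s - (j:ℤ) = (s - g) - ((j:ℤ)+g) + 2*(g:ℤ)*1 := by ring
        rw [h5]; exact dvd_add (dvd_sub hsB (hdvdjZ j hj h0)) ⟨1, by ring⟩
    have hNle : ∑ i ∈ Finset.Icc 1 k, β i * ω (s - (i:ℤ)) ≤ A * Λ := by
      rw [hAβ, Finset.sum_mul]; exact Finset.sum_le_sum hNt
    have hDge : S * μ ≤ ∑ j ∈ Finset.Icc 1 k, B j * ω (s - (j:ℤ)) := by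
      rw [hSdef, Finset.sum_mul]; exact Finset.sum_le_sum hDt
    have hexp : Λ * A + Λ * (∑ j ∈ Finset.Icc 1 k, B j * ω (s - (j:ℤ))) =
        α + ∑ i ∈ Finset.Icc 1 k, β i * ω (s - (i:ℤ)) := by
      rw [← hrs]; ring
    have h6 : Λ * (S * μ) ≤ Λ * (∑ j ∈ Finset.Icc 1 k, B j * ω (s - (j:ℤ))) :=
      mul_le_mul_of_nonneg_left hDge hΛpos.le
    have h7 : Λ * (S * μ) = S * (μ * Λ) := by ring
    have hNeq : ∑ i ∈ Finset.Icc 1 k, β i * ω (s - (i:ℤ)) = A * Λ := by linarith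
    have hDeq : ∑ j ∈ Finset.Icc 1 k, B j * ω (s - (j:ℤ)) = S * μ := by
      have h8 : Λ * (∑ j ∈ Finset.Icc 1 k, B j * ω (s - (j:ℤ))) = Λ * (S * μ) := by linarith
      exact mul_left_cancel₀ hΛpos.ne' h8
    constructor
    · intro i hi hipos
      have hsum0 : ∑ i' ∈ Finset.Icc 1 k, (β i' * Λ - β i' * ω (s - (i':ℤ))) = 0 := by
        rw [Finset.sum_sub_distrib, hNeq, ← Finset.sum_mul, ← hAβ, sub_self]
      have h9 := (Finset.sum_eq_zero_iff_of_nonneg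
        (fun i' hi' => sub_nonneg.mpr (hNt i' hi'))).mp hsum0 i hi
      have h10 : β i * ω (s - (i:ℤ)) = β i * Λ := by linarith [h9]
      exact mul_left_cancel₀ hipos.ne' h10
    · intro j hj hjpos
      have hsum0 : ∑ j' ∈ Finset.Icc 1 k, (B j' * ω (s - (j':ℤ)) - B j' * μ) = 0 := by
        rw [Finset.sum_sub_distrib, hDeq, ← Finset.sum_mul, ← hSdef, sub_self]
      have h9 := (Finset.sum_eq_zero_iff_of_nonneg
        (fun j' hj' => sub_nonneg.mpr (hDt j' hj'))).mp hsum0 j hj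
      have h10 : B j * ω (s - (j:ℤ)) = B j * μ := by linarith [h9]
      exact mul_left_cancel₀ hjpos.ne' h10
  -- ## propagation of forcing along the additive semigroup
  set F := (Finset.Icc 1 k).filter (fun i => 0 < β i ∨ 0 < B i) with hF
  have hcontra : ∀ u : ℤ, (2*(g:ℤ)) ∣ u → (2*(g:ℤ)) ∣ (u + g) → False := by
    intro u h1 h2
    have h3 : (2*(g:ℤ)) ∣ (g:ℤ) := by
      have h4 := dvd_sub h2 h1
      simpa using h4
    exact hgnd h3
  have FORCE : ∀ r : ℕ, r ∈ AddSubmonoid.closure (F : Set ℕ) →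
      ((2*(g:ℤ)) ∣ (r:ℤ) ∨ (2*(g:ℤ)) ∣ ((r:ℤ)+g)) ∧
      (∀ s : ℤ,
        ((2*(g:ℤ)) ∣ s → ω s = μ →
          (((2*(g:ℤ)) ∣ (r:ℤ)) → ω (s - (r:ℤ)) = μ) ∧
          (((2*(g:ℤ)) ∣ ((r:ℤ)+g)) → ω (s - (r:ℤ)) = Λ)) ∧
        ((2*(g:ℤ)) ∣ (s - g) → ω s = Λ →
          (((2*(g:ℤ)) ∣ (r:ℤ)) → ω (s - (r:ℤ)) = Λ) ∧
          (((2*(g:ℤ)) ∣ ((r:ℤ)+g)) → ω (s - (r:ℤ)) = μ))) := by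
    intro r hr
    induction hr using AddSubmonoid.closure_induction with
    | mem u hu =>
      obtain ⟨humem, hucond⟩ := Finset.mem_filter.mp (Finset.mem_coe.mp hu)
      by_cases hβu : 0 < β u
      · have hud : (2*(g:ℤ)) ∣ (u:ℤ) := hdvdiZ u humem hβu
        exact ⟨Or.inl hud, fun s => ⟨fun hsA hωs => ⟨fun _ => (stepA s hsA hωs).1 u humem hβu,
          fun hbad => (hcontra (u:ℤ) hud hbad).elim⟩,
          fun hsB hωs => ⟨fun _ => (stepB s hsB hωs).1 u humem hβu,
          fun hbad => (hcontra (u:ℤ) hud hbad).elim⟩⟩⟩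
      · have hBu : 0 < B u := hucond.resolve_left hβu
        have hud : (2*(g:ℤ)) ∣ ((u:ℤ)+g) := hdvdjZ u humem hBu
        exact ⟨Or.inr hud, fun s => ⟨fun hsA hωs => ⟨fun hbad => (hcontra (u:ℤ) hbad hud).elim,
          fun _ => (stepA s hsA hωs).2 u humem hBu⟩,
          fun hsB hωs => ⟨fun hbad => (hcontra (u:ℤ) hbad hud).elim,
          fun _ => (stepB s hsB hωs).2 u humem hBu⟩⟩⟩
    | zero =>
      refine ⟨Or.inl (by simp), fun s => ⟨fun hsA hωs => ⟨fun _ => by simpa using hωs,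
        fun hbad => absurd (by simpa using hbad) hgnd⟩,
        fun hsB hωs => ⟨fun _ => by simpa using hωs,
        fun hbad => absurd (by simpa using hbad) hgnd⟩⟩⟩
    | add y z hy hz ihy ihz =>
      obtain ⟨ihy1, ihy2⟩ := ihy
      obtain ⟨ihz1, ihz2⟩ := ihz
      have hcast : ((y + z : ℕ) : ℤ) = (y:ℤ) + z := by push_cast; ring
      constructor
      · rcases ihy1 with hy0 | hy1 <;> rcases ihz1 with hz0 | hz1
        · left; rw [hcast]; exact dvd_add hy0 hz0
        · right; rw [hcast]
          have h5 : (y:ℤ) + z + g = y + (z + g) := by ring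
          rw [h5]; exact dvd_add hy0 hz1
        · right; rw [hcast]
          have h5 : (y:ℤ) + z + g = ((y:ℤ) + g) + z := by ring
          rw [h5]; exact dvd_add hy1 hz0
        · left; rw [hcast]
          have h5 : (y:ℤ) + z = (((y:ℤ) + g) + ((z:ℤ) + g)) - 2*(g:ℤ)*1 := by ring
          rw [h5]; exact dvd_sub (dvd_add hy1 hz1) ⟨1, by ring⟩
      · intro s
        constructor
        · intro hsA hωs
          rcases ihy1 with hy0 | hy1
          · have hval : ω (s - (y:ℤ)) = μ := ((ihy2 s).1 hsA hωs).1 hy0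
            have hsA' : (2*(g:ℤ)) ∣ (s - (y:ℤ)) := dvd_sub hsA hy0
            have hrec' := (ihz2 (s - (y:ℤ))).1 hsA' hval
            refine ⟨fun hyz => ?_, fun hyz => ?_⟩
            · rw [hcast] at hyz
              have hz0 : (2*(g:ℤ)) ∣ (z:ℤ) := by
                have h5 : (z:ℤ) = ((y:ℤ) + z) - y := by ring
                rw [h5]; exact dvd_sub hyz hy0
              rw [show s - ((y+z:ℕ):ℤ) = s - (y:ℤ) - z from by rw [hcast]; ring]
              exact hrec'.1 hz0
            · rw [hcast] at hyz
              have hz1 : (2*(g:ℤ)) ∣ ((z:ℤ)+g) := by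
                have h5 : (z:ℤ) + g = ((y:ℤ) + z + g) - y := by ring
                rw [h5]; exact dvd_sub hyz hy0
              rw [show s - ((y+z:ℕ):ℤ) = s - (y:ℤ) - z from by rw [hcast]; ring]
              exact hrec'.2 hz1
          · have hval : ω (s - (y:ℤ)) = Λ := ((ihy2 s).1 hsA hωs).2 hy1
            have hsB' : (2*(g:ℤ)) ∣ (s - (y:ℤ) - g) := by
              have h5 : s - (y:ℤ) - g = s - ((y:ℤ) + g) := by ring
              rw [h5]; exact dvd_sub hsA hy1
            have hrec' := (ihz2 (s - (y:ℤ))).2 hsB' hval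
            refine ⟨fun hyz => ?_, fun hyz => ?_⟩
            · rw [hcast] at hyz
              have hz1 : (2*(g:ℤ)) ∣ ((z:ℤ)+g) := by
                have h5 : (z:ℤ) + g = ((y:ℤ) + z) + 2*(g:ℤ)*1 - ((y:ℤ)+g) := by ring
                rw [h5]; exact dvd_sub (dvd_add hyz ⟨1, by ring⟩) hy1
              rw [show s - ((y+z:ℕ):ℤ) = s - (y:ℤ) - z from by rw [hcast]; ring]
              exact hrec'.2 hz1
            · rw [hcast] at hyz
              have hz0 : (2*(g:ℤ)) ∣ (z:ℤ) := by
                have h5 : (z:ℤ) = ((y:ℤ) + z + g) - ((y:ℤ)+g) := by ring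
                rw [h5]; exact dvd_sub hyz hy1
              rw [show s - ((y+z:ℕ):ℤ) = s - (y:ℤ) - z from by rw [hcast]; ring]
              exact hrec'.1 hz0
        · intro hsB hωs
          rcases ihy1 with hy0 | hy1
          · have hval : ω (s - (y:ℤ)) = Λ := ((ihy2 s).2 hsB hωs).1 hy0
            have hsB' : (2*(g:ℤ)) ∣ (s - (y:ℤ) - g) := by
              have h5 : s - (y:ℤ) - g = (s - g) - (y:ℤ) := by ring
              rw [h5]; exact dvd_sub hsB hy0
            have hrec' := (ihz2 (s - (y:ℤ))).2 hsB' hval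
            refine ⟨fun hyz => ?_, fun hyz => ?_⟩
            · rw [hcast] at hyz
              have hz0 : (2*(g:ℤ)) ∣ (z:ℤ) := by
                have h5 : (z:ℤ) = ((y:ℤ) + z) - y := by ring
                rw [h5]; exact dvd_sub hyz hy0
              rw [show s - ((y+z:ℕ):ℤ) = s - (y:ℤ) - z from by rw [hcast]; ring]
              exact hrec'.1 hz0
            · rw [hcast] at hyz
              have hz1 : (2*(g:ℤ)) ∣ ((z:ℤ)+g) := by
                have h5 : (z:ℤ) + g = ((y:ℤ) + z + g) - y := by ring
                rw [h5]; exact dvd_sub hyz hy0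
              rw [show s - ((y+z:ℕ):ℤ) = s - (y:ℤ) - z from by rw [hcast]; ring]
              exact hrec'.2 hz1
          · have hval : ω (s - (y:ℤ)) = μ := ((ihy2 s).2 hsB hωs).2 hy1
            have hsA' : (2*(g:ℤ)) ∣ (s - (y:ℤ)) := by
              have h5 : s - (y:ℤ) = (s - g) - ((y:ℤ)+g) + 2*(g:ℤ)*1 := by ring
              rw [h5]; exact dvd_add (dvd_sub hsB hy1) ⟨1, by ring⟩
            have hrec' := (ihz2 (s - (y:ℤ))).1 hsA' hval
            refine ⟨fun hyz => ?_, fun hyz => ?_⟩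
            · rw [hcast] at hyz
              have hz1 : (2*(g:ℤ)) ∣ ((z:ℤ)+g) := by
                have h5 : (z:ℤ) + g = ((y:ℤ) + z) + 2*(g:ℤ)*1 - ((y:ℤ)+g) := by ring
                rw [h5]; exact dvd_sub (dvd_add hyz ⟨1, by ring⟩) hy1
              rw [show s - ((y+z:ℕ):ℤ) = s - (y:ℤ) - z from by rw [hcast]; ring]
              exact hrec'.2 hz1
            · rw [hcast] at hyz
              have hz0 : (2*(g:ℤ)) ∣ (z:ℤ) := by
                have h5 : (z:ℤ) = ((y:ℤ) + z + g) - ((y:ℤ)+g) := by ring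
                rw [h5]; exact dvd_sub hyz hy1
              rw [show s - ((y+z:ℕ):ℤ) = s - (y:ℤ) - z from by rw [hcast]; ring]
              exact hrec'.1 hz0
  have hFpos : ∀ u ∈ F, 0 < u := by
    intro u hu
    have h1 := (Finset.mem_filter.mp hu).1
    have h2 := Finset.mem_Icc.mp h1
    omega
  obtain ⟨K, hcov⟩ := coverage F ⟨j0, hj0F⟩ hFpos
  have hgF : F.gcd id = g := hg.symm
  -- ## final argument : limsup v ≤ μ
  have hlimsup_le : limsup v atTop ≤ μ := by
    by_contra hcon
    push_neg at hcon
    set L := limsup v atTop with hL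
    clear_value L
    have hLpos : 0 < L := lt_trans hμpos hcon
    have hLΛc : 0 < L*Λ - c := by
      have h1 : μ * Λ < L * Λ := mul_lt_mul_of_pos_right hcon hΛpos
      linarith [hμΛ']
    set δ := min (Λ/2) ((L*Λ - c)/(2*L)) with hδ
    have hδpos : 0 < δ := lt_min (by linarith) (div_pos hLΛc (by linarith))
    have hδΛ : δ < Λ := lt_of_le_of_lt (min_le_left _ _) (by linarith)
    have h1 : δ ≤ (L*Λ - c)/(2*L) := min_le_right _ _
    clear_value δ
    have hΛδpos : 0 < Λ - δ := by linarith
    have hP'L : c/(Λ - δ) < L := by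
      rw [div_lt_iff₀ hΛδpos]
      have h3 : L * ((L*Λ - c)/(2*L)) = (L*Λ - c)/2 := by
        field_simp
      have h2 : L * δ ≤ (L*Λ - c)/2 := by
        calc L * δ ≤ L * ((L*Λ - c)/(2*L)) := mul_le_mul_of_nonneg_left h1 hLpos.le
          _ = (L*Λ - c)/2 := h3
      have h4 : L*(Λ-δ) = L*Λ - L*δ := by ring
      linarith
    suffices hsuff : L ≤ c/(Λ - δ) by linarith
    set P' := c/(Λ - δ) with hP'
    set p' := c/(Λ + δ) with hp'
    set q' := Λ - δ with hq'
    set Q' := Λ + δ with hQ'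
    clear_value P' p' q' Q'
    have hq'pos : 0 < q' := by rw [hq']; linarith
    have hQ'pos : 0 < Q' := by rw [hQ']; linarith
    have hp'pos : 0 < p' := by rw [hp']; exact div_pos hcpos hQ'pos
    have hq'P' : S * (q' * P') = α := by
      have h9 : q' * P' = c := by
        rw [hP', mul_comm q' (c / q'), div_mul_cancel₀ _ hq'pos.ne']
      rw [h9]; exact hSc
    have hp'Q' : S * (p' * Q') = α := by
      have h9 : p' * Q' = c := by
        rw [hp', div_mul_cancel₀ _ hQ'pos.ne']
      rw [h9]; exact hSc
    have hμc : μ = c/Λ := by rw [eq_div_iff hΛpos.ne']; exact hμΛ'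
    have hμP' : μ < P' := by
      rw [hμc, hP']
      exact div_lt_div_of_pos_left hcpos hq'pos (by rw [hq']; linarith)
    have hp'μ : p' < μ := by
      rw [hμc, hp']
      exact div_lt_div_of_pos_left hcpos hΛpos (by rw [hQ']; linarith)
    set η := min (min (μ - p') (P' - μ)) δ with hη
    have hηpos : 0 < η := lt_min (lt_min (by linarith) (by linarith)) hδpos
    have hηa : η ≤ μ - p' := le_trans (min_le_left _ _) (min_le_left _ _)
    have hηb : η ≤ P' - μ := le_trans (min_le_left _ _) (min_le_right _ _)
    have hηd : η ≤ δ := min_le_right _ _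
    clear_value η
    have hwin1 : ∀ᶠ t in atTop, ∀ r ∈ Finset.Icc (K+1) (K+k),
        (((2*(g:ℤ)) ∣ (r:ℤ)) ∨ ((2*(g:ℤ)) ∣ ((r:ℤ)+g))) →
        |x (ψ (φ t) - (r:ℤ)) - ω (-(r:ℤ))| < η := by
      rw [eventually_all_finset]
      intro r hr
      by_cases hcls : ((2*(g:ℤ)) ∣ (r:ℤ)) ∨ ((2*(g:ℤ)) ∣ ((r:ℤ)+g))
      · have hcls' : (2*(g:ℤ)) ∣ (-(r:ℤ)) ∨ (2*(g:ℤ)) ∣ (-(r:ℤ) - g) := by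
          rcases hcls with h | h
          · exact Or.inl (dvd_neg.mpr h)
          · right
            have h5 : -(r:ℤ) - g = -((r:ℤ)+g) := by ring
            rw [h5]; exact dvd_neg.mpr h
        obtain ⟨N, hN⟩ := Metric.tendsto_atTop.mp (hωconv (-(r:ℤ)) hcls') η hηpos
        filter_upwards [eventually_ge_atTop N] with t ht _
        have h6 := hN t ht
        rw [Real.dist_eq] at h6
        have h5 : ψ (φ t) + (-(r:ℤ)) = ψ (φ t) - (r:ℤ) := by ring
        rw [h5] at h6
        exact h6
      · filter_upwards with t ht
        exact absurd ht hcls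
    have hwin2 : ∀ᶠ t in atTop, (K:ℤ) + k + 1 ≤ ψ (φ t) :=
      (hψtend.comp hφ.tendsto_atTop).eventually (eventually_ge_atTop _)
    obtain ⟨t0, hwin1t, hwin2t⟩ := (hwin1.and hwin2).exists
    set n0 := ψ (φ t0) - (K:ℤ) with hn0def
    have hbase : ∀ s : ℤ, n0 - k ≤ s → s < n0 →
        ((2*(g:ℤ)) ∣ (s - a) → x s ∈ Set.Icc p' P') ∧
        ((2*(g:ℤ)) ∣ (s - a - g) → x s ∈ Set.Icc q' Q') := by
      intro s h1 h2
      set r : ℤ := ψ (φ t0) - s with hrdef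
      have hrange : (K:ℤ) + 1 ≤ r ∧ r ≤ (K:ℤ) + k := by omega
      have hrnn : 0 ≤ r := by omega
      have hrcast : ((r.toNat : ℕ) : ℤ) = r := Int.toNat_of_nonneg hrnn
      have hrmem : r.toNat ∈ Finset.Icc (K+1) (K+k) := by
        rw [Finset.mem_Icc]; omega
      have hs_eq : s = ψ (φ t0) - r := by omega
      constructor
      · intro hCA
        have hdr : (2*(g:ℤ)) ∣ r := by
          have h5 : r = 2*(g:ℤ)*(ψ0 (φ t0)) - (s - a) := by
            rw [hrdef]; simp only [hψ]; ring
          rw [h5]; exact dvd_sub (dvd_mul_right _ _) hCA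
        have hgr : g ∣ r.toNat := by
          have h6 : (g:ℤ) ∣ r := dvd_trans ⟨2, by ring⟩ hdr
          rw [← hrcast] at h6
          exact_mod_cast h6
        have hmem := hcov r.toNat (by omega) (by rw [hgF]; exact hgr)
        have hforce := ((FORCE r.toNat hmem).2 0).1 (dvd_zero _) hω0
        have hωr : ω (-(r:ℤ)) = μ := by
          have h6 := hforce.1 (by rw [hrcast]; exact hdr)
          rw [show (0:ℤ) - (r.toNat:ℤ) = -(r:ℤ) from by rw [hrcast]; ring] at h6
          exact h6
        have hnear := hwin1t r.toNat hrmem (Or.inl (by rw [hrcast]; exact hdr))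
        rw [hrcast, hωr, ← hs_eq] at hnear
        have h7 := abs_sub_lt_iff.mp hnear
        exact ⟨by linarith [h7.1, h7.2], by linarith [h7.1, h7.2]⟩
      · intro hCB
        have hdr : (2*(g:ℤ)) ∣ (r + g) := by
          have h5 : r + g = 2*(g:ℤ)*(ψ0 (φ t0)) - (s - a - g) := by
            rw [hrdef]; simp only [hψ]; ring
          rw [h5]; exact dvd_sub (dvd_mul_right _ _) hCB
        have hgr : g ∣ r.toNat := by
          have h6 : (g:ℤ) ∣ r := by
            have h8 : (g:ℤ) ∣ (r + g) := dvd_trans ⟨2, by ring⟩ hdr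
            have h9 : r = (r + g) - g := by ring
            rw [h9]; exact dvd_sub h8 dvd_rfl
          rw [← hrcast] at h6
          exact_mod_cast h6
        have hmem := hcov r.toNat (by omega) (by rw [hgF]; exact hgr)
        have hforce := ((FORCE r.toNat hmem).2 0).1 (dvd_zero _) hω0
        have hωr : ω (-(r:ℤ)) = Λ := by
          have h6 := hforce.2 (by rw [hrcast]; exact hdr)
          rw [show (0:ℤ) - (r.toNat:ℤ) = -(r:ℤ) from by rw [hrcast]; ring] at h6
          exact h6
        have hnear := hwin1t r.toNat hrmem (Or.inr (by rw [hrcast]; exact hdr))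
        rw [hrcast, hωr, ← hs_eq] at hnear
        have h7 := abs_sub_lt_iff.mp hnear
        exact ⟨by rw [hq']; linarith [h7.1, h7.2], by rw [hQ']; linarith [h7.1, h7.2]⟩
    have happ := inv_rect k α A β B hα hβ hB hAβ g hdivβ hdivB x hpos hrec S hSdef hSpos
      a p' P' q' Q' hp'pos hq'pos hq'P' hp'Q' n0 (by omega) hbase
    have hfinal : ∀ᶠ m : ℤ in atTop, v m ≤ P' := by
      filter_upwards [eventually_ge_atTop (max 0 (n0 - k - a))] with m hm
      have hm0' : 0 ≤ m := le_trans (le_max_left _ _) hm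
      have hm1 : n0 - k - a ≤ m := le_trans (le_max_right _ _) hm
      have h8 : n0 - (k:ℤ) ≤ 2*(g:ℤ)*m + a := by
        have h9 : 0 ≤ (2*(g:ℤ) - 1)*m := mul_nonneg (by linarith : (0:ℤ) ≤ 2*(g:ℤ) - 1) hm0'
        have h10 : (2*(g:ℤ) - 1)*m = 2*(g:ℤ)*m - m := by ring
        linarith
      exact ((happ _ h8).1 (hclsv m)).2
    have := limsup_le_of_le hvB2.isCoboundedUnder_le hfinal
    rw [← hL] at this
    exact this
  -- ## conclusion
  have hlimsupv : limsup v atTop = μ := by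
    refine le_antisymm hlimsup_le ?_
    rw [hμdef]
    exact liminf_le_limsup hvB1 hvB2
  have htendv : Tendsto v atTop (𝓝 μ) :=
    tendsto_of_liminf_eq_limsup hμdef.symm hlimsupv hvB1 hvB2
  have hfin : Tendsto (fun m : ℕ => x (2*(g:ℤ)*(m:ℤ) + a)) atTop (𝓝 μ) := by
    have h1 := htendv.comp (tendsto_natCast_atTop_atTop (R := ℤ))
    rw [hv] at h1
    exact h1
  exact ⟨μ, hfin⟩
end

section
/- Every positive solution of x_n = (Σ_{i=1}^k β_{2i} x_{n-2i} + x_{n-ℓ})/(A + x_{n-ℓ}) with 0 < Σβ_{2i} < A and A ≥ 1 + Σβ_{2i} converges to 0: the solution is bounded, its limsup S satisfies S ≤ max((Σβ_{2i}/A)S, 1), hence S ≤ 1, and then S² ≤ (Σβ_{2i} + 1 − A)S together with I² ≥ (Σβ_{2i} + 1 − A)I forces S = I = 0. -/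
open Filter Topology

set_option maxHeartbeats 1000000 in
/-- Every positive solution of `xₙ = (∑ β_{2i} x_{n-2i} + x_{n-ℓ})/(A + x_{n-ℓ})`
with `0 < ∑ β_{2i} < A` and `A ≥ 1 + ∑ β_{2i}` converges to `0`. -/
theorem converges_to_zero (k ℓ : ℕ) (hk : 1 ≤ k) (hℓodd : Odd ℓ)
    (hℓ1 : 1 ≤ ℓ) (hℓ2 : ℓ ≤ 2 * k) (A : ℝ) (β : ℕ → ℝ)
    (hβ : ∀ i, 0 ≤ β i)
    (hsumpos : 0 < ∑ i ∈ Finset.Icc 1 k, β i)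
    (hsumA : ∑ i ∈ Finset.Icc 1 k, β i < A)
    (hA1 : 1 + ∑ i ∈ Finset.Icc 1 k, β i ≤ A)
    (x : ℤ → ℝ) (hx0 : ∀ n : ℤ, n ≤ 0 → 0 < x n)
    (hrec : ∀ n : ℤ, 1 ≤ n → x n =
      ((∑ i ∈ Finset.Icc 1 k, β i * x (n - 2 * (i : ℤ))) + x (n - (ℓ : ℤ))) /
      (A + x (n - (ℓ : ℤ)))) :
    Tendsto (fun n : ℕ => x (n : ℤ)) atTop (𝓝 0) := by
  set B := ∑ i ∈ Finset.Icc 1 k, β i with hB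
  have hApos : 0 < A := lt_trans hsumpos hsumA
  have hBpos : 0 < B := hsumpos
  -- positivity of the whole solution
  have hpos : ∀ m : ℤ, 0 < x m := by
    have key : ∀ N : ℕ, ∀ m : ℤ, m ≤ (N : ℤ) → 0 < x m := by
      intro N
      induction N with
      | zero =>
        intro m hm; exact hx0 m (by exact_mod_cast hm)
      | succ N ih =>
        intro m hm
        rcases le_or_gt m (N : ℤ) with h | h
        · exact ih m h
        · have hm1 : (1 : ℤ) ≤ m := by push_cast at hm ⊢; omega
          rw [hrec m hm1]
          have ht : 0 < x (m - (ℓ : ℤ)) := by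
            apply ih; push_cast at hm ⊢; omega
          have hc : 0 ≤ ∑ i ∈ Finset.Icc 1 k, β i * x (m - 2 * (i : ℤ)) := by
            apply Finset.sum_nonneg
            intro i hi
            simp only [Finset.mem_Icc] at hi
            have hi1 : (1 : ℤ) ≤ (i : ℤ) := by exact_mod_cast hi.1
            have : 0 < x (m - 2 * (i : ℤ)) := by
              apply ih; push_cast at hm ⊢; omega
            exact mul_nonneg (hβ i) this.le
          exact div_pos (by linarith) (by linarith)
    intro m
    rcases le_or_gt m 0 with h | h
    · exact hx0 m h
    · exact key m.toNat m (by omega)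
  -- structural form of the recurrence with bounds
  have hform : ∀ m : ℤ, 1 ≤ m → ∀ M : ℝ,
      (∀ j : ℤ, m - 2 * (k : ℤ) ≤ j → j ≤ m - 1 → x j ≤ M) →
      ∃ c t : ℝ, x m = (c + t) / (A + t) ∧ 0 ≤ c ∧ c ≤ B * M ∧ 0 < t ∧ t ≤ M := by
    intro m hm M hwin
    refine ⟨∑ i ∈ Finset.Icc 1 k, β i * x (m - 2 * (i : ℤ)), x (m - (ℓ : ℤ)),
      hrec m hm, ?_, ?_, hpos _, hwin _ (by omega) (by omega)⟩
    · exact Finset.sum_nonneg fun i _ => mul_nonneg (hβ i) (hpos _).le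
    · have : ∀ i ∈ Finset.Icc 1 k, β i * x (m - 2 * (i : ℤ)) ≤ β i * M := by
        intro i hi
        simp only [Finset.mem_Icc] at hi
        have hi1 : (1 : ℤ) ≤ (i : ℤ) := by exact_mod_cast hi.1
        have hik : (i : ℤ) ≤ (k : ℤ) := by exact_mod_cast hi.2
        exact mul_le_mul_of_nonneg_left (hwin _ (by omega) (by omega)) (hβ i)
      calc ∑ i ∈ Finset.Icc 1 k, β i * x (m - 2 * (i : ℤ))
          ≤ ∑ i ∈ Finset.Icc 1 k, β i * M := Finset.sum_le_sum this
        _ = B * M := by rw [hB, Finset.sum_mul]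
  -- L1 : a window bound propagates forever
  have L1 : ∀ n : ℤ, 1 ≤ n → ∀ M : ℝ, 0 ≤ M →
      (∀ j : ℤ, n - 2 * (k : ℤ) ≤ j → j ≤ n - 1 → x j ≤ M) →
      ∀ m : ℤ, n - 2 * (k : ℤ) ≤ m → x m ≤ M := by
    intro n hn M hM hwin
    have key : ∀ N : ℕ, ∀ m : ℤ, n - 2 * (k : ℤ) ≤ m → m ≤ n - 1 + N → x m ≤ M := by
      intro N
      induction N with
      | zero => intro m h1 h2; exact hwin m h1 (by omega)
      | succ N ih =>
        intro m h1 h2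
        rcases le_or_gt m (n - 1 + N) with h | h
        · exact ih m h1 h
        · have hm1 : (1 : ℤ) ≤ m := by omega
          obtain ⟨c, t, hx, hc0, hcB, ht0, htM⟩ :=
            hform m hm1 M (fun j hj1 hj2 => ih j (by omega) (by omega))
          rw [hx, div_le_iff₀ (by linarith)]
          nlinarith [mul_le_mul_of_nonneg_left hA1 hM, mul_nonneg hM ht0.le]
    intro m hm
    exact key (m - (n - 1)).toNat m hm (by omega)
  -- L2 : a global bound improves to max (B*M/A) 1
  have L2 : ∀ n : ℤ, 1 ≤ n → ∀ M : ℝ, 0 ≤ M →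
      (∀ m : ℤ, n - 2 * (k : ℤ) ≤ m → x m ≤ M) →
      ∀ m : ℤ, n ≤ m → x m ≤ max (B * M / A) 1 := by
    intro n hn M hM hall m hm
    obtain ⟨c, t, hx, hc0, hcB, ht0, htM⟩ :=
      hform m (by omega) M (fun j hj1 _ => hall j (by omega))
    rw [hx, div_le_iff₀ (by linarith)]
    have hR1 : (1 : ℝ) ≤ max (B * M / A) 1 := le_max_right _ _
    have hRB : B * M / A ≤ max (B * M / A) 1 := le_max_left _ _
    have hBMRA : B * M ≤ max (B * M / A) 1 * A := by
      rw [div_le_iff₀ hApos] at hRB; linarith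
    nlinarith [mul_le_mul_of_nonneg_left hR1 ht0.le]
  -- L3 : contraction step once B*M ≤ A
  have L3 : ∀ n : ℤ, 1 ≤ n → ∀ M : ℝ, 0 ≤ M → B * M ≤ A →
      (∀ m : ℤ, n - 2 * (k : ℤ) ≤ m → x m ≤ M) →
      ∀ m : ℤ, n ≤ m → x m ≤ (B + 1) * M / (A + M) := by
    intro n hn M hM hBMA hall m hm
    obtain ⟨c, t, hx, hc0, hcB, ht0, htM⟩ :=
      hform m (by omega) M (fun j hj1 _ => hall j (by omega))
    rw [hx, div_le_div_iff₀ (by linarith) (by linarith)]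
    nlinarith [mul_nonneg (sub_nonneg.2 htM) (sub_nonneg.2 hBMA),
      mul_nonneg (sub_nonneg.2 hcB) (by linarith : (0 : ℝ) ≤ A + M)]
  -- initial window maximum
  have hne : (Finset.Icc (1 - 2 * (k : ℤ)) 0).Nonempty := by
    refine ⟨0, ?_⟩; simp only [Finset.mem_Icc]; omega
  set M₁ := (Finset.Icc (1 - 2 * (k : ℤ)) 0).sup' hne x with hM₁def
  have hM₁0 : 0 ≤ M₁ := le_trans (hpos 0).le
    (Finset.le_sup' x (by simp only [Finset.mem_Icc]; omega))
  set r := B / A with hrdef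
  have hr0 : 0 ≤ r := le_of_lt (div_pos hBpos hApos)
  have hr1 : r < 1 := (div_lt_one hApos).2 hsumA
  -- stage 2 : iterate L2
  have stage2 : ∀ j : ℕ, ∀ m : ℤ,
      1 + 2 * (k : ℤ) * (j : ℤ) - 2 * (k : ℤ) ≤ m → x m ≤ max (r ^ j * M₁) 1 := by
    intro j
    induction j with
    | zero =>
      intro m hm
      have h := L1 1 le_rfl (max M₁ 1) (by positivity)
        (fun j hj1 hj2 => le_trans (Finset.le_sup' x
          (by simp only [Finset.mem_Icc]; omega)) (le_max_left _ _)) m (by push_cast at hm; linarith)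
      simpa using h
    | succ j ih =>
      intro m hm
      have hall : ∀ m' : ℤ, (1 + 2 * (k : ℤ) * (j : ℤ)) - 2 * (k : ℤ) ≤ m' →
          x m' ≤ max (r ^ j * M₁) 1 := fun m' hm' => ih m' (by linarith)
      have h := L2 (1 + 2 * (k : ℤ) * (j : ℤ)) (le_add_of_nonneg_right (by positivity)) _
        (le_trans zero_le_one (le_max_right _ _)) hall m (by push_cast at hm; linarith)
      refine le_trans h (max_le ?_ (le_max_right _ _))
      have : B * max (r ^ j * M₁) 1 / A = r * max (r ^ j * M₁) 1 := by
        rw [hrdef]; ring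
      rw [this]
      rcases le_total (r ^ j * M₁) 1 with hc | hc
      · rw [max_eq_right hc]
        exact le_trans (by linarith) (le_max_right _ _)
      · rw [max_eq_left hc]
        refine le_trans (le_of_eq ?_) (le_max_left _ _)
        ring
  -- find j₀ with r^j₀ * M₁ ≤ 1
  obtain ⟨j₀, hj₀⟩ : ∃ j₀ : ℕ, r ^ j₀ * M₁ ≤ 1 := by
    obtain ⟨n, hn⟩ := exists_pow_lt_of_lt_one (show (0:ℝ) < 1 / (M₁ + 1) by positivity) hr1
    refine ⟨n, ?_⟩
    have h1 : r ^ n * M₁ ≤ (1 / (M₁ + 1)) * M₁ :=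
      mul_le_mul_of_nonneg_right hn.le hM₁0
    have h2 : (1 / (M₁ + 1)) * M₁ ≤ 1 := by
      rw [div_mul_eq_mul_div, div_le_one (by linarith)]; linarith
    linarith
  set n₀ : ℤ := 1 + 2 * (k : ℤ) * (j₀ : ℤ) with hn₀def
  have hn₀1 : 1 ≤ n₀ := le_add_of_nonneg_right (by positivity)
  have hbound1 : ∀ m : ℤ, n₀ - 2 * (k : ℤ) ≤ m → x m ≤ 1 := by
    intro m hm
    have := stage2 j₀ m (by linarith)
    rwa [max_eq_right hj₀] at this
  -- stage 3 : the contraction sequence v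
  obtain ⟨v, hv0, hvs⟩ : ∃ v : ℕ → ℝ,
      v 0 = 1 ∧ ∀ j, v (j + 1) = (B + 1) * v j / (A + v j) :=
    ⟨fun j => Nat.rec 1 (fun _ w => (B + 1) * w / (A + w)) j, rfl, fun _ => rfl⟩
  have hvnn : ∀ j, 0 ≤ v j ∧ v j ≤ 1 := by
    intro j
    induction j with
    | zero => rw [hv0]; exact ⟨zero_le_one, le_refl 1⟩
    | succ j ih =>
      obtain ⟨h0, h1⟩ := ih
      rw [hvs]
      constructor
      · apply div_nonneg (by nlinarith) (by linarith)
      · rw [div_le_one (by linarith)]; nlinarith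
  have hvanti : Antitone v := by
    apply antitone_nat_of_succ_le
    intro j
    obtain ⟨h0, h1⟩ := hvnn j
    rw [hvs, div_le_iff₀ (by linarith)]
    nlinarith
  have hvbdd : BddBelow (Set.range v) := ⟨0, by rintro y ⟨j, rfl⟩; exact (hvnn j).1⟩
  have hvtend : Tendsto v atTop (𝓝 (⨅ j, v j)) := tendsto_atTop_ciInf hvanti hvbdd
  set L := ⨅ j, v j with hLdef
  have hL0 : 0 ≤ L := le_ciInf fun j => (hvnn j).1
  have hLeq : L = (B + 1) * L / (A + L) := by
    have h1 : Tendsto (fun j => v (j + 1)) atTop (𝓝 L) :=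
      hvtend.comp (tendsto_add_atTop_nat 1)
    have h2 : Tendsto (fun j => (B + 1) * v j / (A + v j)) atTop
        (𝓝 ((B + 1) * L / (A + L))) := by
      apply Tendsto.div (tendsto_const_nhds.mul hvtend) (tendsto_const_nhds.add hvtend)
      intro h; linarith [hL0, hApos, h]
    have heq : (fun j => v (j + 1)) = fun j => (B + 1) * v j / (A + v j) := by
      funext j; exact hvs j
    rw [heq] at h1
    exact tendsto_nhds_unique h1 h2
  have hL : L = 0 := by
    have hden : 0 < A + L := by linarith
    have : L * (A + L) = (B + 1) * L := by
      field_simp at hLeq; linarith [hLeq]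
    nlinarith
  have hvzero : Tendsto v atTop (𝓝 0) := hL ▸ hvtend
  -- stage 3 bound
  have stage3 : ∀ j : ℕ, ∀ m : ℤ,
      n₀ - 2 * (k : ℤ) + 2 * (k : ℤ) * (j : ℤ) ≤ m → x m ≤ v j := by
    intro j
    induction j with
    | zero =>
      intro m hm
      rw [hv0]
      exact hbound1 m (by push_cast at hm; linarith)
    | succ j ih =>
      intro m hm
      obtain ⟨h0, h1⟩ := hvnn j
      have hall : ∀ m' : ℤ, (n₀ + 2 * (k : ℤ) * (j : ℤ)) - 2 * (k : ℤ) ≤ m' →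
          x m' ≤ v j := fun m' hm' => ih m' (by linarith)
      have h := L3 (n₀ + 2 * (k : ℤ) * (j : ℤ))
        (le_trans hn₀1 (le_add_of_nonneg_right (by positivity))) (v j) h0
        (by nlinarith) hall m (by push_cast at hm; linarith)
      rwa [hvs j]
  -- conclusion
  rw [Metric.tendsto_atTop]
  intro ε hε
  obtain ⟨j, hj⟩ := (hvzero.eventually (gt_mem_nhds hε)).exists
  refine ⟨(n₀ - 2 * (k : ℤ) + 2 * (k : ℤ) * (j : ℤ)).toNat, fun n hn => ?_⟩
  have h1 : n₀ - 2 * (k : ℤ) + 2 * (k : ℤ) * (j : ℤ) ≤ (n : ℤ) :=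
    le_trans (Int.self_le_toNat _) (by exact_mod_cast hn)
  have hxn : x (n : ℤ) ≤ v j := stage3 j (n : ℤ) h1
  rw [Real.dist_eq, sub_zero, abs_of_pos (hpos _)]
  linarith
end

section
/- Every positive solution of x_n = (Σ_{i=1}^k β_{2i} x_{n-2i} + x_{n-ℓ})/(A + x_{n-ℓ}) with 0 < Σβ_{2i} < A < 1 + Σβ_{2i} converges to the positive equilibrium Σβ_{2i} + 1 − A. -/
open Filter Topology

/-- Every positive solution of `xₙ = (∑ β_{2i} x_{n-2i} + x_{n-ℓ})/(A + x_{n-ℓ})`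
with `0 < ∑ β_{2i} < A < 1 + ∑ β_{2i}` converges to the positive equilibrium
`∑ β_{2i} + 1 - A`. -/
theorem converges_to_positive_equilibrium (k ℓ : ℕ) (hk : 1 ≤ k) (hℓodd : Odd ℓ)
    (hℓ1 : 1 ≤ ℓ) (hℓ2 : ℓ ≤ 2 * k) (A : ℝ) (β : ℕ → ℝ)
    (hβ : ∀ i, 0 ≤ β i)
    (hsumpos : 0 < ∑ i ∈ Finset.Icc 1 k, β i)
    (hsumA : ∑ i ∈ Finset.Icc 1 k, β i < A)
    (hA1 : A < 1 + ∑ i ∈ Finset.Icc 1 k, β i)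
    (x : ℤ → ℝ) (hx0 : ∀ n : ℤ, n ≤ 0 → 0 < x n)
    (hrec : ∀ n : ℤ, 1 ≤ n → x n =
      ((∑ i ∈ Finset.Icc 1 k, β i * x (n - 2 * (i : ℤ))) + x (n - (ℓ : ℤ))) /
      (A + x (n - (ℓ : ℤ)))) :
    Tendsto (fun n : ℕ => x (n : ℤ)) atTop
      (𝓝 ((∑ i ∈ Finset.Icc 1 k, β i) + 1 - A)) := by
  set S := ∑ i ∈ Finset.Icc 1 k, β i with hS
  set xb : ℝ := S + 1 - A with hxb
  set d : ℕ := 2 * k with hdk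
  have hd : 0 < d := by omega
  have hApos : 0 < A := lt_trans hsumpos hsumA
  have hxbpos : 0 < xb := by rw [hxb]; linarith
  have hxblt1 : xb < 1 := by rw [hxb]; linarith
  have hne : (Finset.Icc (1 - (d : ℤ)) 0).Nonempty := by
    refine ⟨0, Finset.mem_Icc.mpr ⟨by omega, le_refl 0⟩⟩
  set m0 : ℝ := min xb ((Finset.Icc (1 - (d : ℤ)) 0).inf' hne x) with hm0
  have hm0pos : 0 < m0 := by
    refine lt_min hxbpos ?_
    rw [Finset.lt_inf'_iff]
    intro b hb
    exact hx0 b (Finset.mem_Icc.mp hb).2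
  have hm0xb : m0 ≤ xb := min_le_left _ _
  have hm0init : ∀ n : ℤ, 1 - (d : ℤ) ≤ n → n ≤ 0 → m0 ≤ x n := by
    intro n h1 h2
    exact le_trans (min_le_right _ _) (Finset.inf'_le x (Finset.mem_Icc.mpr ⟨h1, h2⟩))
  -- uniform positive lower bound
  have hlow : ∀ m : ℕ, m0 ≤ x ((m : ℤ) + 1 - d) := by
    intro m
    induction m using Nat.strong_induction_on with
    | _ m ih =>
      by_cases hm : m < d
      · exact hm0init _ (by push_cast; omega) (by push_cast; omega)
      · push_neg at hm
        have hn1 : (1 : ℤ) ≤ (m : ℤ) + 1 - d := by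
          have : (d : ℤ) ≤ (m : ℤ) := by exact_mod_cast hm
          omega
        rw [hrec _ hn1]
        have hvidx : (m : ℤ) + 1 - d - (ℓ : ℤ) = ((m - ℓ : ℕ) : ℤ) + 1 - d := by
          have : ℓ ≤ m := le_trans hℓ2 hm
          push_cast [this]; ring
        have hv : m0 ≤ x ((m : ℤ) + 1 - d - ℓ) := by
          rw [hvidx]; exact ih (m - ℓ) (by omega)
        have hu : S * m0 ≤ ∑ i ∈ Finset.Icc 1 k, β i * x ((m : ℤ) + 1 - d - 2 * (i : ℤ)) := by
          rw [hS, Finset.sum_mul]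
          refine Finset.sum_le_sum ?_
          intro i hi
          rw [Finset.mem_Icc] at hi
          have h2i : 2 * i ≤ m := by omega
          have hidx : (m : ℤ) + 1 - d - 2 * (i : ℤ) = ((m - 2 * i : ℕ) : ℤ) + 1 - d := by
            push_cast [h2i]; ring
          rw [hidx]
          exact mul_le_mul_of_nonneg_left (ih _ (by omega)) (hβ i)
        have hden : 0 < A + x ((m : ℤ) + 1 - d - ℓ) := by linarith
        rw [le_div_iff₀ hden]
        nlinarith [mul_nonneg (sub_nonneg.mpr hv) (sub_nonneg.mpr (le_of_lt (lt_of_le_of_lt hm0xb hxblt1)))]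
  have hlow' : ∀ n : ℤ, 1 - (d : ℤ) ≤ n → m0 ≤ x n := by
    intro n hn
    obtain ⟨m, hm⟩ : ∃ m : ℕ, (m : ℤ) = n + d - 1 := ⟨(n + d - 1).toNat, Int.toNat_of_nonneg (by omega)⟩
    have := hlow m
    have heq : (m : ℤ) + 1 - d = n := by omega
    rwa [heq] at this
  -- error representation
  have key : ∀ n : ℤ, 1 ≤ n → x n - xb =
      ((∑ i ∈ Finset.Icc 1 k, β i * (x (n - 2 * (i : ℤ)) - xb)) +
        (A - S) * (x (n - (ℓ : ℤ)) - xb)) / (A + x (n - (ℓ : ℤ))) := by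
    intro n hn
    have hv : m0 ≤ x (n - (ℓ : ℤ)) := hlow' _ (by omega)
    have hden : (0 : ℝ) < A + x (n - (ℓ : ℤ)) := by linarith
    have hsum : ∑ i ∈ Finset.Icc 1 k, β i * (x (n - 2 * (i : ℤ)) - xb) =
        (∑ i ∈ Finset.Icc 1 k, β i * x (n - 2 * (i : ℤ))) - S * xb := by
      rw [hS, Finset.sum_mul, ← Finset.sum_sub_distrib]
      exact Finset.sum_congr rfl fun i _ => by ring
    rw [hsum, hrec n hn, hxb]
    field_simp
    ring
  have hρnum : (0 : ℝ) < A / (A + m0) := by positivity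
  have hρlt1 : A / (A + m0) < 1 := by
    rw [div_lt_one (by linarith)]; linarith
  set ρ : ℝ := A / (A + m0) with hρ
  set E : ℝ := (Finset.Icc (1 - (d : ℤ)) 0).sup' hne (fun n => |x n - xb|) with hE
  have hEb : ∀ n : ℤ, 1 - (d : ℤ) ≤ n → n ≤ 0 → |x n - xb| ≤ E := by
    intro n h1 h2
    exact Finset.le_sup' (fun n => |x n - xb|) (Finset.mem_Icc.mpr ⟨h1, h2⟩)
  have hEnn : 0 ≤ E := le_trans (abs_nonneg _) (hEb 0 (by omega) le_rfl)
  -- main geometric bound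
  have main : ∀ m : ℕ, |x ((m : ℤ) + 1 - d) - xb| ≤ ρ ^ (m / d) * E := by
    intro m
    induction m using Nat.strong_induction_on with
    | _ m ih =>
      by_cases hm : m < d
      · rw [Nat.div_eq_of_lt hm, pow_zero, one_mul]
        exact hEb _ (by push_cast; omega) (by push_cast; omega)
      · push_neg at hm
        have hn1 : (1 : ℤ) ≤ (m : ℤ) + 1 - d := by
          have : (d : ℤ) ≤ (m : ℤ) := by exact_mod_cast hm
          omega
        set n : ℤ := (m : ℤ) + 1 - d with hn
        set B : ℝ := ρ ^ ((m - d) / d) * E with hB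
        have hBnn : 0 ≤ B := by positivity
        have hprev : ∀ j : ℕ, 1 ≤ j → j ≤ d → |x (n - (j : ℤ)) - xb| ≤ B := by
          intro j hj1 hjd
          have hjm : j ≤ m := le_trans hjd hm
          have hidx : n - (j : ℤ) = ((m - j : ℕ) : ℤ) + 1 - d := by
            rw [hn]; push_cast [hjm]; ring
          rw [hidx]
          refine le_trans (ih (m - j) (by omega)) ?_
          refine mul_le_mul_of_nonneg_right ?_ hEnn
          exact pow_le_pow_of_le_one (le_of_lt hρnum) (le_of_lt hρlt1)
            (Nat.div_le_div_right (by omega))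
        rw [key n hn1]
        have hv : m0 ≤ x (n - (ℓ : ℤ)) := hlow' _ (by omega)
        have hden : (0 : ℝ) < A + x (n - (ℓ : ℤ)) := by linarith
        rw [abs_div, abs_of_pos hden]
        have hnum : |(∑ i ∈ Finset.Icc 1 k, β i * (x (n - 2 * (i : ℤ)) - xb)) +
            (A - S) * (x (n - (ℓ : ℤ)) - xb)| ≤ A * B := by
          have h1 : |∑ i ∈ Finset.Icc 1 k, β i * (x (n - 2 * (i : ℤ)) - xb)| ≤ S * B := by
            refine le_trans (Finset.abs_sum_le_sum_abs _ _) ?_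
            rw [hS, Finset.sum_mul]
            refine Finset.sum_le_sum ?_
            intro i hi
            rw [Finset.mem_Icc] at hi
            have : n - 2 * (i : ℤ) = n - ((2 * i : ℕ) : ℤ) := by push_cast; ring
            rw [abs_mul, abs_of_nonneg (hβ i), this]
            exact mul_le_mul_of_nonneg_left (hprev (2 * i) (by omega) (by omega)) (hβ i)
          have h2 : |(A - S) * (x (n - (ℓ : ℤ)) - xb)| ≤ (A - S) * B := by
            rw [abs_mul, abs_of_nonneg (by linarith : (0:ℝ) ≤ A - S)]
            exact mul_le_mul_of_nonneg_left (hprev ℓ hℓ1 hℓ2) (by linarith)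
          calc |(∑ i ∈ Finset.Icc 1 k, β i * (x (n - 2 * (i : ℤ)) - xb)) +
              (A - S) * (x (n - (ℓ : ℤ)) - xb)|
              ≤ |∑ i ∈ Finset.Icc 1 k, β i * (x (n - 2 * (i : ℤ)) - xb)| +
                |(A - S) * (x (n - (ℓ : ℤ)) - xb)| := abs_add_le _ _
            _ ≤ S * B + (A - S) * B := add_le_add h1 h2
            _ = A * B := by ring
        have hdiv : |(∑ i ∈ Finset.Icc 1 k, β i * (x (n - 2 * (i : ℤ)) - xb)) +
            (A - S) * (x (n - (ℓ : ℤ)) - xb)| / (A + x (n - (ℓ : ℤ))) ≤ (A * B) / (A + m0) := by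
          exact div_le_div₀ (by positivity) hnum (by linarith) (by linarith)
        refine le_trans hdiv ?_
        have hdivstep : m / d = (m - d) / d + 1 := Nat.div_eq_sub_div hd hm
        have hAm0 : A + m0 ≠ 0 := by positivity
        apply le_of_eq
        rw [hdivstep, pow_succ, hB, hρ]
        field_simp
  -- conclude
  have hbound : ∀ n : ℕ, |x (n : ℤ) - xb| ≤ ρ ^ ((n + d - 1) / d) * E := by
    intro n
    have := main (n + d - 1)
    have heq : ((n + d - 1 : ℕ) : ℤ) + 1 - d = (n : ℤ) := by omega
    rwa [heq] at this
  have htend0 : Tendsto (fun n : ℕ => ρ ^ ((n + d - 1) / d) * E) atTop (𝓝 0) := by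
    have h1 : Tendsto (fun j : ℕ => ρ ^ j * E) atTop (𝓝 (0 * E)) :=
      (tendsto_pow_atTop_nhds_zero_of_lt_one (le_of_lt hρnum) hρlt1).mul_const E
    rw [zero_mul] at h1
    refine h1.comp ?_
    refine Filter.tendsto_atTop_atTop.mpr fun b => ⟨b * d, fun n hn => ?_⟩
    rw [Nat.le_div_iff_mul_le hd]
    have : n ≤ n + d - 1 := by omega
    omega
  have hdiff : Tendsto (fun n : ℕ => x (n : ℤ) - xb) atTop (𝓝 0) := by
    refine squeeze_zero_norm (fun n => ?_) htend0
    simpa [Real.norm_eq_abs] using hbound n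
  have h2 := hdiff.add_const xb
  have h3 : (fun n : ℕ => x (n : ℤ) - xb + xb) = fun n : ℕ => x (n : ℤ) := by
    funext n; ring
  rw [h3, zero_add] at h2
  exact h2
end

section
/- Every positive solution of x_n = (Σ_{i=1}^k β_{2i} x_{n-2i} + x_{n-ℓ})/(A + x_{n-ℓ}) with 0 < A = Σ_{i=1}^k β_{2i} converges to 1: the solution has a positive lower bound L (the minimum of 1 and the initial conditions), and |x_n − 1| ≤ (Σβ_{2i} / (Σβ_{2i} + L)) · max_{i=1..k} |x_{n-2i} − 1|, which forces x_n → 1. -/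
open Filter Topology

/-- Every positive solution of `xₙ = (∑ β_{2i} x_{n-2i} + x_{n-ℓ})/(A + x_{n-ℓ})`
with `0 < A = ∑ β_{2i}` converges to `1`. -/
theorem converges_to_one (k ℓ : ℕ) (hk : 1 ≤ k) (hℓodd : Odd ℓ)
    (hℓ1 : 1 ≤ ℓ) (hℓ2 : ℓ ≤ 2 * k) (A : ℝ) (β : ℕ → ℝ)
    (hβ : ∀ i, 0 ≤ β i) (hA : 0 < A)
    (hsumA : A = ∑ i ∈ Finset.Icc 1 k, β i)
    (x : ℤ → ℝ) (hx0 : ∀ n : ℤ, n ≤ 0 → 0 < x n)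
    (hrec : ∀ n : ℤ, 1 ≤ n → x n =
      ((∑ i ∈ Finset.Icc 1 k, β i * x (n - 2 * (i : ℤ))) + x (n - (ℓ : ℤ))) /
      (A + x (n - (ℓ : ℤ)))) :
    Tendsto (fun n : ℕ => x (n : ℤ)) atTop (𝓝 1) := by
  -- Step 1: positivity of all x n
  have hpos : ∀ N : ℕ, ∀ n : ℤ, n ≤ N → 0 < x n := by
    intro N
    induction N with
    | zero => intro n hn; exact hx0 n (by exact_mod_cast hn)
    | succ N ih =>
      intro n hn
      rcases le_or_gt n 0 with h | h
      · exact hx0 n h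
      · rw [hrec n h]
        have hy : 0 < x (n - (ℓ : ℤ)) := ih _ (by omega)
        have hS : 0 ≤ ∑ i ∈ Finset.Icc 1 k, β i * x (n - 2 * (i : ℤ)) := by
          apply Finset.sum_nonneg
          intro i hi
          have hi' := Finset.mem_Icc.mp hi
          have : 0 < x (n - 2 * (i : ℤ)) := ih _ (by omega)
          exact mul_nonneg (hβ i) this.le
        positivity
  have hxpos : ∀ n : ℤ, 0 < x n := fun n => hpos n.toNat n (Int.self_le_toNat n)
  -- Step 2: lower bound L
  have hne : (Finset.range (2 * k)).Nonempty := Finset.nonempty_range_iff.mpr (by omega)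
  set L : ℝ := min 1 ((Finset.range (2 * k)).inf' hne (fun j : ℕ => x (-(j : ℤ)))) with hL
  have hLpos : 0 < L := by
    apply lt_min one_pos
    rw [Finset.lt_inf'_iff]
    intro j _
    exact hxpos _
  have hL1 : L ≤ 1 := min_le_left _ _
  have hLinit : ∀ n : ℤ, 1 - 2 * (k : ℤ) ≤ n → n ≤ 0 → L ≤ x n := by
    intro n h1 h2
    refine (min_le_right _ _).trans ?_
    have hj : (-n).toNat ∈ Finset.range (2 * k) := by
      rw [Finset.mem_range]; omega
    have h := Finset.inf'_le (fun j : ℕ => x (-(j : ℤ))) hj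
    have hEq : (-(((-n).toNat : ℤ))) = n := by omega
    rwa [hEq] at h
  have hLB : ∀ N : ℕ, ∀ n : ℤ, 1 - 2 * (k : ℤ) ≤ n → n ≤ N → L ≤ x n := by
    intro N
    induction N with
    | zero => intro n h1 h2; exact hLinit n h1 (by exact_mod_cast h2)
    | succ N ih =>
      intro n h1 h2
      rcases le_or_gt n 0 with h | h
      · exact hLinit n h1 h
      · rw [hrec n h]
        have hy : 0 < x (n - (ℓ : ℤ)) := hxpos _
        have hSL : A * L ≤ ∑ i ∈ Finset.Icc 1 k, β i * x (n - 2 * (i : ℤ)) := by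
          rw [hsumA, Finset.sum_mul]
          apply Finset.sum_le_sum
          intro i hi
          have hi' := Finset.mem_Icc.mp hi
          have hx' : L ≤ x (n - 2 * (i : ℤ)) := ih _ (by omega) (by omega)
          exact mul_le_mul_of_nonneg_left hx' (hβ i)
        have hden : 0 < A + x (n - (ℓ : ℤ)) := by linarith
        rw [le_div_iff₀ hden]
        nlinarith [mul_nonneg (sub_nonneg.mpr hL1) hy.le]
  -- Step 3: contraction constant and sup of initial deviations
  set B : ℝ := (Finset.range (2 * k)).sup' hne (fun j : ℕ => |x (-(j : ℤ)) - 1|) with hB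
  have hBnn : 0 ≤ B := by
    have h0 : 0 ∈ Finset.range (2 * k) := Finset.mem_range.mpr (by omega)
    exact le_trans (abs_nonneg _) (Finset.le_sup' (fun j : ℕ => |x (-(j : ℤ)) - 1|) h0)
  have hBinit : ∀ n : ℤ, 1 - 2 * (k : ℤ) ≤ n → n ≤ 0 → |x n - 1| ≤ B := by
    intro n h1 h2
    have hj : (-n).toNat ∈ Finset.range (2 * k) := by
      rw [Finset.mem_range]; omega
    have h := Finset.le_sup' (fun j : ℕ => |x (-(j : ℤ)) - 1|) hj
    have hEq : (-(((-n).toNat : ℤ))) = n := by omega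
    rwa [hEq] at h
  set r : ℝ := A / (A + L) with hr
  have hALpos : 0 < A + L := by linarith
  have hr0 : 0 ≤ r := by positivity
  have hr1 : r < 1 := (div_lt_one hALpos).mpr (by linarith)
  -- contraction estimate
  have hcontr : ∀ n : ℤ, 1 ≤ n → ∀ C : ℝ, 0 ≤ C →
      (∀ i ∈ Finset.Icc 1 k, |x (n - 2 * (i : ℤ)) - 1| ≤ C) → |x n - 1| ≤ r * C := by
    intro n hn C hC hIC
    have hy : 0 < x (n - (ℓ : ℤ)) := hxpos _
    have hyL : L ≤ x (n - (ℓ : ℤ)) :=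
      hLB (n - (ℓ : ℤ)).toNat _ (by omega) (Int.self_le_toNat _)
    have hden : 0 < A + x (n - (ℓ : ℤ)) := by linarith
    have heq : x n - 1 =
        (∑ i ∈ Finset.Icc 1 k, β i * (x (n - 2 * (i : ℤ)) - 1)) / (A + x (n - (ℓ : ℤ))) := by
      rw [hrec n hn, div_sub_one hden.ne']
      congr 1
      calc (∑ i ∈ Finset.Icc 1 k, β i * x (n - 2 * (i : ℤ))) + x (n - (ℓ : ℤ))
            - (A + x (n - (ℓ : ℤ)))
          = (∑ i ∈ Finset.Icc 1 k, β i * x (n - 2 * (i : ℤ))) - A := by ring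
        _ = (∑ i ∈ Finset.Icc 1 k, β i * x (n - 2 * (i : ℤ)))
            - ∑ i ∈ Finset.Icc 1 k, β i := by rw [← hsumA]
        _ = ∑ i ∈ Finset.Icc 1 k, (β i * x (n - 2 * (i : ℤ)) - β i) :=
            (Finset.sum_sub_distrib _ _).symm
        _ = ∑ i ∈ Finset.Icc 1 k, β i * (x (n - 2 * (i : ℤ)) - 1) := by
            apply Finset.sum_congr rfl; intro i _; ring
    rw [heq, abs_div, abs_of_pos hden]
    have h1 : |∑ i ∈ Finset.Icc 1 k, β i * (x (n - 2 * (i : ℤ)) - 1)| ≤ A * C := by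
      calc |∑ i ∈ Finset.Icc 1 k, β i * (x (n - 2 * (i : ℤ)) - 1)|
          ≤ ∑ i ∈ Finset.Icc 1 k, |β i * (x (n - 2 * (i : ℤ)) - 1)| :=
            Finset.abs_sum_le_sum_abs _ _
        _ ≤ ∑ i ∈ Finset.Icc 1 k, β i * C := by
            apply Finset.sum_le_sum
            intro i hi
            rw [abs_mul, abs_of_nonneg (hβ i)]
            exact mul_le_mul_of_nonneg_left (hIC i hi) (hβ i)
        _ = A * C := by rw [hsumA, Finset.sum_mul]
    calc |∑ i ∈ Finset.Icc 1 k, β i * (x (n - 2 * (i : ℤ)) - 1)| / (A + x (n - (ℓ : ℤ)))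
        ≤ (A * C) / (A + L) := by
          apply div_le_div₀ (by positivity) h1 hALpos (by linarith)
      _ = r * C := by rw [hr, div_mul_eq_mul_div]
  -- Step 4: all deviations bounded by B
  have hC0 : ∀ N : ℕ, ∀ n : ℤ, 1 - 2 * (k : ℤ) ≤ n → n ≤ N → |x n - 1| ≤ B := by
    intro N
    induction N with
    | zero => intro n h1 h2; exact hBinit n h1 (by exact_mod_cast h2)
    | succ N ih =>
      intro n h1 h2
      rcases le_or_gt n 0 with h | h
      · exact hBinit n h1 h
      · have hc := hcontr n h B hBnn (fun i hi => by
          have hi' := Finset.mem_Icc.mp hi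
          exact ih _ (by omega) (by omega))
        calc |x n - 1| ≤ r * B := hc
          _ ≤ 1 * B := mul_le_mul_of_nonneg_right hr1.le hBnn
          _ = B := one_mul B
  -- Step 5: geometric decay
  have hCm : ∀ m : ℕ, ∀ n : ℤ, 1 - 2 * (k : ℤ) + 2 * k * m ≤ n → |x n - 1| ≤ r ^ m * B := by
    intro m
    induction m with
    | zero =>
      intro n h1
      simpa using hC0 n.toNat n (by push_cast at h1; linarith) (Int.self_le_toNat n)
    | succ m ih =>
      intro n h1
      push_cast at h1
      have hkm : (0 : ℤ) ≤ 2 * (k : ℤ) * (m : ℤ) := by positivity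
      have h1' : 1 + 2 * (k : ℤ) * (m : ℤ) ≤ n := by linarith
      have hn1 : (1 : ℤ) ≤ n := by linarith
      have hc := hcontr n hn1 (r ^ m * B) (by positivity) (fun i hi => by
        have hi' := Finset.mem_Icc.mp hi
        have hik : (i : ℤ) ≤ (k : ℤ) := by exact_mod_cast hi'.2
        refine ih _ ?_
        push_cast
        linarith)
      calc |x n - 1| ≤ r * (r ^ m * B) := hc
        _ = r ^ (m + 1) * B := by ring
  -- Step 6: conclusion
  rw [Metric.tendsto_atTop]
  intro ε hε
  have htend : Tendsto (fun m : ℕ => r ^ m * B) atTop (𝓝 0) := by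
    have h := tendsto_pow_atTop_nhds_zero_of_lt_one hr0 hr1
    simpa using h.mul_const B
  obtain ⟨m, hm⟩ := (htend.eventually (gt_mem_nhds hε)).exists
  refine ⟨2 * k * m + 1, fun n hn => ?_⟩
  rw [Real.dist_eq]
  have hn' : ((2 * k * m + 1 : ℕ) : ℤ) ≤ (n : ℤ) := by exact_mod_cast hn
  push_cast at hn'
  have hk0 : (0 : ℤ) ≤ (k : ℤ) := by positivity
  have hb := hCm m n (by push_cast; linarith)
  exact lt_of_le_of_lt hb hm
end
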